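/- arXiv:1502.07934 — 8 statements merged into one kernel-verified Lean document; each statement's English description precedes it below -/
import Mathlib

section
/- Let a ≥ 1 be an integer. For every vector c = (c_0, …, c_{a−1}) ∈ ℤ^a with c_0 + ⋯ + c_{a−1} = 0 there exists a unique partition core_a(c) whose beta-set equals B_a(c) = { −a(c_i + n) − i − 1 : 0 ≤ i ≤ a−1, n ∈ ℕ }; this partition is an a-core, and the map c ↦ core_a(c) is a bijection from { c ∈ ℤ^a : c_0 + ⋯ + c_{a−1} = 0 } onto the set of all a-core partitions. -/
/-- A partition, encoded by its weakly decreasing, eventually zero sequence of parts;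
`parts j` is the `(j+1)`-st part `λ_{j+1}`. -/
structure PartitionSeq where
  parts : ℕ → ℕ
  antitone : ∀ ⦃i j : ℕ⦄, i ≤ j → parts j ≤ parts i
  eventually_zero : ∃ N, parts N = 0

namespace PartitionSeq

/-- The beta-set `{λ_j − j : j ≥ 1}` of a partition (with trailing zero parts included). -/
def betaSet (lam : PartitionSeq) : Set ℤ :=
  Set.range fun j : ℕ => (lam.parts j : ℤ) - (j + 1)

/-- The hook length of the cell in row `i`, column `j` (both 0-indexed): one plus the
number of cells to its right in its row plus the number of cells below it in its column. -/
noncomputable def hook (lam : PartitionSeq) (i j : ℕ) : ℕ :=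
  (lam.parts i - j) + Set.ncard {i' : ℕ | i < i' ∧ j < lam.parts i'}

/-- `lam` is an `a`-core: no cell of its Young diagram has hook length `a`. -/
def IsCore (lam : PartitionSeq) (a : ℕ) : Prop :=
  ∀ i j : ℕ, j < lam.parts i → lam.hook i j ≠ a

/-- The size `|λ| = λ₁ + λ₂ + ⋯` of a partition. -/
noncomputable def size (lam : PartitionSeq) : ℕ := ∑ᶠ j, lam.parts j

/-- The length (number of nonzero parts) of a partition. -/
noncomputable def length (lam : PartitionSeq) : ℕ := Set.ncard {j | 0 < lam.parts j}

/-- The `(j+1)`-st part of the conjugate (transpose) partition. -/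
noncomputable def conjParts (lam : PartitionSeq) (j : ℕ) : ℕ :=
  Set.ncard {i | j < lam.parts i}

/-- A partition is self-conjugate if it equals its conjugate. -/
def SelfConjugate (lam : PartitionSeq) : Prop := ∀ j, lam.parts j = lam.conjParts j

end PartitionSeq

/-- The set `B_a(c) = { −a(c_i + n) − i − 1 : 0 ≤ i ≤ a−1, n ∈ ℕ } ⊆ ℤ`. -/
def Bset (a : ℕ) (c : Fin a → ℤ) : Set ℤ :=
  {x | ∃ (i : Fin a) (n : ℕ), x = -(a : ℤ) * (c i + n) - i.val - 1}



lemma strictanti_range_eq {f g : ℕ → ℤ} (hf : StrictAnti f) (hg : StrictAnti g)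
    (h : Set.range f = Set.range g) : f = g := by
  funext n
  induction n using Nat.strong_induction_on with
  | _ n ih =>
    obtain ⟨m, hm⟩ : f n ∈ Set.range g := h ▸ Set.mem_range_self n
    obtain ⟨m', hm'⟩ : g n ∈ Set.range f := h.symm ▸ Set.mem_range_self n
    by_contra hne
    have h1 : n < m := by
      rcases Nat.lt_trichotomy m n with h' | h' | h'
      · exact absurd (hf.injective ((ih m h').trans hm)) (by omega)
      · exact absurd (h' ▸ hm) (by intro hh; exact hne hh.symm)
      · exact h'
    have h1' : n < m' := by
      rcases Nat.lt_trichotomy m' n with h' | h' | h'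
      · exact absurd (hg.injective ((ih m' h').symm.trans hm')) (by omega)
      · exact absurd (h' ▸ hm') (fun hh => hne hh)
      · exact h'
    have := hg h1 -- g m < g n
    have := hf h1' -- f m' < f n
    omega

lemma sa_le {f : ℕ → ℤ} (hf : StrictAnti f) : ∀ k l : ℕ, k ≤ l → f l + ((l : ℤ) - k) ≤ f k := by
  intro k l hkl
  induction l with
  | zero =>
    have : k = 0 := by omega
    subst this; simp
  | succ n ih =>
    rcases Nat.lt_or_ge k (n+1) with h | h
    · have h1 : f (n+1) < f n := hf (Nat.lt_succ_self n)
      have := ih (by omega)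
      push_cast
      push_cast at this
      omega
    · have : k = n + 1 := by omega
      subst this; simp











-- paste helpers here (assume t2 lemmas available by copy)
lemma ncard_Iio (n : ℕ) : (Set.Iio n).ncard = n := by
  rw [← Finset.coe_Iio, Set.ncard_coe_finset, Nat.card_Iio]

lemma ncard_Ioo (a b : ℕ) : (Set.Ioo a b).ncard = b - a - 1 := by
  rw [← Finset.coe_Ioo, Set.ncard_coe_finset, Nat.card_Ioo]

lemma lowerset_eq_Iio {S : Set ℕ} (hfin : S.Finite) (hdc : ∀ ⦃x y : ℕ⦄, x ≤ y → y ∈ S → x ∈ S) :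
    S = Set.Iio S.ncard := by
  have hsub : S ⊆ Set.Iio S.ncard := by
    intro x hx
    by_contra hx'
    have h2 : Set.Iio (x+1) ⊆ S := fun y hy => hdc (Nat.lt_succ_iff.mp hy) hx
    have hle := Set.ncard_le_ncard h2 hfin
    rw [ncard_Iio] at hle
    simp only [Set.mem_Iio, not_lt] at hx'
    omega
  exact Set.eq_of_subset_of_ncard_le hsub (by rw [ncard_Iio]) (Set.finite_Iio _)

namespace PartitionSeq

variable (lam : PartitionSeq)

/-- the beta enumeration -/
def benum (j : ℕ) : ℤ := (lam.parts j : ℤ) - (j + 1)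

lemma benum_strictAnti : StrictAnti lam.benum := by
  intro j k hjk
  have := lam.antitone (le_of_lt hjk)
  unfold benum
  have : (lam.parts k : ℤ) ≤ lam.parts j := by exact_mod_cast this
  push_cast
  omega

lemma betaSet_eq_range : lam.betaSet = Set.range lam.benum := rfl

lemma benum_mem : lam.benum j ∈ lam.betaSet := Set.mem_range_self j

lemma parts_eq_zero_of_ge {N : ℕ} (hN : lam.parts N = 0) {j : ℕ} (h : N ≤ j) :
    lam.parts j = 0 := Nat.le_zero.mp (hN ▸ lam.antitone h)

lemma benum_ge (j : ℕ) : -(j + 1 : ℤ) ≤ lam.benum j := by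
  unfold benum
  have : (0:ℤ) ≤ lam.parts j := Int.ofNat_nonneg _
  omega

lemma benum_le (j : ℕ) : lam.benum j ≤ lam.benum 0 := by
  rcases Nat.eq_zero_or_pos j with h | h
  · subst h; rfl
  · exact le_of_lt (lam.benum_strictAnti h)

lemma betaSet_inj {lam mu : PartitionSeq} (h : lam.betaSet = mu.betaSet) : lam = mu := by
  have := strictanti_range_eq lam.benum_strictAnti mu.benum_strictAnti
    (by rw [← betaSet_eq_range, ← betaSet_eq_range, h])
  cases lam; cases mu
  simp only [PartitionSeq.mk.injEq]
  funext j
  have hj := congrFun this j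
  simpa [benum] using hj

lemma conj_finite (j : ℕ) : {i | j < lam.parts i}.Finite := by
  obtain ⟨N, hN⟩ := lam.eventually_zero
  apply Set.Finite.subset (Set.finite_Iio N)
  intro i hi
  simp only [Set.mem_setOf_eq] at hi
  by_contra h
  have := lam.parts_eq_zero_of_ge hN (not_lt.mp h)
  omega

lemma conj_eq_Iio (j : ℕ) : {i | j < lam.parts i} = Set.Iio (lam.conjParts j) := by
  apply lowerset_eq_Iio (lam.conj_finite j)
  intro x y hxy hy
  simp only [Set.mem_setOf_eq] at *
  exact lt_of_lt_of_le hy (lam.antitone hxy)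

lemma lt_conj {i j : ℕ} (hj : j < lam.parts i) : i < lam.conjParts j := by
  have : i ∈ {i | j < lam.parts i} := hj
  rwa [lam.conj_eq_Iio j] at this

lemma hook_formula {i j : ℕ} (hj : j < lam.parts i) :
    (lam.hook i j : ℤ) = lam.benum i - ((j : ℤ) - lam.conjParts j) := by
  have him : i < lam.conjParts j := lam.lt_conj hj
  have hset : {i' : ℕ | i < i' ∧ j < lam.parts i'} = Set.Ioo i (lam.conjParts j) := by
    ext i'
    simp only [Set.mem_setOf_eq, Set.mem_Ioo]
    constructor
    · rintro ⟨h1, h2⟩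
      refine ⟨h1, ?_⟩
      have : i' ∈ {i | j < lam.parts i} := h2
      rwa [lam.conj_eq_Iio j] at this
    · rintro ⟨h1, h2⟩
      refine ⟨h1, ?_⟩
      have : i' ∈ Set.Iio (lam.conjParts j) := h2
      rw [← lam.conj_eq_Iio j] at this
      exact this
  unfold hook
  rw [hset, ncard_Ioo]
  unfold benum
  have h1 : (↑(lam.parts i - j) : ℤ) = (lam.parts i : ℤ) - j := by
    push_cast [Nat.cast_sub (le_of_lt hj)]; ring
  push_cast [Nat.cast_sub (le_of_lt hj)]
  omega

lemma conj_sub_notMem (j : ℕ) : (j : ℤ) - lam.conjParts j ∉ lam.betaSet := by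
  rintro ⟨k, hk⟩
  simp only at hk
  set m := lam.conjParts j with hm
  rcases Nat.lt_or_ge k m with h | h
  · -- k < m: parts k > j
    have hk2 : k ∈ Set.Iio m := h
    rw [← lam.conj_eq_Iio j] at hk2
    have : j < lam.parts k := hk2
    have : (j : ℤ) < lam.parts k := by exact_mod_cast this
    have hkm : (k : ℤ) < m := by exact_mod_cast h
    omega
  · -- k ≥ m: parts k ≤ j
    have hk2 : k ∉ Set.Iio m := by simp [not_lt.mpr h]
    rw [← lam.conj_eq_Iio j] at hk2
    simp only [Set.mem_setOf_eq, not_lt] at hk2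
    have : (lam.parts k : ℤ) ≤ j := by exact_mod_cast hk2
    have hkm : (m : ℤ) ≤ k := by exact_mod_cast h
    omega


lemma mem_betaSet_iff (x : ℤ) : x ∈ lam.betaSet ↔ ∃ k, lam.benum k = x := Set.mem_range

lemma isCore_of_closed (a : ℕ) (h : ∀ x ∈ lam.betaSet, x - a ∈ lam.betaSet) :
    lam.IsCore a := by
  intro i j hj hcontra
  have hf := lam.hook_formula hj
  rw [hcontra] at hf
  have hmem := h (lam.benum i) (lam.benum_mem)
  have : (j : ℤ) - lam.conjParts j ∈ lam.betaSet := by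
    have : lam.benum i - a = (j : ℤ) - lam.conjParts j := by omega
    rwa [this] at hmem
  exact lam.conj_sub_notMem j this

lemma closed_of_isCore {a : ℕ} (ha : 1 ≤ a) (h : lam.IsCore a) :
    ∀ x ∈ lam.betaSet, x - a ∈ lam.betaSet := by
  intro x hx
  obtain ⟨i, hi⟩ := (lam.mem_betaSet_iff x).mp hx
  subst hi
  by_contra hc
  set c : ℤ := lam.benum i - a with hcdef
  set T : Set ℕ := {k | c < lam.benum k} with hT
  have hTfin : T.Finite := by
    apply Set.Finite.subset (Set.finite_Iio ((lam.parts 0 : ℤ) - c).toNat)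
    intro k hk
    have h1 : c < lam.benum k := hk
    have h2 := lam.benum_le k
    have h3 : lam.benum 0 = (lam.parts 0 : ℤ) - 1 := by unfold benum; push_cast; ring
    simp only [Set.mem_Iio]
    have h5 : (lam.parts k : ℤ) ≤ (lam.parts 0 : ℤ) := by
      exact_mod_cast lam.antitone (Nat.zero_le k)
    have h6 : lam.benum k = (lam.parts k : ℤ) - k - 1 := by unfold benum; push_cast; ring
    rw [← Nat.cast_lt (α := ℤ), Int.toNat_of_nonneg (by omega)]
    omega
  have hdc : ∀ ⦃x y : ℕ⦄, x ≤ y → y ∈ T → x ∈ T := by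
    intro x y hxy hy
    exact lt_of_lt_of_le hy (lam.benum_strictAnti.antitone hxy)
  have hTIio : T = Set.Iio T.ncard := lowerset_eq_Iio hTfin hdc
  set m := T.ncard with hm
  have hmem_iff : ∀ k, k ∈ T ↔ k < m := by
    intro k; rw [hTIio]; rfl
  have hbne : ∀ k, lam.benum k ≠ c := by
    intro k hk
    exact hc (hk ▸ lam.benum_mem)
  have him : i < m := (hmem_iff i).mp (by
    show c < lam.benum i
    omega)
  have hkey : ∀ k, k < m → c + ((m : ℤ) - k) ≤ lam.benum k := by
    intro k hk
    have h1 : (m-1) ∈ T := (hmem_iff (m-1)).mpr (by omega)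
    have h2 : c < lam.benum (m-1) := h1
    have h3 := sa_le lam.benum_strictAnti k (m-1) (by omega)
    have h4 : ((m - 1 : ℕ) : ℤ) = (m : ℤ) - 1 := by
      have : 1 ≤ m := by omega
      push_cast [Nat.cast_sub this]; ring
    omega
  have hcm : 0 ≤ c + m := by
    by_contra hneg
    push_neg at hneg
    have hmc : (m : ℤ) < -c := by omega
    have : m ∈ T := by
      show c < lam.benum m
      have := lam.benum_ge m
      have := hbne m
      omega
    rw [hmem_iff] at this
    omega
  set jn := (c + m).toNat with hjn
  have hjz : (jn : ℤ) = c + m := Int.toNat_of_nonneg hcm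
  have hconjset : {k | jn < lam.parts k} = T := by
    ext k
    simp only [Set.mem_setOf_eq]
    constructor
    · intro hk
      by_contra hk2
      have hkm : ¬ k < m := fun hh => hk2 ((hmem_iff k).mpr hh)
      have hkm' : m ≤ k := by omega
      have h5 := sa_le lam.benum_strictAnti m k hkm'
      have h6 : lam.benum m ≤ c := by
        by_contra hh
        push_neg at hh
        exact absurd ((hmem_iff m).mp hh) (lt_irrefl m)
      have h7 := hbne m
      have hparts : (lam.parts k : ℤ) = lam.benum k + k + 1 := by unfold benum; ring
      have hk' : (jn : ℤ) < (lam.parts k : ℤ) := by exact_mod_cast hk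
      omega
    · intro hk
      have hk' : k < m := (hmem_iff k).mp hk
      have := hkey k hk'
      have hparts : (lam.parts k : ℤ) = lam.benum k + k + 1 := by unfold benum; ring
      rw [← Nat.cast_lt (α := ℤ)]
      omega
  have hconj : lam.conjParts jn = m := by
    unfold conjParts
    rw [hconjset]
  have hji : jn < lam.parts i := by
    have := hkey i him
    have hparts : (lam.parts i : ℤ) = lam.benum i + i + 1 := by unfold benum; ring
    rw [← Nat.cast_lt (α := ℤ)]
    omega
  apply h i jn hji
  have hf := lam.hook_formula hji
  rw [hconj] at hf
  have : (lam.hook i jn : ℤ) = a := by omega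
  exact_mod_cast this


lemma fin_sm {n : ℕ} (f : Fin n → ℤ) (hf : StrictMono f) (hn : 0 < n) :
    ∀ i : Fin n, f ⟨0, hn⟩ + i.val ≤ f i := by
  intro i
  obtain ⟨k, hk⟩ := i
  induction k with
  | zero => simp
  | succ kk ih =>
    have h1 := ih (by omega)
    have h2 : f ⟨kk, by omega⟩ < f ⟨kk+1, hk⟩ := hf (by simp [Fin.lt_def])
    push_cast
    push_cast at h1
    omega

lemma exists_partition {S : Set ℤ} {N : ℕ}
    (h1 : ∀ x : ℤ, x < -(N:ℤ) → x ∈ S)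
    (hfin : {x ∈ S | -(N:ℤ) ≤ x}.Finite)
    (h2 : {x ∈ S | -(N:ℤ) ≤ x}.ncard = N) :
    ∃ lam : PartitionSeq, lam.betaSet = S := by
  classical
  set T := hfin.toFinset with hTdef
  have hcard : T.card = N := by
    rw [← h2, Set.ncard_eq_toFinset_card _ hfin]
  have hmemT : ∀ x : ℤ, x ∈ T ↔ x ∈ S ∧ -(N:ℤ) ≤ x := by
    intro x
    rw [hTdef, Set.Finite.mem_toFinset]
    rfl
  set e := T.orderIsoOfFin hcard with hedef
  set b : ℕ → ℤ := fun j => if h : j < N then ((e (Fin.rev ⟨j, h⟩)) : ℤ) else -(j+1 : ℤ) with hbdef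
  have hesm : StrictMono (fun i : Fin N => ((e i : ℤ))) := by
    intro i j hij
    exact_mod_cast (e.strictMono hij : (e i : {x // x ∈ T}) < e j)
  have hbmem : ∀ (j : ℕ) (h : j < N), b j ∈ T := by
    intro j h
    simp only [hbdef, dif_pos h]
    exact (e (Fin.rev ⟨j, h⟩)).2
  have hblow : ∀ j : ℕ, -(j+1 : ℤ) ≤ b j := by
    intro j
    by_cases h : j < N
    · have hN0 : 0 < N := by omega
      have h3 := fin_sm _ hesm hN0 (Fin.rev ⟨j, h⟩)
      have h4 : (Fin.rev ⟨j, h⟩ : Fin N).val = N - 1 - j := by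
        simp [Fin.rev]
        omega
      have h5 : ((e ⟨0, hN0⟩ : ℤ)) ≥ -(N:ℤ) := by
        have := ((hmemT _).mp (e ⟨0, hN0⟩).2).2
        exact this
      simp only [hbdef, dif_pos h]
      rw [h4] at h3
      have h6 : ((N - 1 - j : ℕ) : ℤ) = (N : ℤ) - 1 - j := by omega
      omega
    · simp [hbdef, dif_neg h]
  have hbanti : StrictAnti b := by
    apply strictAnti_nat_of_succ_lt
    intro j
    by_cases h : j + 1 < N
    · have hj : j < N := by omega
      simp only [hbdef, dif_pos h, dif_pos hj]
      apply hesm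
      simp [Fin.lt_def, Fin.rev]
      omega
    · by_cases hj : j < N
      · have hmem := hbmem j hj
        have := ((hmemT _).mp hmem).2
        simp only [hbdef, dif_pos hj, dif_neg h] at *
        have hjN : j + 1 = N := by omega
        omega
      · simp only [hbdef, dif_neg h, dif_neg hj]
        omega
  refine ⟨⟨fun j => (b j + j + 1).toNat, ?_, ⟨N, ?_⟩⟩, ?_⟩
  · intro j k hjk
    have := sa_le hbanti j k hjk
    apply Int.toNat_le_toNat
    omega
  · have : ¬ N < N := lt_irrefl N
    simp only [hbdef, dif_neg this]
    omega
  · unfold PartitionSeq.betaSet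
    have hval : ∀ j : ℕ, (((b j + j + 1).toNat : ℤ)) - (j + 1) = b j := by
      intro j
      rw [Int.toNat_of_nonneg (by have := hblow j; omega)]
      ring
    have : (fun j : ℕ => (((fun j => (b j + j + 1).toNat) j : ℤ)) - (j + 1)) = b := by
      funext j
      exact hval j
    rw [this]
    ext x
    simp only [Set.mem_range]
    constructor
    · rintro ⟨j, rfl⟩
      by_cases h : j < N
      · exact ((hmemT _).mp (hbmem j h)).1
      · simp only [hbdef, dif_neg h]
        apply h1
        omega
    · intro hx
      by_cases h : -(N:ℤ) ≤ x
      · have hxT : x ∈ T := (hmemT x).mpr ⟨hx, h⟩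
        obtain ⟨i, hi⟩ := e.surjective ⟨x, hxT⟩
        have hN0 : 0 < N := by
          rcases Nat.eq_zero_or_pos N with h0 | h0
          · exact absurd (h0 ▸ i).isLt (by omega)
          · exact h0
        refine ⟨N - 1 - i.val, ?_⟩
        have hj : N - 1 - i.val < N := by omega
        simp only [hbdef, dif_pos hj]
        have : Fin.rev ⟨N - 1 - i.val, hj⟩ = i := by
          apply Fin.ext
          simp [Fin.rev]
          omega
        rw [this, hi]
      · refine ⟨(-x - 1).toNat, ?_⟩
        have hge : (((-x - 1).toNat : ℤ)) = -x - 1 := Int.toNat_of_nonneg (by omega)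
        have hnot : ¬ (-x - 1).toNat < N := by omega
        simp only [hbdef, dif_neg hnot]
        omega

end PartitionSeq

section BsetLemmas

variable {a : ℕ}

lemma repr_unique (ha : 1 ≤ a) {i i' : Fin a} {m m' : ℤ}
    (h : -(a:ℤ)*m - i.val - 1 = -(a:ℤ)*m' - i'.val - 1) : i = i' ∧ m = m' := by
  have ha' : (0:ℤ) < a := by exact_mod_cast ha
  have hi : (i.val : ℤ) < a := by exact_mod_cast i.isLt
  have hi' : (i'.val : ℤ) < a := by exact_mod_cast i'.isLt
  have hi0 : (0:ℤ) ≤ i.val := Int.ofNat_nonneg _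
  have hi0' : (0:ℤ) ≤ i'.val := Int.ofNat_nonneg _
  have key : (a:ℤ) * (m' - m) = (i.val : ℤ) - i'.val := by ring_nf; ring_nf at h; omega
  have hmm : m = m' := by
    rcases lt_trichotomy m m' with hlt | heq | hgt
    · have h1 : (1:ℤ) ≤ m' - m := by omega
      have := mul_le_mul_of_nonneg_left h1 (le_of_lt ha')
      simp at this
      omega
    · exact heq
    · have h1 : (1:ℤ) ≤ m - m' := by omega
      have := mul_le_mul_of_nonneg_left h1 (le_of_lt ha')
      simp at this
      have : (a:ℤ) * (m' - m) ≤ -a := by nlinarith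
      omega
  subst hmm
  have : (i.val : ℤ) = i'.val := by omega
  have : i.val = i'.val := by exact_mod_cast this
  exact ⟨Fin.ext this, rfl⟩

lemma bset_mem_iff (ha : 1 ≤ a) (c : Fin a → ℤ) (x : ℤ) :
    x ∈ Bset a c ↔ ∃ (i : Fin a) (m : ℤ), c i ≤ m ∧ x = -(a:ℤ)*m - i.val - 1 := by
  constructor
  · rintro ⟨i, n, rfl⟩
    exact ⟨i, c i + n, by omega, by push_cast; ring⟩
  · rintro ⟨i, m, hm, rfl⟩
    refine ⟨i, (m - c i).toNat, ?_⟩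
    rw [Int.toNat_of_nonneg (by omega)]
    ring

lemma bset_closed (c : Fin a → ℤ) : ∀ x ∈ Bset a c, x - a ∈ Bset a c := by
  rintro x ⟨i, n, rfl⟩
  exact ⟨i, n + 1, by push_cast; ring⟩

lemma bset_inj (ha : 1 ≤ a) {c c' : Fin a → ℤ} (h : Bset a c = Bset a c') : c = c' := by
  have key : ∀ (d d' : Fin a → ℤ), Bset a d = Bset a d' → ∀ i, d' i ≤ d i := by
    intro d d' hdd i
    have hmem : -(a:ℤ)*(d i) - i.val - 1 ∈ Bset a d := ⟨i, 0, by push_cast; ring⟩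
    rw [hdd, bset_mem_iff ha] at hmem
    obtain ⟨i', m, hm, heq⟩ := hmem
    obtain ⟨hii, hmm⟩ := repr_unique ha heq
    subst hii
    omega
  funext i
  exact le_antisymm (key c' c h.symm i) (key c c' h i)

lemma bset_low (ha : 1 ≤ a) (c : Fin a → ℤ) (M : ℤ) (hM : ∀ i, c i ≤ M) :
    ∀ x : ℤ, x < -((a:ℤ)*M) → x ∈ Bset a c := by
  intro x hx
  have ha' : (0:ℤ) < a := by exact_mod_cast ha
  set y : ℤ := -(x+1) with hy
  set i0 : ℤ := y % a with hi0
  set m : ℤ := y / a with hm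
  have hdm : (a:ℤ) * m + i0 = y := Int.mul_ediv_add_emod y a
  have h0 : 0 ≤ i0 := Int.emod_nonneg y (by omega)
  have h1 : i0 < a := Int.emod_lt_of_pos y ha'
  have hxval : x = -(a:ℤ)*m - i0 - 1 := by linarith
  set i : Fin a := ⟨i0.toNat, by omega⟩ with hi
  have hival : (i.val : ℤ) = i0 := by
    simp [hi]
    omega
  rw [bset_mem_iff ha]
  refine ⟨i, m, ?_, by rw [hival]; exact hxval⟩
  -- need c i ≤ m : from x < -aM get a*m + i0 + 1 > a*M so a*m > a*(M-1) so m ≥ M ≥ c i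
  have h2 : (a:ℤ)*(M-1) < a*m := by nlinarith
  have h3 : M - 1 < m := lt_of_mul_lt_mul_left h2 (le_of_lt ha')
  have := hM i
  omega

lemma bset_count (ha : 1 ≤ a) (c : Fin a → ℤ) (M : ℤ) (hM : ∀ i, c i ≤ M) :
    ∃ Tf : Finset ℤ, {x ∈ Bset a c | -((a:ℤ)*M) ≤ x} = ↑Tf ∧
      ((Tf.card : ℤ)) = (a:ℤ)*M - ∑ i, c i := by
  classical
  have ha' : (0:ℤ) < a := by exact_mod_cast ha
  set f : (Σ _ : Fin a, ℤ) → ℤ := fun p => -(a:ℤ)*p.2 - p.1.val - 1 with hf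
  set D : Finset (Σ _ : Fin a, ℤ) := Finset.univ.sigma (fun i : Fin a => Finset.Ico (c i) M) with hD
  refine ⟨D.image f, ?_, ?_⟩
  · ext x
    simp only [Set.mem_setOf_eq, Finset.coe_image, Set.mem_image, Finset.mem_coe,
      Finset.mem_sigma, Finset.mem_univ, Finset.mem_Ico, true_and, hD, hf]
    constructor
    · rintro ⟨hx, hge⟩
      rw [bset_mem_iff ha] at hx
      obtain ⟨i, m, hm, rfl⟩ := hx
      refine ⟨⟨i, m⟩, ⟨hm, ?_⟩, rfl⟩
      have hival : (0:ℤ) ≤ i.val := Int.ofNat_nonneg _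
      have h2 : (a:ℤ)*m < a*M := by nlinarith
      exact lt_of_mul_lt_mul_left h2 (le_of_lt ha')
    · rintro ⟨⟨i, m⟩, ⟨hm1, hm2⟩, rfl⟩
      constructor
      · rw [bset_mem_iff ha]
        exact ⟨i, m, hm1, rfl⟩
      · have hival : (i.val : ℤ) < a := by exact_mod_cast i.isLt
        have h2 : (a:ℤ)*m ≤ a*(M-1) := by nlinarith
        nlinarith
  · rw [Finset.card_image_of_injOn]
    · rw [Finset.card_sigma]
      have : ∀ i : Fin a, (Finset.Ico (c i) M).card = (M - c i).toNat := fun i => Int.card_Ico _ _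
      push_cast [this]
      rw [Finset.sum_congr rfl (fun i _ => Int.toNat_of_nonneg (by have := hM i; omega))]
      rw [Finset.sum_sub_distrib, Finset.sum_const, Finset.card_univ, Fintype.card_fin]
      push_cast
      ring
    · rintro ⟨i, m⟩ _ ⟨i', m'⟩ _ heq
      obtain ⟨h1, h2⟩ := repr_unique ha heq
      subst h1; subst h2; rfl

end BsetLemmas

lemma beta_charge (lam : PartitionSeq) {N : ℕ} (hN : lam.parts N = 0) :
    (∀ x : ℤ, x < -(N:ℤ) → x ∈ lam.betaSet) ∧
    {x ∈ lam.betaSet | -(N:ℤ) ≤ x}.Finite ∧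
    {x ∈ lam.betaSet | -(N:ℤ) ≤ x}.ncard = N := by
  have hbelow : ∀ j : ℕ, N ≤ j → lam.benum j = -(j+1:ℤ) := by
    intro j hj
    have := lam.parts_eq_zero_of_ge hN hj
    unfold PartitionSeq.benum
    rw [this]
    push_cast
    ring
  have h1 : ∀ x : ℤ, x < -(N:ℤ) → x ∈ lam.betaSet := by
    intro x hx
    set j := (-x-1).toNat with hj
    have hjz : ((j:ℤ)) = -x - 1 := Int.toNat_of_nonneg (by omega)
    have hjN : N ≤ j := by omega
    rw [lam.mem_betaSet_iff]
    exact ⟨j, by rw [hbelow j hjN]; omega⟩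
  have hseteq : {x ∈ lam.betaSet | -(N:ℤ) ≤ x} = lam.benum '' (Set.Iio N) := by
    ext x
    simp only [Set.mem_setOf_eq, Set.mem_image, Set.mem_Iio]
    constructor
    · rintro ⟨hx, hge⟩
      obtain ⟨k, hk⟩ := (lam.mem_betaSet_iff x).mp hx
      refine ⟨k, ?_, hk⟩
      by_contra hkN
      push_neg at hkN
      rw [hbelow k hkN] at hk
      omega
    · rintro ⟨k, hkN, rfl⟩
      refine ⟨lam.benum_mem, ?_⟩
      have := lam.benum_ge k
      have : ((k:ℤ)) + 1 ≤ N := by exact_mod_cast hkN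
      omega
  constructor
  · exact h1
  rw [hseteq]
  refine ⟨Set.Finite.image _ (Set.finite_Iio N), ?_⟩
  rw [Set.ncard_image_of_injective _ lam.benum_strictAnti.injective, ncard_Iio]

lemma charge_ext {S : Set ℤ} {N N' K : ℕ} (hNN : N ≤ N')
    (h1 : ∀ x : ℤ, x < -(N:ℤ) → x ∈ S)
    (hfin : {x ∈ S | -(N:ℤ) ≤ x}.Finite)
    (h2 : {x ∈ S | -(N:ℤ) ≤ x}.ncard = K) :
    {x ∈ S | -(N':ℤ) ≤ x}.ncard = K + (N' - N) := by
  have hsplit : {x ∈ S | -(N':ℤ) ≤ x} = {x ∈ S | -(N:ℤ) ≤ x} ∪ Set.Ico (-(N':ℤ)) (-(N:ℤ)) := by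
    ext x
    simp only [Set.mem_setOf_eq, Set.mem_union, Set.mem_Ico]
    constructor
    · rintro ⟨hx, hge⟩
      by_cases h : -(N:ℤ) ≤ x
      · exact Or.inl ⟨hx, h⟩
      · exact Or.inr ⟨hge, by omega⟩
    · rintro (⟨hx, hge⟩ | ⟨hge, hlt⟩)
      · refine ⟨hx, ?_⟩
        have : ((N:ℤ)) ≤ N' := by exact_mod_cast hNN
        omega
      · exact ⟨h1 x hlt, hge⟩
  have hIco : (Set.Ico (-(N':ℤ)) (-(N:ℤ))).ncard = N' - N := by
    rw [← Finset.coe_Ico, Set.ncard_coe_finset, Int.card_Ico]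
    omega
  have hdisj : Disjoint {x ∈ S | -(N:ℤ) ≤ x} (Set.Ico (-(N':ℤ)) (-(N:ℤ))) := by
    rw [Set.disjoint_left]
    rintro x ⟨_, hge⟩ ⟨_, hlt⟩
    omega
  rw [hsplit, Set.ncard_union_eq hdisj hfin (by rw [← Finset.coe_Ico]; exact (Finset.Ico _ _).finite_toSet), h2, hIco]

lemma int_repr {a : ℕ} (ha : 1 ≤ a) (x : ℤ) :
    ∃ (i : Fin a) (m : ℤ), x = -(a:ℤ)*m - i.val - 1 := by
  have ha' : (0:ℤ) < a := by exact_mod_cast ha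
  set y : ℤ := -(x+1) with hy
  set i0 : ℤ := y % a with hi0
  set m : ℤ := y / a with hm
  have hdm : (a:ℤ) * m + i0 = y := Int.mul_ediv_add_emod y a
  have h0 : 0 ≤ i0 := Int.emod_nonneg y (by omega)
  have h1 : i0 < a := Int.emod_lt_of_pos y ha'
  refine ⟨⟨i0.toNat, by omega⟩, m, ?_⟩
  have hival : ((i0.toNat : ℕ) : ℤ) = i0 := by omega
  rw [show (((⟨i0.toNat, by omega⟩ : Fin a)).val : ℤ) = i0 from hival]
  linarith

lemma core_surj {a : ℕ} (ha : 1 ≤ a) (lam : PartitionSeq) (hcore : lam.IsCore a) :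
    ∃ c : Fin a → ℤ, (∑ i, c i) = 0 ∧ Bset a c = lam.betaSet := by
  classical
  have ha' : (0:ℤ) < a := by exact_mod_cast ha
  set S := lam.betaSet with hS
  have hclosed := lam.closed_of_isCore ha hcore
  obtain ⟨N, hN⟩ := lam.eventually_zero
  obtain ⟨h1, hfin, hcard⟩ := beta_charge lam hN
  set P : Fin a → ℤ → Prop := fun i m => -(a:ℤ)*m - i.val - 1 ∈ S with hP
  have hub : ∀ x ∈ S, x ≤ lam.benum 0 := by
    intro x hx
    obtain ⟨k, hk⟩ := (lam.mem_betaSet_iff x).mp hx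
    exact hk ▸ lam.benum_le k
  have hbdd : ∀ i : Fin a, ∃ b : ℤ, ∀ z, P i z → b ≤ z := by
    intro i
    refine ⟨-(lam.parts 0 : ℤ) - a, ?_⟩
    intro z hz
    by_contra hzc
    push_neg at hzc
    have hz1 : z ≤ -(lam.parts 0 : ℤ) - a - 1 := by omega
    have hz0 : z ≤ 0 := by
      have h0 : (0:ℤ) ≤ (lam.parts 0 : ℤ) := Int.ofNat_nonneg _
      omega
    have haz : (a:ℤ)*z ≤ 1*z := mul_le_mul_of_nonpos_right (by exact_mod_cast ha) hz0
    have hxub := hub _ hz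
    have hb0 : lam.benum 0 = (lam.parts 0 : ℤ) - 1 := by
      unfold PartitionSeq.benum; push_cast; ring
    have hia : ((i.val : ℕ) : ℤ) < a := by exact_mod_cast i.isLt
    have h0 : (0:ℤ) ≤ (lam.parts 0 : ℤ) := Int.ofNat_nonneg _
    have hiz : (0:ℤ) ≤ (i.val : ℤ) := Int.ofNat_nonneg _
    rw [hb0] at hxub
    linarith
  have hne : ∀ i : Fin a, ∃ z, P i z := by
    intro i
    refine ⟨(N:ℤ) + 1, ?_⟩
    show -(a:ℤ)*((N:ℤ)+1) - i.val - 1 ∈ S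
    apply h1
    have hN0 : (0:ℤ) ≤ (N:ℤ) := Int.ofNat_nonneg _
    have hiz : (0:ℤ) ≤ (i.val : ℤ) := Int.ofNat_nonneg _
    have : ((N:ℤ)+1) * 1 ≤ ((N:ℤ)+1) * a := by
      apply mul_le_mul_of_nonneg_left (by exact_mod_cast ha) (by omega)
    nlinarith
  have hmin : ∀ i : Fin a, ∃ lb : ℤ, P i lb ∧ ∀ z, P i z → lb ≤ z := by
    intro i
    exact Int.exists_least_of_bdd (hbdd i) (hne i)
  choose c hc hcmin using hmin
  have hsucc : ∀ (i : Fin a) (m : ℤ), P i m → P i (m + 1) := by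
    intro i m hm
    have := hclosed _ hm
    have heq : -(a:ℤ)*m - i.val - 1 - a = -(a:ℤ)*(m+1) - i.val - 1 := by ring
    rwa [heq] at this
  have hIci : ∀ (i : Fin a) (m : ℤ), c i ≤ m → P i m := by
    intro i m hm
    have key : ∀ n : ℕ, P i (c i + n) := by
      intro n
      induction n with
      | zero => simpa using hc i
      | succ k ih =>
        have := hsucc i _ ih
        have heq : c i + (k:ℤ) + 1 = c i + ((k+1 : ℕ) : ℤ) := by push_cast; ring
        rwa [heq] at this
    have := key (m - c i).toNat
    rwa [show c i + ((m - c i).toNat : ℤ) = m by rw [Int.toNat_of_nonneg (by omega)]; ring] at this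
  have hBeq : Bset a c = S := by
    ext x
    constructor
    · intro hx
      rw [bset_mem_iff ha] at hx
      obtain ⟨i, m, hm, rfl⟩ := hx
      exact hIci i m hm
    · intro hx
      obtain ⟨i, m, rfl⟩ := int_repr ha x
      have hP : P i m := hx
      rw [bset_mem_iff ha]
      exact ⟨i, m, hcmin i m hP, rfl⟩
  refine ⟨c, ?_, hBeq⟩
  -- sum is zero
  set M : ℤ := (∑ i, |c i|) + N with hM
  have hMc : ∀ i, c i ≤ M := by
    intro i
    have h1' : |c i| ≤ ∑ j, |c j| := Finset.single_le_sum (f := fun j => |c j|) (fun j _ => abs_nonneg _) (Finset.mem_univ i)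
    have := le_abs_self (c i)
    have hN0 : (0:ℤ) ≤ (N:ℤ) := Int.ofNat_nonneg _
    omega
  have hM0 : (0:ℤ) ≤ M := by
    have : (0:ℤ) ≤ ∑ i, |c i| := Finset.sum_nonneg (fun i _ => abs_nonneg _)
    have hN0 : (0:ℤ) ≤ (N:ℤ) := Int.ofNat_nonneg _
    omega
  have hMN : (N:ℤ) ≤ (a:ℤ)*M := by
    have h1' : (N:ℤ) ≤ M := by
      have : (0:ℤ) ≤ ∑ i, |c i| := Finset.sum_nonneg (fun i _ => abs_nonneg _)
      omega
    have h2' : 1*M ≤ (a:ℤ)*M := mul_le_mul_of_nonneg_right (by exact_mod_cast ha) hM0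
    omega
  obtain ⟨Tf, hTset, hTcard⟩ := bset_count ha c M hMc
  set N' : ℕ := ((a:ℤ)*M).toNat with hN'
  have hN'z : ((N' : ℕ) : ℤ) = (a:ℤ)*M := Int.toNat_of_nonneg (by positivity)
  have hNN' : N ≤ N' := by omega
  have hext := charge_ext hNN' h1 hfin hcard
  have hseteq : {x ∈ S | -((N':ℕ):ℤ) ≤ x} = (Tf : Set ℤ) := by
    rw [← hTset, hBeq, hN'z]
  rw [hseteq, Set.ncard_coe_finset] at hext
  have h5 : Tf.card = N' := by omega
  have h6 : ((Tf.card : ℕ) : ℤ) = (N' : ℤ) := by exact_mod_cast h5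
  rw [hTcard] at h6
  omega

/-- for every `c ∈ ℤ^a` summing to zero there is a unique partition with
beta-set `B_a(c)`; it is an `a`-core, and `c ↦ core_a(c)` is a bijection onto `a`-cores. -/
theorem stmt0 (a : ℕ) (ha : 1 ≤ a) :
    (∀ c : Fin a → ℤ, (∑ i, c i) = 0 →
      ∃! lam : PartitionSeq, lam.betaSet = Bset a c) ∧
    ∃ core : {c : Fin a → ℤ // (∑ i, c i) = 0} → {lam : PartitionSeq // lam.IsCore a},
      (∀ c, (core c).val.betaSet = Bset a c.val) ∧ Function.Bijective core := by
  have hEU : ∀ c : Fin a → ℤ, (∑ i, c i) = 0 →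
      ∃! lam : PartitionSeq, lam.betaSet = Bset a c := by
    intro c hc
    set M : ℤ := ∑ i, |c i| with hM
    have hMc : ∀ i, c i ≤ M := by
      intro i
      have h1' : |c i| ≤ ∑ j, |c j| :=
        Finset.single_le_sum (f := fun j => |c j|) (fun j _ => abs_nonneg _) (Finset.mem_univ i)
      have := le_abs_self (c i)
      omega
    have hM0 : (0:ℤ) ≤ M := Finset.sum_nonneg (fun i _ => abs_nonneg _)
    have ha' : (0:ℤ) < a := by exact_mod_cast ha
    obtain ⟨Tf, hTset, hTcard⟩ := bset_count ha c M hMc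
    set N : ℕ := ((a:ℤ)*M).toNat with hN
    have hNz : ((N:ℕ):ℤ) = (a:ℤ)*M := Int.toNat_of_nonneg (by positivity)
    have h1 : ∀ x : ℤ, x < -((N:ℕ):ℤ) → x ∈ Bset a c := by
      intro x hx
      exact bset_low ha c M hMc x (by omega)
    have hset2 : {x ∈ Bset a c | -((N:ℕ):ℤ) ≤ x} = (Tf : Set ℤ) := by
      rw [hNz]; exact hTset
    have hfin : {x ∈ Bset a c | -((N:ℕ):ℤ) ≤ x}.Finite := by
      rw [hset2]; exact Tf.finite_toSet
    have hncard : {x ∈ Bset a c | -((N:ℕ):ℤ) ≤ x}.ncard = N := by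
      rw [hset2, Set.ncard_coe_finset]
      have : ((Tf.card : ℕ) : ℤ) = ((N:ℕ):ℤ) := by rw [hTcard, hc, hNz]; ring
      exact_mod_cast this
    obtain ⟨lam, hlam⟩ := PartitionSeq.exists_partition h1 hfin hncard
    exact ⟨lam, hlam, fun mu hmu => PartitionSeq.betaSet_inj (hmu.trans hlam.symm)⟩
  refine ⟨hEU, ?_⟩
  have hcoreP : ∀ cs : {c : Fin a → ℤ // (∑ i, c i) = 0},
      ∃ lam : PartitionSeq, lam.betaSet = Bset a cs.val := fun cs => (hEU cs.val cs.2).exists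
  choose f hf using hcoreP
  have hfcore : ∀ cs, (f cs).IsCore a := by
    intro cs
    apply (f cs).isCore_of_closed
    rw [hf cs]
    exact bset_closed _
  refine ⟨fun cs => ⟨f cs, hfcore cs⟩, fun cs => hf cs, ?_, ?_⟩
  · intro c1 c2 h12
    have hv : f c1 = f c2 := congrArg Subtype.val h12
    apply Subtype.ext
    apply bset_inj ha
    rw [← hf c1, ← hf c2, hv]
  · rintro ⟨lam, hlam⟩
    obtain ⟨c, hsum, hBeq⟩ := core_surj ha lam hlam
    refine ⟨⟨c, hsum⟩, ?_⟩
    apply Subtype.ext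
    apply PartitionSeq.betaSet_inj
    rw [hf ⟨c, hsum⟩, hBeq]
end

section
/- Let a ≥ 1 be an integer and c = (c_0, …, c_{a−1}) ∈ ℤ^a with c_0 + ⋯ + c_{a−1} = 0. Then the size of the a-core core_a(c) is given by the quadratic function |core_a(c)| = (a/2)·Σ_{k=0}^{a−1} c_k² + Σ_{k=0}^{a−1} k·c_k. -/
private lemma gaussQ (t : ℕ) : ∑ n ∈ Finset.range t, (n : ℚ) = t * (t - 1) / 2 := by
  induction t with
  | zero => simp
  | succ t ih => rw [Finset.sum_range_succ, ih]; push_cast; ring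

private lemma linsumQ (m : ℕ) (p q : ℚ) :
    ∑ n ∈ Finset.range m, (p * n + q) = p * (m * (m - 1) / 2) + m * q := by
  rw [Finset.sum_add_distrib, ← Finset.mul_sum, gaussQ, Finset.sum_const,
    Finset.card_range, nsmul_eq_mul]

/-- the size of the `a`-core `core_a(c)` is
`(a/2)·Σ c_k² + Σ k·c_k`. -/
theorem stmt1 (a : ℕ) (ha : 1 ≤ a) (c : Fin a → ℤ) (hc : (∑ i, c i) = 0)
    (lam : PartitionSeq) (hlam : lam.betaSet = Bset a c) :
    (lam.size : ℚ) =
      (a : ℚ) / 2 * (∑ k, (c k : ℚ) ^ 2) + ∑ k : Fin a, (k.val : ℚ) * (c k : ℚ) := by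
  classical
  obtain ⟨N₀, hN₀⟩ := lam.eventually_zero
  set β : ℕ → ℤ := fun j => (lam.parts j : ℤ) - (j + 1) with hβ
  have hβanti : StrictAnti β := by
    intro i j hij
    have h1 : lam.parts j ≤ lam.parts i := lam.antitone hij.le
    simp only [hβ]
    omega
  have hβmem : ∀ j, β j ∈ Bset a c := by
    intro j
    rw [← hlam]
    exact ⟨j, rfl⟩
  have hBβ : ∀ x ∈ Bset a c, ∃ j, β j = x := by
    intro x hx
    rw [← hlam] at hx
    exact hx
  obtain ⟨K, hN₀K, hKc⟩ : ∃ K : ℕ, N₀ ≤ K ∧ ∀ i, c i < (K : ℤ) := by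
    refine ⟨N₀ + (∑ i, (c i).natAbs) + 1, by omega, fun i => ?_⟩
    have h1 : (c i).natAbs ≤ ∑ j, (c j).natAbs :=
      Finset.single_le_sum (f := fun j => (c j).natAbs) (fun _ _ => Nat.zero_le _)
        (Finset.mem_univ i)
    have h2 : c i ≤ ((c i).natAbs : ℤ) := Int.le_natAbs
    have h3 : ((c i).natAbs : ℤ) ≤ ((∑ j, (c j).natAbs : ℕ) : ℤ) := by exact_mod_cast h1
    push_cast at h2 h3 ⊢
    linarith
  obtain ⟨N, hN⟩ : ∃ N : ℕ, N = a * K := ⟨a * K, rfl⟩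
  have hNZ : ((N : ℕ) : ℤ) = (a : ℤ) * (K : ℤ) := by
    rw [hN]; push_cast; ring
  have hN₀N : N₀ ≤ N := by
    rw [hN]
    calc N₀ ≤ K := hN₀K
    _ ≤ a * K := Nat.le_mul_of_pos_left K ha
  have hzero : ∀ j, N ≤ j → lam.parts j = 0 := by
    intro j hj
    have := lam.antitone (le_trans hN₀N hj)
    omega
  -- the truncation lengths
  obtain ⟨t, htc⟩ : ∃ t : Fin a → ℕ, ∀ i, ((t i : ℕ) : ℤ) = (K : ℤ) - c i := by
    refine ⟨fun i => ((K : ℤ) - c i).toNat, fun i => Int.toNat_of_nonneg ?_⟩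
    linarith [hKc i]
  set g : Fin a → ℕ → ℤ := fun i n => -(a : ℤ) * (c i + n) - i.val - 1 with hg
  set S : Finset ℤ := (Finset.range N).image β with hS
  set T : Finset ℤ := Finset.univ.biUnion (fun i : Fin a => (Finset.range (t i)).image (g i))
    with hT
  have haZ : (1 : ℤ) ≤ (a : ℤ) := by exact_mod_cast ha
  -- membership characterizations
  have hSmem : ∀ x : ℤ, x ∈ S ↔ (x ∈ Bset a c ∧ -(N : ℤ) ≤ x) := by
    intro x
    simp only [hS, Finset.mem_image, Finset.mem_range]
    constructor
    · rintro ⟨j, hj, rfl⟩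
      refine ⟨hβmem j, ?_⟩
      simp only [hβ]
      omega
    · rintro ⟨hx, hxN⟩
      obtain ⟨j, rfl⟩ := hBβ x hx
      refine ⟨j, ?_, rfl⟩
      by_contra hjN
      push_neg at hjN
      have h0 : lam.parts j = 0 := hzero j hjN
      simp only [hβ] at hxN
      omega
  have hTmem : ∀ x : ℤ, x ∈ T ↔ (x ∈ Bset a c ∧ -(N : ℤ) ≤ x) := by
    intro x
    simp only [hT, Finset.mem_biUnion, Finset.mem_univ, true_and, Finset.mem_image,
      Finset.mem_range]
    constructor
    · rintro ⟨i, n, hn, rfl⟩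
      refine ⟨⟨i, n, rfl⟩, ?_⟩
      have hn' : (n : ℤ) < (K : ℤ) - c i := by
        have := htc i
        omega
      have hia : (i.val : ℤ) + 1 ≤ (a : ℤ) := by
        have := i.isLt
        exact_mod_cast this
      have h1 : c i + (n : ℤ) ≤ (K : ℤ) - 1 := by omega
      have h2 : (a : ℤ) * (c i + n) ≤ (a : ℤ) * ((K : ℤ) - 1) := by
        apply mul_le_mul_of_nonneg_left h1
        omega
      have h3 : (a : ℤ) * ((K : ℤ) - 1) = (a : ℤ) * K - a := by ring
      simp only [hg]
      rw [hNZ]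
      linarith
    · rintro ⟨⟨i, n, rfl⟩, hxN⟩
      refine ⟨i, n, ?_, rfl⟩
      have hia : (i.val : ℤ) ≥ 0 := by positivity
      rw [hNZ] at hxN
      have h1 : (a : ℤ) * (c i + n) ≤ (a : ℤ) * K - i.val - 1 := by linarith
      have h2 : c i + (n : ℤ) < (K : ℤ) := by
        by_contra hcon
        push_neg at hcon
        have : (a : ℤ) * K ≤ (a : ℤ) * (c i + n) := by
          apply mul_le_mul_of_nonneg_left hcon
          omega
        omega
      have := htc i
      omega
  have hST : S = T := by
    ext x
    rw [hSmem, hTmem]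
  -- β injective on range N
  have hβinj : Set.InjOn β (Finset.range N : Set ℕ) := (hβanti.injective).injOn
  -- sum over S as sum of β
  have hsumS : ∑ j ∈ Finset.range N, β j = ∑ x ∈ S, x := by
    rw [hS, Finset.sum_image]
    intro x hx y hy hxy
    exact hβanti.injective hxy
  -- disjointness for the biUnion
  have hdisj : ((Finset.univ : Finset (Fin a)) : Set (Fin a)).PairwiseDisjoint
      (fun i : Fin a => (Finset.range (t i)).image (g i)) := by
    intro i _ j _ hij
    simp only [Function.onFun, Finset.disjoint_left]
    rintro x hxi hxj
    simp only [Finset.mem_image, Finset.mem_range] at hxi hxj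
    obtain ⟨n, hn, hgn⟩ := hxi
    obtain ⟨m, hm, hgm⟩ := hxj
    rw [← hgm] at hgn
    simp only [hg] at hgn
    set d : ℤ := (c j + m) - (c i + n) with hd
    have heq : (i.val : ℤ) - j.val = (a : ℤ) * d := by
      simp only [hd]; ring_nf; ring_nf at hgn; linarith
    have hi' : (i.val : ℤ) < a := by exact_mod_cast i.isLt
    have hj' : (j.val : ℤ) < a := by exact_mod_cast j.isLt
    have hi0 : (0 : ℤ) ≤ i.val := by positivity
    have hj0 : (0 : ℤ) ≤ j.val := by positivity
    have hd0 : d = 0 := by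
      rcases lt_trichotomy d 0 with h | h | h
      · have : (a : ℤ) * d ≤ (a : ℤ) * (-1) := mul_le_mul_of_nonneg_left (by omega) (by omega)
        omega
      · exact h
      · have : (a : ℤ) * 1 ≤ (a : ℤ) * d := mul_le_mul_of_nonneg_left (by omega) (by omega)
        omega
    rw [hd0, mul_zero] at heq
    have : i.val = j.val := by omega
    exact hij (Fin.ext this)
  have hsumT : ∑ x ∈ T, x = ∑ i : Fin a, ∑ n ∈ Finset.range (t i), g i n := by
    rw [hT, Finset.sum_biUnion hdisj]
    congr 1
    ext i
    rw [Finset.sum_image]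
    intro x hx y hy hxy
    simp only [hg] at hxy
    have : (a : ℤ) * (x : ℤ) = (a : ℤ) * (y : ℤ) := by ring_nf at hxy ⊢; linarith
    have hxy' : (x : ℤ) = y := by
      have haa : (a : ℤ) ≠ 0 := by omega
      exact mul_left_cancel₀ haa this
    exact_mod_cast hxy'
  -- size as a finite sum
  have hsize : (lam.size : ℤ) = ∑ j ∈ Finset.range N, (lam.parts j : ℤ) := by
    have hsupp : Function.support lam.parts ⊆ (Finset.range N : Set ℕ) := by
      intro j hj
      simp only [Function.mem_support] at hj
      simp only [Finset.coe_range, Set.mem_Iio]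
      by_contra hcon
      push_neg at hcon
      exact hj (hzero j hcon)
    rw [PartitionSeq.size, finsum_eq_sum_of_support_subset _ hsupp]
    push_cast
    rfl
  have hmain : (lam.size : ℤ) = (∑ x ∈ T, x) + ∑ j ∈ Finset.range N, ((j : ℤ) + 1) := by
    rw [← hST, ← hsumS, hsize, ← Finset.sum_add_distrib]
    apply Finset.sum_congr rfl
    intro j _
    simp only [hβ]
    ring
  -- move to ℚ
  have hmainQ : (lam.size : ℚ) =
      (∑ i : Fin a, ∑ n ∈ Finset.range (t i), ((g i n : ℤ) : ℚ))
        + ((N : ℚ) * ((N : ℚ) - 1) / 2 + (N : ℚ)) := by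
    have := hmain
    rw [hsumT] at this
    have h2 : (lam.size : ℚ) = ((∑ i : Fin a, ∑ n ∈ Finset.range (t i), g i n : ℤ) : ℚ)
        + ((∑ j ∈ Finset.range N, ((j : ℤ) + 1) : ℤ) : ℚ) := by
      exact_mod_cast congrArg (fun z : ℤ => (z : ℚ)) this
    rw [h2]
    push_cast
    congr 1
    rw [show (∑ x ∈ Finset.range N, ((x : ℚ) + 1)) = (∑ x ∈ Finset.range N, (x : ℚ)) + N by
      rw [Finset.sum_add_distrib, Finset.sum_const, Finset.card_range, nsmul_eq_mul, mul_one]]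
    rw [gaussQ]
  -- compute inner sums
  have hinner : ∀ i : Fin a, ∑ n ∈ Finset.range (t i), ((g i n : ℤ) : ℚ) =
      -(a : ℚ) * ((t i : ℚ) * ((t i : ℚ) - 1) / 2)
        + (t i : ℚ) * (-(a : ℚ) * (c i : ℚ) - (i.val : ℚ) - 1) := by
    intro i
    have : ∀ n ∈ Finset.range (t i), ((g i n : ℤ) : ℚ) =
        (-(a : ℚ)) * (n : ℚ) + (-(a : ℚ) * (c i : ℚ) - (i.val : ℚ) - 1) := by
      intro n _
      simp only [hg]
      push_cast
      ring
    rw [Finset.sum_congr rfl this, linsumQ]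
  have htQ : ∀ i : Fin a, (t i : ℚ) = (K : ℚ) - (c i : ℚ) := by
    intro i
    have := htc i
    exact_mod_cast congrArg (fun z : ℤ => (z : ℚ)) this
  have hcQ : ∑ i : Fin a, (c i : ℚ) = 0 := by
    have : ((∑ i, c i : ℤ) : ℚ) = 0 := by rw [hc]; simp
    push_cast at this
    exact this
  have hiQ : ∑ i : Fin a, (i.val : ℚ) = (a : ℚ) * ((a : ℚ) - 1) / 2 := by
    rw [Fin.sum_univ_eq_sum_range (fun i => (i : ℚ)) a, gaussQ]
  -- final algebra
  rw [hmainQ, Finset.sum_congr rfl (fun i _ => hinner i)]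
  have hexpand : ∀ i : Fin a,
      -(a : ℚ) * ((t i : ℚ) * ((t i : ℚ) - 1) / 2)
        + (t i : ℚ) * (-(a : ℚ) * (c i : ℚ) - (i.val : ℚ) - 1) =
      (a : ℚ) / 2 * (c i : ℚ) ^ 2 + (i.val : ℚ) * (c i : ℚ)
        + (1 - (a : ℚ) / 2) * (c i : ℚ) + (-(K : ℚ)) * (i.val : ℚ)
        + (-(K : ℚ) - (a : ℚ) * (K : ℚ) ^ 2 / 2 + (a : ℚ) * (K : ℚ) / 2) := by
    intro i
    rw [htQ i]
    ring
  rw [Finset.sum_congr rfl (fun i _ => hexpand i)]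
  rw [Finset.sum_add_distrib, Finset.sum_add_distrib, Finset.sum_add_distrib,
    Finset.sum_add_distrib]
  rw [← Finset.mul_sum, ← Finset.mul_sum, ← Finset.mul_sum, hcQ, hiQ,
    Finset.sum_const, Finset.card_univ, Fintype.card_fin, nsmul_eq_mul]
  have hNQ : (N : ℚ) = (a : ℚ) * (K : ℚ) := by rw [hN]; push_cast; ring
  rw [hNQ]
  ring
end

section
/- Let a, b ≥ 1 be integers and c = (c_0, …, c_{a−1}) ∈ ℤ^a with c_0 + ⋯ + c_{a−1} = 0. Then the a-core core_a(c) is a b-core if and only if for every i ∈ {0, …, a−1} one has c_{(i+b) mod a} − c_i ≤ ⌊(b+i)/a⌋. -/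
section Aux

variable (lam : PartitionSeq)

lemma conjFin (j : ℕ) : {i | j < lam.parts i}.Finite := by
  obtain ⟨N, hN⟩ := lam.eventually_zero
  apply Set.Finite.subset (Set.finite_Iio N)
  intro i hi
  simp only [Set.mem_setOf_eq] at hi
  simp only [Set.mem_Iio]
  by_contra h
  push_neg at h
  have := lam.antitone h
  omega

lemma lt_conj (i j : ℕ) : j < lam.parts i ↔ i < lam.conjParts j := by
  have hfin := conjFin lam j
  constructor
  · intro h
    have hsub : Set.Iic i ⊆ {i' | j < lam.parts i'} := fun i' hi' =>
      lt_of_lt_of_le h (lam.antitone hi')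
    have hle := Set.ncard_le_ncard hsub hfin
    rw [← Finset.coe_Iic, Set.ncard_coe_finset, Nat.card_Iic] at hle
    have : lam.conjParts j = Set.ncard {i' | j < lam.parts i'} := rfl
    omega
  · intro h
    by_contra hc
    push_neg at hc
    have hsub : {i' | j < lam.parts i'} ⊆ Set.Iio i := by
      intro i' hi'
      simp only [Set.mem_setOf_eq] at hi'
      simp only [Set.mem_Iio]
      by_contra h2
      push_neg at h2
      have := lam.antitone h2
      omega
    have hle := Set.ncard_le_ncard hsub (Set.finite_Iio i)
    rw [← Finset.coe_range, Set.ncard_coe_finset, Finset.card_range] at hle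
    have : lam.conjParts j = Set.ncard {i' | j < lam.parts i'} := rfl
    omega

lemma conj_anti {j j' : ℕ} (h : j ≤ j') : lam.conjParts j' ≤ lam.conjParts j := by
  by_contra hc
  push_neg at hc
  have h1 : lam.conjParts j < lam.conjParts j' := hc
  have h2 : j' < lam.parts (lam.conjParts j) := (lt_conj lam _ j').mpr h1
  have h3 : j < lam.parts (lam.conjParts j) := lt_of_le_of_lt h h2
  have h4 := (lt_conj lam (lam.conjParts j) j).mp h3
  omega

lemma notmem_beta (j : ℕ) : ((j : ℤ) - lam.conjParts j) ∉ lam.betaSet := by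
  rintro ⟨k, hk⟩
  simp only at hk
  rcases lt_or_ge j (lam.parts k) with h | h
  · have h2 := (lt_conj lam k j).mp h
    have hj : (j : ℤ) < lam.parts k := by exact_mod_cast h
    have hk2 : (k : ℤ) < lam.conjParts j := by exact_mod_cast h2
    omega
  · have h2 : ¬ (k < lam.conjParts j) := fun hh => by
      have := (lt_conj lam k j).mpr hh; omega
    push_neg at h2
    have hj : (lam.parts k : ℤ) ≤ j := by exact_mod_cast h
    have hk2 : (lam.conjParts j : ℤ) ≤ k := by exact_mod_cast h2
    omega

lemma exists_of_notmem (y : ℤ) (hy : y ∉ lam.betaSet) :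
    ∃ j : ℕ, y = (j : ℤ) - lam.conjParts j := by
  classical
  have h0 : -(lam.conjParts 0 : ℤ) ≤ y := by
    by_contra h
    push_neg at h
    apply hy
    refine ⟨(-y - 1).toNat, ?_⟩
    have hk : ((-y - 1).toNat : ℤ) = -y - 1 := Int.toNat_of_nonneg (by omega)
    have hge : lam.conjParts 0 ≤ (-y - 1).toNat := by omega
    have hz : lam.parts ((-y - 1).toNat) = 0 := by
      by_contra hz
      have h1 : 0 < lam.parts ((-y - 1).toNat) := Nat.pos_of_ne_zero hz
      have := (lt_conj lam ((-y - 1).toNat) 0).mp h1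
      omega
    simp only [hz]
    push_cast
    omega
  set M := (y + lam.conjParts 0).toNat with hM
  set P : ℕ → Prop := fun j => (j : ℤ) - lam.conjParts j ≤ y with hPdef
  have hP0 : P 0 := by simp only [hPdef]; push_cast; omega
  set j := Nat.findGreatest P M with hj_def
  have hj : P j := Nat.findGreatest_spec (Nat.zero_le M) hP0
  have hj1 : ¬ P (j + 1) := by
    by_cases hle : j + 1 ≤ M
    · exact Nat.findGreatest_is_greatest (Nat.lt_succ_self _) hle
    · push_neg at hle
      have hmono : lam.conjParts (j + 1) ≤ lam.conjParts 0 := conj_anti lam (Nat.zero_le _)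
      have hMy : y + (lam.conjParts 0 : ℤ) ≤ (M : ℤ) := Int.self_le_toNat _
      intro hP
      simp only [hPdef] at hP
      have : ((j : ℤ) + 1) - lam.conjParts (j + 1) ≤ y := by push_cast at hP ⊢; omega
      omega
  simp only [hPdef] at hj hj1
  push_neg at hj1
  rcases eq_or_lt_of_le hj with heq | hlt
  · exact ⟨j, heq.symm⟩
  · exfalso
    apply hy
    set k := ((j : ℤ) - y).toNat with hkdef
    have hknn : (0 : ℤ) ≤ (j : ℤ) - y := by
      have := conj_anti lam (Nat.le_succ j)
      push_cast at hj1
      omega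
    have hk : (k : ℤ) = (j : ℤ) - y := Int.toNat_of_nonneg hknn
    have hk1 : k < lam.conjParts j := by
      have : (k : ℤ) < lam.conjParts j := by omega
      exact_mod_cast this
    have hk2 : lam.conjParts (j + 1) ≤ k := by
      have : (lam.conjParts (j + 1) : ℤ) ≤ k := by push_cast at hj1 ⊢; omega
      exact_mod_cast this
    have hp1 : j < lam.parts k := (lt_conj lam k j).mpr hk1
    have hp2 : ¬ (j + 1 < lam.parts k) := fun hh => by
      have := (lt_conj lam k (j + 1)).mp hh; omega
    push_neg at hp2
    have hpk : lam.parts k = j + 1 := by omega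
    refine ⟨k, ?_⟩
    simp only [hpk]
    push_cast
    omega

lemma hook_eq {i j : ℕ} (h : j < lam.parts i) :
    lam.hook i j = (lam.parts i - j) + (lam.conjParts j - (i + 1)) := by
  have hset : {i' : ℕ | i < i' ∧ j < lam.parts i'} = Set.Ico (i + 1) (lam.conjParts j) := by
    ext i'
    simp only [Set.mem_setOf_eq, Set.mem_Ico, lt_conj lam i' j]
    omega
  unfold PartitionSeq.hook
  rw [hset, ← Finset.coe_Ico, Set.ncard_coe_finset, Nat.card_Ico]

lemma isCore_iff (b : ℕ) (hb : 1 ≤ b) :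
    lam.IsCore b ↔ ∀ x ∈ lam.betaSet, x - b ∈ lam.betaSet := by
  constructor
  · intro h x hx
    obtain ⟨i, hi⟩ := hx
    simp only at hi
    by_contra hxb
    obtain ⟨j, hj⟩ := exists_of_notmem lam (x - b) hxb
    have hji : j < lam.parts i := by
      by_contra hc
      push_neg at hc
      have hmu : lam.conjParts j ≤ i := by
        by_contra h2
        push_neg at h2
        have := (lt_conj lam i j).mpr h2
        omega
      have c1 : (lam.parts i : ℤ) ≤ j := by exact_mod_cast hc
      have c2 : (lam.conjParts j : ℤ) ≤ i := by exact_mod_cast hmu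
      omega
    have himu := (lt_conj lam i j).mp hji
    have hhook := hook_eq lam hji
    have : lam.hook i j = b := by
      have hcast : (lam.hook i j : ℤ) = (lam.parts i : ℤ) - j + lam.conjParts j - i - 1 := by
        rw [hhook]; push_cast [hji.le, himu]; omega
      have : (lam.hook i j : ℤ) = b := by omega
      exact_mod_cast this
    exact h i j hji this
  · intro h i j hji hhook
    have hx : ((lam.parts i : ℤ) - (i + 1)) ∈ lam.betaSet := ⟨i, rfl⟩
    have hxb := h _ hx
    have himu := (lt_conj lam i j).mp hji
    have hhook' := hook_eq lam hji
    have hcast : (b : ℤ) = (lam.parts i : ℤ) - j + lam.conjParts j - i - 1 := by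
      rw [← hhook, hhook']; push_cast [hji.le, himu]; omega
    have : (lam.parts i : ℤ) - (i + 1) - b = (j : ℤ) - lam.conjParts j := by omega
    rw [this] at hxb
    exact notmem_beta lam j hxb

end Aux

/-- `core_a(c)` is a `b`-core iff `c_{(i+b) mod a} − c_i ≤ ⌊(b+i)/a⌋` for all `i`. -/
theorem stmt2 (a b : ℕ) (ha : 1 ≤ a) (hb : 1 ≤ b) (c : Fin a → ℤ) (hc : (∑ i, c i) = 0)
    (lam : PartitionSeq) (hlam : lam.betaSet = Bset a c) :
    lam.IsCore b ↔
      ∀ i : Fin a, c ⟨(i.val + b) % a, Nat.mod_lt _ ha⟩ - c i ≤ (((b + i.val) / a : ℕ) : ℤ) := by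
  have ha0 : (a : ℤ) ≠ 0 := by positivity
  rw [isCore_iff lam b hb, hlam]
  constructor
  · intro h i
    set i' : Fin a := ⟨(i.val + b) % a, Nat.mod_lt _ ha⟩ with hi'def
    set q : ℕ := (i.val + b) / a with hqdef
    have hdm' : (a : ℤ) * q + i'.val = i.val + b := by
      exact_mod_cast Nat.div_add_mod (i.val + b) a
    have hx : (-(a : ℤ) * c i - i.val - 1) ∈ Bset a c := ⟨i, 0, by push_cast; ring⟩
    obtain ⟨j, n, hxb⟩ := h _ hx
    have h1 : ((i.val : ℤ) + b - j.val) = a * (c j + n - c i) := by linear_combination -hxb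
    have h2 : (a : ℤ) ∣ ((i'.val : ℤ) - j.val) :=
      ⟨c j + n - c i - q, by linear_combination h1 + hdm'⟩
    have hia : (i'.val : ℤ) < a := by exact_mod_cast i'.isLt
    have hja : (j.val : ℤ) < a := by exact_mod_cast j.isLt
    have h3 : (i'.val : ℤ) - j.val = 0 := by
      refine Int.eq_zero_of_abs_lt_dvd h2 ?_
      rw [abs_lt]
      constructor <;> omega
    have hji : j = i' := by
      apply Fin.ext
      omega
    subst hji
    have h4 : (a : ℤ) * q = a * (c i' + n - c i) := by linear_combination hdm' + h1
    have h5 : (q : ℤ) = c i' + n - c i := mul_left_cancel₀ ha0 h4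
    have hq' : ((b + i.val) / a) = q := by rw [Nat.add_comm]
    rw [hq']
    show c i' - c i ≤ (q : ℤ)
    omega
  · rintro hP x ⟨i, n, hx⟩
    set i' : Fin a := ⟨(i.val + b) % a, Nat.mod_lt _ ha⟩ with hi'def
    set q : ℕ := (i.val + b) / a with hqdef
    have hdm' : (a : ℤ) * q + i'.val = i.val + b := by
      exact_mod_cast Nat.div_add_mod (i.val + b) a
    have hPi := hP i
    have hq' : ((b + i.val) / a) = q := by rw [Nat.add_comm]
    rw [hq'] at hPi
    have hPi' : c i' - c i ≤ (q : ℤ) := hPi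
    set n' : ℕ := (c i - c i' + q + n).toNat with hn'def
    have hn' : (n' : ℤ) = c i - c i' + q + n := Int.toNat_of_nonneg (by omega)
    refine ⟨i', n', ?_⟩
    rw [hx, hn']
    linear_combination hdm'
end

section
/- Let a, b ≥ 1 be coprime integers. Let k be an integer chosen as follows: if a is odd, k ≡ −(b+1)(a+1)/2 (mod a); if a is even (so b is odd), k ≡ −(b+1)/2 (mod a). For c = (c_0, …, c_{a−1}) ∈ ℤ^a with Σ c_i = 0 set x_i = c_i + i/a − (a−1)/(2a) for 0 ≤ i ≤ a−1, and define z_i = x_{(ib+k) mod a} − x_{((i+1)b+k) mod a} + b/a for 0 ≤ i ≤ a−1 (all indices reduced modulo a into {0, …, a−1}). Then c ↦ (z_0, …, z_{a−1}) is a bijection from { c ∈ ℤ^a : Σ c_i = 0 and c_{(i+b) mod a} − c_i ≤ ⌊(b+i)/a⌋ for all 0 ≤ i ≤ a−1 } onto { z ∈ ℕ^a : Σ_{i=0}^{a−1} z_i = b and Σ_{i=0}^{a−1} i·z_i ≡ 0 (mod a) }. -/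
/-- Reduction of an integer modulo `a` into `Fin a`. -/
def idxZ (a : ℕ) (ha : 0 < a) (t : ℤ) : Fin a :=
  ⟨(t % (a : ℤ)).toNat, by
    have hne : (a : ℤ) ≠ 0 := by exact_mod_cast ha.ne'
    have h0 : (0 : ℤ) ≤ t % (a : ℤ) := Int.emod_nonneg t hne
    have h1 : t % (a : ℤ) < (a : ℤ) := Int.emod_lt_of_pos t (by exact_mod_cast ha)
    omega⟩

/-- The shifted coordinates `x_i = c_i + i/a − (a−1)/(2a)`. -/
def xcoord (a : ℕ) (c : Fin a → ℤ) (i : Fin a) : ℚ :=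
  (c i : ℚ) + (i.val : ℚ) / a - ((a : ℚ) - 1) / (2 * a)

def nxtF (a b : ℕ) (ha : 0 < a) (j : Fin a) : Fin a := ⟨(j.val + b) % a, Nat.mod_lt _ ha⟩

def sigF (a b : ℕ) (ha : 0 < a) (k : ℤ) (i : Fin a) : Fin a := idxZ a ha ((i.val : ℤ) * b + k)

def qF (a b : ℕ) (j : Fin a) : ℕ := (b + j.val) / a

lemma idxZ_val (a : ℕ) (ha : 0 < a) (t : ℤ) : ((idxZ a ha t).val : ℤ) = t % a :=
  Int.toNat_of_nonneg (Int.emod_nonneg t (by exact_mod_cast ha.ne'))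

lemma idxZ_congr (a : ℕ) (ha : 0 < a) {s t : ℤ} (h : (a:ℤ) ∣ s - t) :
    idxZ a ha s = idxZ a ha t := by
  have hm : s % (a:ℤ) = t % a := Int.ModEq.symm (Int.modEq_iff_dvd.mpr h)
  exact Fin.ext (by simp [idxZ, hm])

lemma idxZ_step (a b : ℕ) (ha : 0 < a) (t : ℤ) :
    idxZ a ha (t + b) = nxtF a b ha (idxZ a ha t) := by
  have h1 : idxZ a ha (t + b) = idxZ a ha ((((idxZ a ha t).val + b : ℕ) : ℤ)) := by
    apply idxZ_congr
    refine ⟨t / a, ?_⟩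
    have hv := idxZ_val a ha t
    push_cast
    rw [hv, Int.emod_def]
    ring
  rw [h1]
  apply Fin.ext
  show ((( ((idxZ a ha t).val + b : ℕ) : ℤ)) % (a:ℤ)).toNat = _
  rw [← Int.natCast_mod, Int.toNat_natCast]
  rfl

lemma qF_spec (a b : ℕ) (ha : 0 < a) (j : Fin a) :
    (a:ℤ) * qF a b j + ((nxtF a b ha j).val : ℤ) = b + j.val := by
  have hn : a * qF a b j + (nxtF a b ha j).val = b + j.val := by
    show a * ((b + j.val) / a) + (j.val + b) % a = b + j.val
    rw [Nat.add_comm j.val b]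
    exact Nat.div_add_mod _ _
  exact_mod_cast hn

lemma nxt_sig (a b : ℕ) (ha : 0 < a) [NeZero a] (k : ℤ) (i : Fin a) :
    nxtF a b ha (sigF a b ha k i) = sigF a b ha k (i + 1) := by
  have h1 : sigF a b ha k (i + 1) = idxZ a ha ((i.val : ℤ) * b + k + b) := by
    apply idxZ_congr
    have hv : ((i+1 : Fin a).val : ℤ) = (i.val + 1) - a * (((i.val : ℤ) + 1)/a) := by
      have h : (i+1 : Fin a).val = (i.val + 1) % a := by
        simp [Fin.val_add, Fin.val_one', Nat.add_mod]
      rw [h, Int.natCast_mod]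
      push_cast
      rw [Int.emod_def]
    refine ⟨-(((i.val:ℤ) + 1)/a * b), ?_⟩
    show ((i+1 : Fin a).val : ℤ) * b + k - ((i.val : ℤ) * b + k + b) = _
    rw [hv]
    ring
  rw [h1, idxZ_step a b ha ((i.val : ℤ) * b + k)]
  rfl

lemma sig_inj (a b : ℕ) (ha : 0 < a) (hab : Nat.Coprime a b) (k : ℤ) :
    Function.Injective (sigF a b ha k) := by
  intro s t h
  have hv : ((s.val:ℤ) * b + k) % a = ((t.val:ℤ) * b + k) % a := by
    have := congrArg (fun j : Fin a => (j.val : ℤ)) h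
    simpa [sigF, idxZ_val] using this
  have hd : (a:ℤ) ∣ ((t.val : ℤ) - s.val) * b := by
    have h2 : (a:ℤ) ∣ ((t.val:ℤ) * b + k) - ((s.val:ℤ) * b + k) := Int.ModEq.dvd hv
    have h3 : ((t.val:ℤ) * b + k) - ((s.val:ℤ) * b + k) = ((t.val : ℤ) - s.val) * b := by ring
    rwa [h3] at h2
  have hco : IsCoprime (a:ℤ) (b:ℤ) := Int.isCoprime_iff_gcd_eq_one.mpr (by exact_mod_cast hab)
  have h4 : (a:ℤ) ∣ (t.val : ℤ) - s.val := hco.dvd_of_dvd_mul_right hd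
  have hs : (s.val:ℤ) < a := by exact_mod_cast s.isLt
  have ht : (t.val:ℤ) < a := by exact_mod_cast t.isLt
  have h5 : ((t.val:ℤ) - s.val) = 0 := by
    refine Int.eq_zero_of_abs_lt_dvd h4 (abs_lt.mpr ⟨?_, ?_⟩)
    · have : (0:ℤ) ≤ t.val := by positivity
      linarith
    · have : (0:ℤ) ≤ s.val := by positivity
      linarith
  exact Fin.ext (by exact_mod_cast (by linarith : (s.val:ℤ) = (t.val:ℤ)))

lemma nxt_inj (a b : ℕ) (ha : 0 < a) : Function.Injective (nxtF a b ha) := by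
  intro s t h
  have hv : (s.val + b) % a = (t.val + b) % a := congrArg Fin.val h
  have h2 : s.val % a = t.val % a := Nat.ModEq.add_right_cancel' b hv
  rw [Nat.mod_eq_of_lt s.isLt, Nat.mod_eq_of_lt t.isLt] at h2
  exact Fin.ext h2

lemma KP (a b : ℕ) (ha : 0 < a) [NeZero a] (k : ℤ) (c : Fin a → ℤ) (i : Fin a) :
    xcoord a c (idxZ a ha ((i.val : ℤ) * b + k)) -
      xcoord a c (idxZ a ha (((i.val : ℤ) + 1) * b + k)) + (b : ℚ) / a
    = ((c (sigF a b ha k i) - c (sigF a b ha k (i+1)) + qF a b (sigF a b ha k i) : ℤ) : ℚ) := by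
  have h1 : idxZ a ha (((i.val : ℤ) + 1) * b + k) = sigF a b ha k (i + 1) := by
    rw [← nxt_sig a b ha k i,
      show ((i.val : ℤ) + 1) * b + k = ((i.val : ℤ) * b + k) + b by ring,
      idxZ_step a b ha ((i.val : ℤ) * b + k)]
    rfl
  rw [h1, ← nxt_sig a b ha k i]
  have haQ : (a:ℚ) ≠ 0 := by exact_mod_cast ha.ne'
  set j := sigF a b ha k i with hj
  have hval : (((nxtF a b ha j).val : ℚ)) = b + j.val - a * qF a b j := by
    have hq := qF_spec a b ha j
    have h2 : (((a:ℤ) * qF a b j + ((nxtF a b ha j).val : ℤ) : ℤ) : ℚ) = ((b:ℚ) + j.val) := by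
      rw [hq]; push_cast; ring
    push_cast at h2
    linarith
  show xcoord a c j - xcoord a c (nxtF a b ha j) + (b:ℚ)/a = _
  rw [xcoord, xcoord, hval]
  push_cast
  field_simp
  ring

lemma sum_shift (a : ℕ) [NeZero a] {M : Type*} [AddCommMonoid M] (g : Fin a → M) :
    ∑ s, g (s+1) = ∑ s, g s :=
  Fintype.sum_equiv (Equiv.addRight 1) _ _ (fun _ => rfl)

lemma sum_weighted_shift (a : ℕ) (ha : 0 < a) [NeZero a] (g : Fin a → ℤ) :
    ∑ s : Fin a, (s.val:ℤ) * g (s+1) =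
      ∑ s : Fin a, (s.val:ℤ) * g s - ∑ s : Fin a, g s + a * g 0 := by
  obtain ⟨L, hL⟩ : ∃ L : Fin a, L.val = a - 1 := ⟨⟨a-1, Nat.sub_lt ha Nat.one_pos⟩, rfl⟩
  have e1 : ∑ s : Fin a, ((s+1 : Fin a).val : ℤ) * g (s+1) = ∑ s : Fin a, (s.val:ℤ) * g s :=
    Fintype.sum_equiv (Equiv.addRight 1) _ _ (fun _ => rfl)
  have e0 : ∑ s : Fin a, g (s+1) = ∑ s : Fin a, g s := sum_shift a g
  have hv : ∀ s : Fin a, (s+1 : Fin a).val = (s.val + 1) % a := fun s => by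
    simp [Fin.val_add, Fin.val_one', Nat.add_mod]
  have last1 : L + 1 = 0 := by
    apply Fin.ext
    rw [hv, hL, show a - 1 + 1 = a by omega, Nat.mod_self, Fin.val_zero]
  have hsplit : ∀ s : Fin a, (s.val:ℤ) * g (s+1)
      = ((s+1 : Fin a).val : ℤ) * g (s+1) - g (s+1)
        + (if s = L then (a:ℤ) * g (s+1) else 0) := by
    intro s
    by_cases hs : s.val + 1 < a
    · have hvv : (s+1 : Fin a).val = s.val + 1 := by rw [hv, Nat.mod_eq_of_lt hs]
      have hsL : s ≠ L := fun hcon => by rw [hcon, hL] at hs; omega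
      rw [hvv, if_neg hsL]
      push_cast
      ring
    · have ha1 : s.val = a - 1 := by have := s.isLt; omega
      have hseq : s = L := Fin.ext (by rw [ha1, hL])
      have hvv : (s+1 : Fin a).val = 0 := by
        rw [hv, show s.val + 1 = a by have := s.isLt; omega, Nat.mod_self]
      rw [hvv, if_pos hseq]
      have hcast : (s.val : ℤ) = (a:ℤ) - 1 := by
        have := s.isLt
        omega
      rw [hcast]
      push_cast
      ring
  rw [Finset.sum_congr rfl (fun s _ => hsplit s), Finset.sum_add_distrib,
    Finset.sum_sub_distrib, e1, e0]
  congr 1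
  rw [Finset.sum_ite_eq' Finset.univ L (fun s => (a:ℤ) * g (s+1))]
  simp [last1]

lemma sumT (a : ℕ) (ha : 0 < a) : 2 * (∑ s : Fin a, (s.val:ℤ)) = a * ((a:ℤ) - 1) := by
  have h1 : (∑ i ∈ Finset.range a, i) * 2 = a * (a - 1) := Finset.sum_range_id_mul_two a
  have h2 : ∑ s : Fin a, (s.val:ℤ) = ((∑ i ∈ Finset.range a, i : ℕ) : ℤ) := by
    rw [Nat.cast_sum]
    exact Fin.sum_univ_eq_sum_range (fun i => (i:ℤ)) a
  have h3 : ((a * (a-1) : ℕ) : ℤ) = (a:ℤ) * ((a:ℤ) - 1) := by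
    push_cast [Nat.cast_sub (by omega : 1 ≤ a)]
    ring
  rw [h2, ← h3, ← h1]
  push_cast
  ring

lemma qF_sum (a b : ℕ) (ha : 0 < a) : ∑ j : Fin a, (qF a b j : ℤ) = b := by
  have hnxtbij : Function.Bijective (nxtF a b ha) :=
    Finite.injective_iff_bijective.mp (nxt_inj a b ha)
  have h1 : ∑ j : Fin a, ((nxtF a b ha j).val : ℤ) = ∑ j : Fin a, (j.val : ℤ) :=
    Fintype.sum_bijective _ hnxtbij _ _ (fun _ => rfl)
  have h2 : ∑ j : Fin a, ((a:ℤ) * qF a b j + ((nxtF a b ha j).val:ℤ))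
      = ∑ j : Fin a, ((b:ℤ) + (j.val:ℤ)) :=
    Finset.sum_congr rfl (fun j _ => qF_spec a b ha j)
  rw [Finset.sum_add_distrib, Finset.sum_add_distrib, h1, ← Finset.mul_sum] at h2
  have h4 : ∑ _j : Fin a, (b:ℤ) = (a:ℤ) * b := by
    simp [Finset.sum_const, Finset.card_univ, mul_comm]
  rw [h4] at h2
  have h5 : (a:ℤ) * (∑ j : Fin a, (qF a b j : ℤ)) = (a:ℤ) * b := by linarith
  exact mul_left_cancel₀ (by exact_mod_cast ha.ne' : (a:ℤ) ≠ 0) h5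

lemma fin_add_one_val (a : ℕ) [NeZero a] (s : Fin a) :
    (s+1 : Fin a).val = (s.val + 1) % a := by
  simp [Fin.val_add, Fin.val_one', Nat.add_mod]

lemma exists_M (a b : ℕ) (ha : 0 < a) (hab : Nat.Coprime a b) (k : ℤ)
    (hk_odd : a % 2 = 1 → k ≡ -(((b + 1) * ((a + 1) / 2) : ℕ) : ℤ) [ZMOD (a : ℤ)])
    (hk_even : a % 2 = 0 → k ≡ -((((b + 1) / 2) : ℕ) : ℤ) [ZMOD (a : ℤ)]) :
    ∃ M : ℤ, 2 * M = ((b:ℤ) + 1) * ((a:ℤ) - 1) ∧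
      (a:ℤ) ∣ M - ((idxZ a ha k).val : ℤ) := by
  obtain ⟨p, hp⟩ : ∃ p : ℤ, k - ((idxZ a ha k).val : ℤ) = a * p :=
    ⟨k / a, by rw [idxZ_val, Int.emod_def]; ring⟩
  rcases Nat.mod_two_eq_zero_or_one a with hpar | hpar
  · have hbodd : b % 2 = 1 := by
      rcases Nat.mod_two_eq_zero_or_one b with h | h
      · exfalso
        have h2a : 2 ∣ a := by omega
        have h2b : 2 ∣ b := by omega
        have hg := Nat.dvd_gcd h2a h2b
        rw [hab] at hg
        omega
      · exact h
    obtain ⟨r, hr⟩ := (hk_even hpar).dvd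
    have h2eq : ((((b+1)/2 : ℕ)) : ℤ) * 2 = (b:ℤ) + 1 := by
      have h : ((b+1)/2) * 2 = b + 1 := by omega
      exact_mod_cast h
    refine ⟨(((b+1)/2 : ℕ) : ℤ) * ((a:ℤ) - 1), by linear_combination ((a:ℤ) - 1) * h2eq, ?_⟩
    exact ⟨(((b+1)/2 : ℕ) : ℤ) + r + p, by linear_combination hp + hr⟩
  · obtain ⟨r, hr⟩ := (hk_odd hpar).dvd
    push_cast at hr
    have h2eq : (((a:ℤ)+1)/2) * 2 = (a:ℤ) + 1 := by omega
    refine ⟨((b:ℤ)+1) * (((a:ℤ)+1)/2) - ((b:ℤ)+1),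
      by linear_combination ((b:ℤ)+1) * h2eq, ?_⟩
    exact ⟨(b:ℤ) + 1 + r + p, by linear_combination hp + hr + ((b:ℤ)+1) * h2eq⟩

lemma sig_zero (a b : ℕ) (ha : 0 < a) [NeZero a] (k : ℤ) :
    sigF a b ha k 0 = idxZ a ha k := by
  apply idxZ_congr
  simp

lemma qF_sig_weighted (a b : ℕ) (ha : 0 < a) [NeZero a] (hab : Nat.Coprime a b) (k : ℤ)
    (M : ℤ) (hM2 : 2 * M = ((b:ℤ) + 1) * ((a:ℤ) - 1)) :
    ∑ s : Fin a, (s.val:ℤ) * (qF a b (sigF a b ha k s) : ℤ)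
      = M - ((idxZ a ha k).val : ℤ) := by
  have hσ : Function.Bijective (sigF a b ha k) :=
    Finite.injective_iff_bijective.mp (sig_inj a b ha hab k)
  have hvsum : ∑ s : Fin a, (((sigF a b ha k s).val : ℤ)) = ∑ j : Fin a, (j.val:ℤ) :=
    Fintype.sum_bijective _ hσ _ _ (fun _ => rfl)
  have hT := sumT a ha
  have haM : (a:ℤ) * M = ((b:ℤ)+1) * (∑ s : Fin a, (s.val:ℤ)) := by
    have h1 : 2 * ((a:ℤ) * M) = 2 * (((b:ℤ)+1) * (∑ s : Fin a, (s.val:ℤ))) := by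
      linear_combination (a:ℤ) * hM2 - ((b:ℤ)+1) * hT
    linarith
  have key : (a:ℤ) * (∑ s : Fin a, (s.val:ℤ) * (qF a b (sigF a b ha k s) : ℤ))
      = (a:ℤ) * (M - ((idxZ a ha k).val : ℤ)) := by
    have e1 : ∀ s : Fin a, (a:ℤ) * ((s.val:ℤ) * (qF a b (sigF a b ha k s) : ℤ))
        = (s.val:ℤ) * ((b:ℤ) + ((sigF a b ha k s).val:ℤ))
          - (s.val:ℤ) * (((sigF a b ha k (s+1)).val : ℤ)) := by
      intro s
      have hq := qF_spec a b ha (sigF a b ha k s)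
      rw [nxt_sig a b ha k s] at hq
      linear_combination (s.val:ℤ) * hq
    rw [Finset.mul_sum, Finset.sum_congr rfl (fun s _ => e1 s), Finset.sum_sub_distrib]
    have e2 : ∑ s : Fin a, (s.val:ℤ) * (((sigF a b ha k (s+1)).val : ℤ))
        = ∑ s : Fin a, (s.val:ℤ) * (((sigF a b ha k s).val : ℤ))
          - ∑ s : Fin a, (((sigF a b ha k s).val : ℤ))
          + a * (((sigF a b ha k 0).val : ℤ)) :=
      sum_weighted_shift a ha (fun s => ((sigF a b ha k s).val : ℤ))
    have e3 : ∑ s : Fin a, (s.val:ℤ) * ((b:ℤ) + ((sigF a b ha k s).val:ℤ))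
        = (b:ℤ) * (∑ s : Fin a, (s.val:ℤ))
          + ∑ s : Fin a, (s.val:ℤ) * (((sigF a b ha k s).val:ℤ)) := by
      rw [Finset.mul_sum, ← Finset.sum_add_distrib]
      exact Finset.sum_congr rfl (fun s _ => by ring)
    rw [e2, e3, hvsum, sig_zero a b ha k]
    linear_combination -haM
  exact mul_left_cancel₀ (by exact_mod_cast ha.ne' : (a:ℤ) ≠ 0) key

lemma C1 (a b : ℕ) (ha : 0 < a) [NeZero a] (hab : Nat.Coprime a b) (k : ℤ)
    (c : Fin a → ℤ) :
    ∑ s : Fin a, (c (sigF a b ha k s) - c (sigF a b ha k (s+1))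
      + (qF a b (sigF a b ha k s) : ℤ)) = b := by
  have hσ : Function.Bijective (sigF a b ha k) :=
    Finite.injective_iff_bijective.mp (sig_inj a b ha hab k)
  have h1 : ∑ s : Fin a, c (sigF a b ha k (s+1)) = ∑ s : Fin a, c (sigF a b ha k s) :=
    sum_shift a (fun s => c (sigF a b ha k s))
  have h2 : ∑ s : Fin a, (qF a b (sigF a b ha k s) : ℤ) = ∑ j : Fin a, (qF a b j : ℤ) :=
    Fintype.sum_bijective _ hσ _ _ (fun _ => rfl)
  rw [Finset.sum_add_distrib, Finset.sum_sub_distrib, h1, h2, qF_sum a b ha]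
  ring

lemma C2 (a b : ℕ) (ha : 0 < a) [NeZero a] (hab : Nat.Coprime a b) (k : ℤ)
    (M : ℤ) (hM2 : 2 * M = ((b:ℤ)+1) * ((a:ℤ)-1))
    (c : Fin a → ℤ) (hc0 : ∑ i, c i = 0) :
    ∑ s : Fin a, (s.val:ℤ) * (c (sigF a b ha k s) - c (sigF a b ha k (s+1))
        + (qF a b (sigF a b ha k s) : ℤ))
      = -(a:ℤ) * c (idxZ a ha k) + (M - ((idxZ a ha k).val : ℤ)) := by
  have hσ : Function.Bijective (sigF a b ha k) :=
    Finite.injective_iff_bijective.mp (sig_inj a b ha hab k)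
  have h1 : ∑ s : Fin a, (s.val:ℤ) * c (sigF a b ha k (s+1))
      = ∑ s : Fin a, (s.val:ℤ) * c (sigF a b ha k s) - ∑ s : Fin a, c (sigF a b ha k s)
        + a * c (sigF a b ha k 0) :=
    sum_weighted_shift a ha (fun s => c (sigF a b ha k s))
  have h2 : ∑ s : Fin a, c (sigF a b ha k s) = 0 := by
    rw [Fintype.sum_bijective _ hσ (fun s => c (sigF a b ha k s)) c (fun _ => rfl)]
    exact hc0
  have h3 := qF_sig_weighted a b ha hab k M hM2
  have split : ∑ s : Fin a, (s.val:ℤ) * (c (sigF a b ha k s) - c (sigF a b ha k (s+1))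
        + (qF a b (sigF a b ha k s) : ℤ))
      = (∑ s : Fin a, (s.val:ℤ) * c (sigF a b ha k s))
        - (∑ s : Fin a, (s.val:ℤ) * c (sigF a b ha k (s+1)))
        + ∑ s : Fin a, (s.val:ℤ) * (qF a b (sigF a b ha k s) : ℤ) := by
    rw [← Finset.sum_sub_distrib, ← Finset.sum_add_distrib]
    exact Finset.sum_congr rfl (fun s _ => by ring)
  rw [split, h1, h2, h3, sig_zero a b ha k]
  ring

/-- `c ↦ z` is a bijection from the lattice points of the simplex of
`(a,b)`-cores onto `{z ∈ ℕ^a : Σ z_i = b, Σ i·z_i ≡ 0 (mod a)}`. -/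
theorem stmt3 (a b : ℕ) (ha : 0 < a) (hb : 0 < b) (hab : Nat.Coprime a b) (k : ℤ)
    (hk_odd : a % 2 = 1 → k ≡ -(((b + 1) * ((a + 1) / 2) : ℕ) : ℤ) [ZMOD (a : ℤ)])
    (hk_even : a % 2 = 0 → k ≡ -((((b + 1) / 2) : ℕ) : ℤ) [ZMOD (a : ℤ)]) :
    Set.BijOn
      (fun c : Fin a → ℤ => fun i : Fin a =>
        xcoord a c (idxZ a ha ((i.val : ℤ) * b + k)) -
          xcoord a c (idxZ a ha (((i.val : ℤ) + 1) * b + k)) + (b : ℚ) / a)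
      {c : Fin a → ℤ | (∑ i, c i) = 0 ∧ ∀ i : Fin a,
        c ⟨(i.val + b) % a, Nat.mod_lt _ ha⟩ - c i ≤ (((b + i.val) / a : ℕ) : ℤ)}
      {z : Fin a → ℚ | (∀ i, ∃ n : ℕ, z i = n) ∧ (∑ i, z i) = b ∧
        ∃ m : ℤ, (∑ i : Fin a, (i.val : ℚ) * z i) = (a : ℚ) * (m : ℚ)} := by
  haveI : NeZero a := ⟨ha.ne'⟩
  obtain ⟨M, hM2, hMd⟩ := exists_M a b ha hab k hk_odd hk_even
  obtain ⟨u, hu⟩ := hMd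
  have hσ : Function.Bijective (sigF a b ha k) :=
    Finite.injective_iff_bijective.mp (sig_inj a b ha hab k)
  have hnx : ∀ i : Fin a, (⟨((sigF a b ha k i).val + b) % a, Nat.mod_lt _ ha⟩ : Fin a)
      = sigF a b ha k (i+1) := fun i => nxt_sig a b ha k i
  refine ⟨?_, ?_, ?_⟩
  · -- MapsTo
    rintro c ⟨hc0, hcle⟩
    have hnn : ∀ i : Fin a, (0:ℤ) ≤ c (sigF a b ha k i) - c (sigF a b ha k (i+1))
        + (qF a b (sigF a b ha k i) : ℤ) := by
      intro i
      have h := hcle (sigF a b ha k i)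
      rw [hnx i] at h
      have h' : c (sigF a b ha k (i+1)) - c (sigF a b ha k i)
          ≤ (qF a b (sigF a b ha k i) : ℤ) := h
      linarith
    simp only [Set.mem_setOf_eq]
    refine ⟨fun i => ?_, ?_, ?_⟩
    · refine ⟨(c (sigF a b ha k i) - c (sigF a b ha k (i+1))
        + (qF a b (sigF a b ha k i) : ℤ)).toNat, ?_⟩
      rw [KP a b ha k c i]
      exact_mod_cast (Int.toNat_of_nonneg (hnn i)).symm
    · calc ∑ i : Fin a, (xcoord a c (idxZ a ha ((i.val : ℤ) * b + k)) -
            xcoord a c (idxZ a ha (((i.val : ℤ) + 1) * b + k)) + (b : ℚ) / a)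
          = ∑ i : Fin a, ((c (sigF a b ha k i) - c (sigF a b ha k (i+1))
              + (qF a b (sigF a b ha k i) : ℤ) : ℤ) : ℚ) :=
            Finset.sum_congr rfl (fun i _ => KP a b ha k c i)
        _ = ((∑ i : Fin a, (c (sigF a b ha k i) - c (sigF a b ha k (i+1))
              + (qF a b (sigF a b ha k i) : ℤ)) : ℤ) : ℚ) := by push_cast; rfl
        _ = (b:ℚ) := by rw [C1 a b ha hab k c]; push_cast; rfl
    · refine ⟨-c (idxZ a ha k) + u, ?_⟩
      calc ∑ i : Fin a, (i.val:ℚ) * (xcoord a c (idxZ a ha ((i.val : ℤ) * b + k)) -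
            xcoord a c (idxZ a ha (((i.val : ℤ) + 1) * b + k)) + (b : ℚ) / a)
          = ∑ i : Fin a, (i.val:ℚ) * ((c (sigF a b ha k i) - c (sigF a b ha k (i+1))
              + (qF a b (sigF a b ha k i) : ℤ) : ℤ) : ℚ) :=
            Finset.sum_congr rfl (fun i _ => by rw [KP a b ha k c i])
        _ = ((∑ i : Fin a, (i.val:ℤ) * (c (sigF a b ha k i) - c (sigF a b ha k (i+1))
              + (qF a b (sigF a b ha k i) : ℤ)) : ℤ) : ℚ) := by push_cast; rfl
        _ = (a:ℚ) * ((-c (idxZ a ha k) + u : ℤ) : ℚ) := by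
            rw [C2 a b ha hab k M hM2 c hc0, hu]
            push_cast
            ring
  · -- InjOn
    rintro c ⟨hc0, -⟩ c' ⟨hc0', -⟩ heq
    have hnn : ∀ i : Fin a, c (sigF a b ha k i) - c (sigF a b ha k (i+1))
        + (qF a b (sigF a b ha k i) : ℤ)
        = c' (sigF a b ha k i) - c' (sigF a b ha k (i+1)) + (qF a b (sigF a b ha k i) : ℤ) := by
      intro i
      have h := congrFun heq i
      have h2 : ((c (sigF a b ha k i) - c (sigF a b ha k (i+1))
          + (qF a b (sigF a b ha k i) : ℤ) : ℤ) : ℚ)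
          = ((c' (sigF a b ha k i) - c' (sigF a b ha k (i+1))
          + (qF a b (sigF a b ha k i) : ℤ) : ℤ) : ℚ) := by
        rw [← KP a b ha k c i, ← KP a b ha k c' i]
        exact h
      exact_mod_cast h2
    have hstep : ∀ i : Fin a, c (sigF a b ha k (i+1)) - c' (sigF a b ha k (i+1))
        = c (sigF a b ha k i) - c' (sigF a b ha k i) := by
      intro i
      have := hnn i
      omega
    have hallv : ∀ v : ℕ, ∀ hv : v < a,
        c (sigF a b ha k ⟨v, hv⟩) - c' (sigF a b ha k ⟨v, hv⟩)
        = c (sigF a b ha k 0) - c' (sigF a b ha k 0) := by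
      intro v
      induction v with
      | zero =>
        intro hv
        have h0 : (⟨0, hv⟩ : Fin a) = 0 := by
          apply Fin.ext
          simp
        rw [h0]
      | succ v ih =>
        intro hv
        have hv' : v < a := by omega
        have hplus : (⟨v, hv'⟩ : Fin a) + 1 = ⟨v+1, hv⟩ := by
          apply Fin.ext
          rw [fin_add_one_val]
          exact Nat.mod_eq_of_lt hv
        rw [← hplus, hstep, ih hv']
    have hconst : ∀ j : Fin a, c j - c' j = c (sigF a b ha k 0) - c' (sigF a b ha k 0) := by
      intro j
      obtain ⟨s, rfl⟩ := hσ.2 j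
      have : (⟨s.val, s.isLt⟩ : Fin a) = s := rfl
      rw [← this]
      exact hallv s.val s.isLt
    have hzero : c (sigF a b ha k 0) - c' (sigF a b ha k 0) = 0 := by
      have hsum : ∑ j : Fin a, (c j - c' j) = 0 := by
        rw [Finset.sum_sub_distrib, hc0, hc0']
        ring
      rw [Finset.sum_congr rfl (fun j _ => hconst j), Finset.sum_const,
        Finset.card_univ, Fintype.card_fin] at hsum
      have hsum' : (a:ℤ) * (c (sigF a b ha k 0) - c' (sigF a b ha k 0)) = 0 := by
        rw [← hsum]
        push_cast
        ring
      rcases mul_eq_zero.mp hsum' with h | h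
      · exact absurd h (by exact_mod_cast ha.ne')
      · exact h
    funext j
    have h := hconst j
    rw [hzero] at h
    omega
  · -- SurjOn
    rintro z ⟨hzn, hzsum, m, hzmod⟩
    choose n hn using hzn
    have hnsumZ : ∑ s : Fin a, (n s : ℤ) = (b:ℤ) := by
      have h : ∑ i : Fin a, ((n i : ℕ) : ℚ) = (b:ℚ) := by
        rw [← hzsum]
        exact Finset.sum_congr rfl (fun i _ => (hn i).symm)
      exact_mod_cast h
    have hnw : ∑ s : Fin a, (s.val:ℤ) * (n s : ℤ) = (a:ℤ) * m := by
      have h : ∑ i : Fin a, (i.val:ℚ) * ((n i : ℕ):ℚ) = (a:ℚ) * (m:ℚ) := by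
        rw [← hzmod]
        exact Finset.sum_congr rfl (fun i _ => by rw [hn i])
      exact_mod_cast h
    have hqsig : ∑ s : Fin a, (qF a b (sigF a b ha k s) : ℤ) = (b:ℤ) := by
      rw [Fintype.sum_bijective _ hσ (fun s => (qF a b (sigF a b ha k s):ℤ))
        (fun j => (qF a b j : ℤ)) (fun _ => rfl)]
      exact qF_sum a b ha
    have hDsum : ∑ s : Fin a, ((n s : ℤ) - (qF a b (sigF a b ha k s) : ℤ)) = 0 := by
      rw [Finset.sum_sub_distrib, hnsumZ, hqsig]
      ring
    have hDw : ∑ s : Fin a, (s.val:ℤ) * ((n s:ℤ) - (qF a b (sigF a b ha k s):ℤ))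
        = (a:ℤ) * (m - u) := by
      have h3 := qF_sig_weighted a b ha hab k M hM2
      have hsplit : ∑ s : Fin a, (s.val:ℤ) * ((n s:ℤ) - (qF a b (sigF a b ha k s):ℤ))
          = ∑ s : Fin a, (s.val:ℤ) * (n s:ℤ)
            - ∑ s : Fin a, (s.val:ℤ) * (qF a b (sigF a b ha k s):ℤ) := by
        rw [← Finset.sum_sub_distrib]
        exact Finset.sum_congr rfl (fun s _ => by ring)
      rw [hsplit, hnw, h3]
      linear_combination -hu
    obtain ⟨D', hD'⟩ : ∃ D' : ℕ → ℤ, ∀ t, D' t =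
        if h : t < a then (n ⟨t,h⟩ : ℤ) - (qF a b (sigF a b ha k ⟨t,h⟩):ℤ) else 0 :=
      ⟨_, fun _ => rfl⟩
    obtain ⟨P, hP⟩ : ∃ P : ℕ → ℤ, ∀ s, P s = ∑ t ∈ Finset.range s, D' t :=
      ⟨_, fun _ => rfl⟩
    have hD'v : ∀ s : Fin a, D' s.val = (n s : ℤ) - (qF a b (sigF a b ha k s):ℤ) := by
      intro s
      rw [hD', dif_pos s.isLt]
    have hPsucc : ∀ t : ℕ, P (t+1) = P t + D' t := by
      intro t
      rw [hP, hP, Finset.sum_range_succ]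
    have hPa : P a = 0 := by
      rw [hP, ← Fin.sum_univ_eq_sum_range D' a,
        Finset.sum_congr rfl (fun s _ => hD'v s)]
      exact hDsum
    have hPw : ∑ t ∈ Finset.range a, (t:ℤ) * D' t = (a:ℤ) * (m - u) := by
      rw [← Fin.sum_univ_eq_sum_range (fun t => (t:ℤ) * D' t) a]
      rw [Finset.sum_congr rfl (fun s _ => by rw [hD'v s])]
      exact hDw
    have hSL : ∀ N : ℕ, ∑ s ∈ Finset.range N, P s
        + ∑ t ∈ Finset.range N, ((t:ℤ)+1) * D' t = (N:ℤ) * P N := by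
      intro N
      induction N with
      | zero => simp
      | succ N ih =>
        rw [Finset.sum_range_succ, Finset.sum_range_succ, hPsucc N]
        push_cast
        linarith [ih]
    have hD0 : ∑ t ∈ Finset.range a, D' t = 0 := by
      rw [← hP]
      exact hPa
    have hPsum : ∑ s ∈ Finset.range a, P s = -(a:ℤ) * (m - u) := by
      have h := hSL a
      rw [hPa] at h
      have hsplit : ∑ t ∈ Finset.range a, ((t:ℤ)+1) * D' t
          = ∑ t ∈ Finset.range a, (t:ℤ) * D' t + ∑ t ∈ Finset.range a, D' t := by
        rw [← Finset.sum_add_distrib]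
        exact Finset.sum_congr rfl (fun t _ => by ring)
      rw [hsplit, hPw, hD0] at h
      linarith
    obtain ⟨E, hE⟩ : ∃ E : Fin a ≃ Fin a, ∀ s, E s = sigF a b ha k s :=
      ⟨Equiv.ofBijective _ hσ, fun _ => rfl⟩
    obtain ⟨c, hc⟩ : ∃ c : Fin a → ℤ, ∀ j, c j = -(m - u) - P ((E.symm j).val) :=
      ⟨_, fun _ => rfl⟩
    have hcσ : ∀ s : Fin a, c (sigF a b ha k s) = -(m-u) - P s.val := by
      intro s
      rw [hc]
      have h1 : E.symm (sigF a b ha k s) = s := by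
        rw [← hE]
        exact E.symm_apply_apply s
      rw [h1]
    have hP2 : ∀ s : Fin a, c (sigF a b ha k s) - c (sigF a b ha k (s+1))
        = (n s : ℤ) - (qF a b (sigF a b ha k s) : ℤ) := by
      intro s
      rw [hcσ s, hcσ (s+1), fin_add_one_val]
      by_cases hs : s.val + 1 < a
      · rw [Nat.mod_eq_of_lt hs, hPsucc s.val]
        linarith [hD'v s]
      · have hsv : s.val + 1 = a := by have := s.isLt; omega
        rw [hsv, Nat.mod_self]
        have h1 := hPsucc s.val
        rw [hsv, hPa] at h1
        have h2 : P 0 = 0 := by rw [hP]; simp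
        rw [h2]
        linarith [hD'v s, h1]
    have hc0 : ∑ i : Fin a, c i = 0 := by
      have h := Fintype.sum_bijective _ hσ (fun s => c (sigF a b ha k s)) c (fun _ => rfl)
      rw [← h, Finset.sum_congr rfl (fun s _ => hcσ s), Finset.sum_sub_distrib]
      have h5 : ∑ s : Fin a, P s.val = -(a:ℤ) * (m - u) := by
        rw [Fin.sum_univ_eq_sum_range P a]
        exact hPsum
      rw [h5, Finset.sum_const, Finset.card_univ, Fintype.card_fin]
      push_cast
      ring
    refine ⟨c, ⟨hc0, ?_⟩, ?_⟩
    · intro j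
      obtain ⟨s, rfl⟩ := hσ.2 j
      rw [hnx s]
      show c (sigF a b ha k (s+1)) - c (sigF a b ha k s) ≤ (qF a b (sigF a b ha k s) : ℤ)
      have hpos : (0:ℤ) ≤ (n s : ℤ) := Int.natCast_nonneg _
      linarith [hP2 s]
    · funext i
      show xcoord a c (idxZ a ha ((i.val : ℤ) * b + k)) -
          xcoord a c (idxZ a ha (((i.val : ℤ) + 1) * b + k)) + (b : ℚ) / a = z i
      rw [KP a b ha k c i, hP2 i, hn i]
      push_cast
      ring
end

section
/- Let a, b ≥ 1 be coprime integers. Then a · #{ (z_0, …, z_{a−1}) ∈ ℕ^a : z_0 + ⋯ + z_{a−1} = b and Σ_{i=0}^{a−1} i·z_i ≡ 0 (mod a) } = C(a+b−1, b), the binomial coefficient; equivalently this cardinality equals (1/(a+b))·C(a+b, a). -/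
open Finset

private def zshift {n : ℕ} (c : Fin (n+1)) (z : Fin (n+1) → ℕ) : Fin (n+1) → ℕ :=
  fun i => z (i - c)

private def zW {n : ℕ} (z : Fin (n+1) → ℕ) : ZMod (n+1) :=
  ∑ i, (i.val : ZMod (n+1)) * (z i : ZMod (n+1))

private lemma zshift_sum {n : ℕ} (c : Fin (n+1)) (z : Fin (n+1) → ℕ) :
    ∑ i, zshift c z i = ∑ i, z i :=
  Fintype.sum_equiv (Equiv.subRight c) _ _ (fun _ => rfl)

private def toFin {n : ℕ} (x : ZMod (n+1)) : Fin (n+1) := ⟨x.val, x.val_lt⟩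

private lemma toFin_val_cast {n : ℕ} (x : ZMod (n+1)) :
    ((toFin x).val : ZMod (n+1)) = x := by
  simp [toFin, ZMod.natCast_val, ZMod.cast_id]

private lemma zW_shift {n b : ℕ} (c : Fin (n+1)) (z : Fin (n+1) → ℕ)
    (hz : ∑ i, z i = b) :
    zW (zshift c z) = zW z + (c.val : ZMod (n+1)) * b := by
  have h1 : zW (zshift c z) = ∑ i, (((i + c : Fin (n+1)).val : ZMod (n+1))) * (z i : ZMod (n+1)) := by
    rw [zW]
    rw [← Equiv.sum_comp (Equiv.addRight c)
      (fun i => ((i.val : ZMod (n+1))) * (zshift c z i : ZMod (n+1)))]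
    refine Finset.sum_congr rfl fun i _ => ?_
    simp [zshift, Equiv.addRight]
  rw [h1]
  have h2 : ∀ i : Fin (n+1), (((i + c : Fin (n+1)).val : ZMod (n+1)))
      = (i.val : ZMod (n+1)) + (c.val : ZMod (n+1)) := by
    intro i
    rw [Fin.val_add, ZMod.natCast_mod, Nat.cast_add]
  simp_rw [h2, add_mul, Finset.sum_add_distrib, ← Finset.mul_sum, zW]
  congr 1
  rw [← Nat.cast_sum, hz]

private lemma zW_eq_cast {n : ℕ} (z : Fin (n+1) → ℕ) :
    zW z = ((∑ i, i.val * z i : ℕ) : ZMod (n+1)) := by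
  rw [zW, Nat.cast_sum]
  exact Finset.sum_congr rfl fun i _ => by push_cast; ring

private lemma cond_iff {n : ℕ} (z : Fin (n+1) → ℕ) :
    (∑ i : Fin (n+1), i.val * z i) % (n+1) = 0 ↔ zW z = 0 := by
  rw [zW_eq_cast, ZMod.natCast_eq_zero_iff, Nat.dvd_iff_mod_eq_zero]

private lemma key_bij {n b : ℕ} (hco : Nat.Coprime b (n+1)) :
    Nat.card {z : Fin (n+1) → ℕ // (∑ i, z i) = b}
      = (n+1) * Nat.card {z : Fin (n+1) → ℕ // (∑ i, z i) = b ∧ zW z = 0} := by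
  classical
  set u : (ZMod (n+1))ˣ := ZMod.unitOfCoprime b hco with hu
  have hub : (u : ZMod (n+1)) = (b : ZMod (n+1)) := ZMod.coe_unitOfCoprime b hco
  set G : (ZMod (n+1)) × {z : Fin (n+1) → ℕ // (∑ i, z i) = b ∧ zW z = 0}
      → {z : Fin (n+1) → ℕ // (∑ i, z i) = b} :=
    fun p => ⟨zshift (toFin (p.1 * (↑u⁻¹ : ZMod (n+1)))) p.2.1,
      by rw [zshift_sum]; exact p.2.2.1⟩ with hG
  have hWG : ∀ p, zW (G p).1 = p.1 := by
    rintro ⟨k, z, hz1, hz2⟩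
    simp only [hG]
    rw [zW_shift _ _ hz1, hz2, toFin_val_cast, zero_add, mul_assoc, ← hub,
      Units.inv_mul, mul_one]
  have hbij : Function.Bijective G := by
    constructor
    · rintro ⟨k, z, hz1, hz2⟩ ⟨k', z', hz1', hz2'⟩ h
      have hk : k = k' := by
        have := congrArg (fun s => zW s.1) h
        simpa [hWG ⟨k, z, hz1, hz2⟩, hWG ⟨k', z', hz1', hz2'⟩] using this
      subst hk
      have hzz : zshift (toFin (k * (↑u⁻¹ : ZMod (n+1)))) z
          = zshift (toFin (k * (↑u⁻¹ : ZMod (n+1)))) z' := congrArg Subtype.val h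
      have : z = z' := by
        funext i
        have := congrFun hzz (i + toFin (k * (↑u⁻¹ : ZMod (n+1))))
        simpa [zshift] using this
      simp [this]
    · rintro ⟨s, hs⟩
      set k : ZMod (n+1) := zW s with hk
      set c : Fin (n+1) := toFin (k * (↑u⁻¹ : ZMod (n+1))) with hc
      set z : Fin (n+1) → ℕ := fun i => s (i + c) with hzdef
      have hsum : ∑ i, z i = b := by
        rw [← hs]
        exact Fintype.sum_equiv (Equiv.addRight c) _ _ (fun _ => rfl)
      have hshift : zshift c z = s := by
        funext i; simp [zshift, hzdef]
      have hWz : zW z = 0 := by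
        have h1 : zW (zshift c z) = zW z + (c.val : ZMod (n+1)) * b := zW_shift c z hsum
        rw [hshift, ← hk] at h1
        have h2 : ((c.val : ZMod (n+1))) * b = k := by
          rw [hc, toFin_val_cast, mul_assoc, ← hub]
          simp [mul_comm]
        rw [h2] at h1
        have h3 : zW z + k = 0 + k := by rw [← h1, zero_add]
        exact add_right_cancel h3
      exact ⟨⟨k, ⟨z, hsum, hWz⟩⟩, by simp only [hG]; exact Subtype.ext hshift⟩
  calc Nat.card {z : Fin (n+1) → ℕ // (∑ i, z i) = b}
      = Nat.card ((ZMod (n+1)) × {z : Fin (n+1) → ℕ // (∑ i, z i) = b ∧ zW z = 0}) :=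
        (Nat.card_eq_of_bijective G hbij).symm
    _ = (n+1) * Nat.card {z : Fin (n+1) → ℕ // (∑ i, z i) = b ∧ zW z = 0} := by
        rw [Nat.card_prod, Nat.card_eq_fintype_card, ZMod.card]

private lemma card_S {n b : ℕ} :
    Nat.card {z : Fin (n+1) → ℕ // (∑ i, z i) = b} = (n + 1 + b - 1).choose b := by
  classical
  rw [← Nat.card_congr (Sym.equivNatSumOfFintype (Fin (n+1)) b),
    Nat.card_eq_fintype_card, Sym.card_sym_eq_multichoose,
    Fintype.card_fin, Nat.multichoose_eq]

/-- `a` times the number of `z ∈ ℕ^a` with `Σ z_i = b` and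
`Σ i·z_i ≡ 0 (mod a)` equals `C(a+b−1, b)`; equivalently this count is
`(1/(a+b))·C(a+b, a)`. -/
theorem stmt4 (a b : ℕ) (ha : 1 ≤ a) (hb : 1 ≤ b) (hab : Nat.Coprime a b) :
    a * Nat.card {z : Fin a → ℕ // (∑ i, z i) = b ∧ (∑ i : Fin a, i.val * z i) % a = 0}
        = Nat.choose (a + b - 1) b ∧
    (a + b) * Nat.card {z : Fin a → ℕ // (∑ i, z i) = b ∧ (∑ i : Fin a, i.val * z i) % a = 0}
        = Nat.choose (a + b) a := by
  obtain ⟨n, rfl⟩ : ∃ n, a = n + 1 := ⟨a - 1, (Nat.succ_pred_eq_of_pos ha).symm⟩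
  have hco : Nat.Coprime b (n+1) := hab.symm
  have hEq : Nat.card {z : Fin (n+1) → ℕ //
        (∑ i, z i) = b ∧ (∑ i : Fin (n+1), i.val * z i) % (n+1) = 0}
      = Nat.card {z : Fin (n+1) → ℕ // (∑ i, z i) = b ∧ zW z = 0} :=
    Nat.card_congr (Equiv.subtypeEquivRight fun z => by rw [cond_iff])
  have hmain : (n+1) * Nat.card {z : Fin (n+1) → ℕ //
        (∑ i, z i) = b ∧ (∑ i : Fin (n+1), i.val * z i) % (n+1) = 0}
      = (n + 1 + b - 1).choose b := by
    rw [hEq, ← key_bij hco, card_S]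
  refine ⟨hmain, ?_⟩
  -- second part
  obtain ⟨N, hN⟩ : ∃ N, Nat.card {z : Fin (n+1) → ℕ //
      (∑ i, z i) = b ∧ (∑ i : Fin (n+1), i.val * z i) % (n+1) = 0} = N := ⟨_, rfl⟩
  rw [hN] at hmain ⊢
  have hsymm : (n + 1 + b - 1).choose b = (n + b).choose n := by
    have h0 : n + 1 + b - 1 = n + b := by rw [Nat.add_right_comm, Nat.succ_sub_one]
    have h1 : n + b - n = b := Nat.add_sub_cancel_left n b
    have h2 := Nat.choose_symm (Nat.le_add_right n b)
    rw [h1] at h2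
    rw [h0]; exact h2
  have hid : (n + b + 1) * (n + b).choose n = (n + b + 1).choose (n + 1) * (n + 1) := by
    simpa using Nat.add_one_mul_choose_eq (n + b) n
  have hpos : 0 < n + 1 := Nat.succ_pos n
  apply Nat.eq_of_mul_eq_mul_left hpos
  have h1 : (n + 1 + b) = n + b + 1 := Nat.add_right_comm n 1 b
  calc (n+1) * ((n + 1 + b) * N)
      = (n + 1 + b) * ((n+1) * N) := by ring
    _ = (n + 1 + b) * (n + 1 + b - 1).choose b := by rw [hmain]
    _ = (n + b + 1) * (n + b).choose n := by rw [hsymm, h1]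
    _ = (n + 1) * (n + 1 + b).choose (n + 1) := by rw [hid, h1]; ring
end

section
/- (Anderson's theorem) Let a, b ≥ 1 be coprime integers. Then the set of (a,b)-core partitions is finite and its cardinality equals the rational Catalan number Cat_{a,b} = (1/(a+b))·C(a+b, a). -/
namespace PartitionSeq

/-- all parts from `N` on vanish -/
lemma parts_eq_zero_of_le (lam : PartitionSeq) {N i : ℕ} (hN : lam.parts N = 0)
    (h : N ≤ i) : lam.parts i = 0 :=
  Nat.le_zero.mp (hN ▸ lam.antitone h)

/-- the beta-sequence is strictly decreasing -/
lemma betaFun_strictAnti (lam : PartitionSeq) :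
    StrictAnti (fun j : ℕ => (lam.parts j : ℤ) - (j + 1)) := by
  apply strictAnti_nat_of_succ_lt
  intro n
  have := lam.antitone (Nat.le_succ n)
  rw [Nat.succ_eq_add_one] at *
  push_cast
  omega

/-- two strictly antitone maps `ℕ → ℤ` with the same range are equal -/
lemma strictAnti_range_eq {f g : ℕ → ℤ} (hf : StrictAnti f) (hg : StrictAnti g)
    (h : Set.range f = Set.range g) : f = g := by
  have key : ∀ j : ℕ, (∀ m < j, f m = g m) → f j = g j := by
    intro j ih
    have h1 : f j ∈ Set.range g := h ▸ Set.mem_range_self j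
    have h2 : g j ∈ Set.range f := h.symm ▸ Set.mem_range_self j
    obtain ⟨m, hm⟩ := h1
    obtain ⟨m', hm'⟩ := h2
    have hfg : f j ≤ g j := by
      rcases lt_or_ge m j with hlt | hge
      · exfalso
        have h3 : f m = f j := (ih m hlt).trans hm
        have := hf.injective h3
        omega
      · calc f j = g m := hm.symm
          _ ≤ g j := hg.antitone hge
    have hgf : g j ≤ f j := by
      rcases lt_or_ge m' j with hlt | hge
      · exfalso
        have h3 : g m' = g j := (ih m' hlt).symm.trans hm'
        have := hg.injective h3
        omega
      · calc g j = f m' := hm'.symm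
          _ ≤ f j := hf.antitone hge
    omega
  funext j
  exact Nat.strong_induction_on j key

/-- decomposition of a shifted beta set is unique -/
lemma betaSet_shift_injective {lam lam' : PartitionSeq} {c c' : ℤ}
    (h : {x : ℤ | x - c ∈ lam.betaSet} = {x : ℤ | x - c' ∈ lam'.betaSet}) :
    lam = lam' ∧ c = c' := by
  have hr : Set.range (fun j : ℕ => (lam.parts j : ℤ) - (j + 1) + c)
      = Set.range (fun j : ℕ => (lam'.parts j : ℤ) - (j + 1) + c') := by
    ext x
    have h1 := Set.ext_iff.mp h x
    simp only [Set.mem_setOf_eq, betaSet, Set.mem_range] at h1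
    simp only [Set.mem_range]
    constructor
    · rintro ⟨j, hj⟩
      obtain ⟨j', hj'⟩ := h1.mp ⟨j, by omega⟩
      exact ⟨j', by omega⟩
    · rintro ⟨j, hj⟩
      obtain ⟨j', hj'⟩ := h1.mpr ⟨j, by omega⟩
      exact ⟨j', by omega⟩
  have hf : StrictAnti (fun j : ℕ => (lam.parts j : ℤ) - (j + 1) + c) := by
    intro m n hmn; have := lam.betaFun_strictAnti hmn; simp only at *; omega
  have hg : StrictAnti (fun j : ℕ => (lam'.parts j : ℤ) - (j + 1) + c') := by
    intro m n hmn; have := lam'.betaFun_strictAnti hmn; simp only at *; omega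
  have heq := strictAnti_range_eq hf hg hr
  obtain ⟨N, hN⟩ := lam.eventually_zero
  obtain ⟨N', hN'⟩ := lam'.eventually_zero
  have hcc : c = c' := by
    have h1 := congrFun heq (max N N')
    rw [lam.parts_eq_zero_of_le hN (le_max_left _ _),
      lam'.parts_eq_zero_of_le hN' (le_max_right _ _)] at h1
    push_cast at h1; omega
  subst hcc
  have hparts : lam.parts = lam'.parts := by
    funext j
    have h1 := congrFun heq j
    omega
  cases lam; cases lam'; simp_all

end PartitionSeq
namespace PartitionSeq

/-- a finite downward-closed subset of ℕ is an initial segment -/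
lemma downward_closed_eq_Iio {T : Set ℕ} (hfin : T.Finite)
    (hdc : ∀ i' i, i' ≤ i → i ∈ T → i' ∈ T) : T = Set.Iio T.ncard := by
  rcases T.eq_empty_or_nonempty with h | h
  · rw [h]; simp only [Set.ncard_empty]; ext i; simp
  · obtain ⟨M, hM, hmax⟩ := Set.Finite.exists_maximal hfin h
    have hTIic : T = Set.Iic M := by
      ext i
      constructor
      · intro hi
        by_contra hc
        simp only [Set.mem_Iic, not_le] at hc
        have := hmax hi (le_of_lt hc)
        omega
      · intro hi; exact hdc i M hi hM
    rw [hTIic]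
    have : (Set.Iic M).ncard = M + 1 := by
      rw [← Nat.card_coe_set_eq, Nat.card_eq_fintype_card]
      simp [Nat.card_Iic]
    rw [this]
    ext i; simp [Nat.lt_succ_iff]

lemma conj_set_eq_Iio (lam : PartitionSeq) (j : ℕ) :
    {i | j < lam.parts i} = Set.Iio (lam.conjParts j) := by
  obtain ⟨N, hN⟩ := lam.eventually_zero
  have hfin : {i | j < lam.parts i}.Finite := by
    apply Set.Finite.subset (Set.finite_Iio N)
    intro i hi
    simp only [Set.mem_setOf_eq] at hi
    simp only [Set.mem_Iio]
    by_contra hc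
    rw [lam.parts_eq_zero_of_le hN (not_lt.mp hc)] at hi
    omega
  exact downward_closed_eq_Iio hfin
    (fun i' i h hi => lt_of_lt_of_le hi (lam.antitone h))

lemma lt_conjParts_iff (lam : PartitionSeq) {i j : ℕ} :
    i < lam.conjParts j ↔ j < lam.parts i := by
  rw [← Set.mem_Iio, ← conj_set_eq_Iio]; rfl

/-- hook length formula via the conjugate -/
lemma hook_eq (lam : PartitionSeq) {i j : ℕ} (h : j < lam.parts i) :
    (lam.hook i j : ℤ) = (lam.parts i : ℤ) - j + lam.conjParts j - i - 1 := by
  have hconj : i < lam.conjParts j := lam.lt_conjParts_iff.mpr h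
  have hset : {i' : ℕ | i < i' ∧ j < lam.parts i'} = Set.Ico (i+1) (lam.conjParts j) := by
    ext i'
    simp only [Set.mem_setOf_eq, Set.mem_Ico, ← lam.lt_conjParts_iff]
    omega
  rw [hook, hset]
  have : (Set.Ico (i+1) (lam.conjParts j)).ncard = lam.conjParts j - (i+1) := by
    rw [← Nat.card_coe_set_eq, Nat.card_eq_fintype_card]
    simp
  rw [this]
  push_cast [Nat.le_of_lt_succ, h.le]
  omega

/-- Claim A : the numbers `j - λ'_j` are never in the beta set -/
lemma conj_compl_not_mem (lam : PartitionSeq) (j : ℕ) :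
    ((j : ℤ) - lam.conjParts j) ∉ lam.betaSet := by
  rintro ⟨i, hi⟩
  simp only at hi
  -- parts i - (i+1) = j - conjParts j
  rcases lt_or_ge j (lam.parts i) with h | h
  · have h2 : i < lam.conjParts j := lam.lt_conjParts_iff.mpr h
    omega
  · have h2 : ¬ (i < lam.conjParts j) := fun hc => by
      have := lam.lt_conjParts_iff.mp hc; omega
    omega

/-- Claim A∨B : every integer is in the beta set or of the form `j - λ'_j` -/
lemma mem_or_conj_compl (lam : PartitionSeq) (t : ℤ) :
    t ∈ lam.betaSet ∨ ∃ j : ℕ, (j : ℤ) - lam.conjParts j = t := by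
  rcases le_or_gt (lam.parts 0 : ℤ) t with h0 | h0
  · right
    have ht : 0 ≤ t := le_trans (by positivity) h0
    refine ⟨t.toNat, ?_⟩
    have hc : lam.conjParts t.toNat = 0 := by
      rw [conjParts]
      convert Set.ncard_empty ℕ
      ext i
      simp only [Set.mem_setOf_eq, Set.mem_empty_iff_false, iff_false, not_lt]
      calc lam.parts i ≤ lam.parts 0 := lam.antitone (Nat.zero_le i)
        _ ≤ t.toNat := by omega
    rw [hc]; push_cast; omega
  · -- there is a maximal i with parts i - i ≥ t + 1
    have hne : ∃ i : ℕ, t + 1 ≤ (lam.parts i : ℤ) - i := ⟨0, by push_cast; omega⟩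
    have hbd : ∀ i : ℕ, (t + 1 ≤ (lam.parts i : ℤ) - i) → (i : ℤ) ≤ (lam.parts 0 : ℤ) - t - 1 := by
      intro i hi
      have := lam.antitone (Nat.zero_le i)
      omega
    obtain ⟨N, hN⟩ := lam.eventually_zero
    have hex : ∃ i : ℕ, (t + 1 ≤ (lam.parts i : ℤ) - i) ∧
        ¬ (t + 1 ≤ (lam.parts (i+1) : ℤ) - (i+1)) := by
      by_contra hc
      push_neg at hc
      have hall : ∀ i : ℕ, t + 1 ≤ (lam.parts i : ℤ) - i := by
        intro i
        induction i with
        | zero => push_cast; omega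
        | succ n ihn => exact hc n ihn
      have h1 := hall ((lam.parts 0) + (t.natAbs) + 1)
      have := lam.antitone (Nat.zero_le ((lam.parts 0) + (t.natAbs) + 1))
      have : (((lam.parts 0) + (t.natAbs) + 1 : ℕ) : ℤ) = (lam.parts 0 : ℤ) + t.natAbs + 1 := by push_cast; ring
      omega
    obtain ⟨i, hi1, hi2⟩ := hex
    push_neg at hi2
    rcases eq_or_lt_of_le hi1 with heq | hlt
    · left
      exact ⟨i, by push_cast; omega⟩
    · right
      -- parts i > t + i + 1 ≥ parts (i+1); take j = t + i + 1
      have hj0 : (0 : ℤ) ≤ t + i + 1 := by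
        have : (0:ℤ) ≤ (lam.parts (i+1) : ℤ) := by positivity
        push_cast at hi2 ⊢
        omega
      set j : ℕ := (t + i + 1).toNat with hj
      have hji : (j : ℤ) = t + i + 1 := by omega
      refine ⟨j, ?_⟩
      have hcj : lam.conjParts j = i + 1 := by
        rw [conjParts]
        have : {i' | j < lam.parts i'} = Set.Iio (i+1) := by
          ext i'
          simp only [Set.mem_setOf_eq, Set.mem_Iio]
          constructor
          · intro hlt'
            by_contra hc
            have hle : i + 1 ≤ i' := not_lt.mp hc
            have := lam.antitone hle
            push_cast at hi2
            omega
          · intro hlt'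
            have hle : i' ≤ i := Nat.lt_succ_iff.mp hlt'
            have := lam.antitone hle
            omega
        rw [this, ← Nat.card_coe_set_eq, Nat.card_eq_fintype_card]
        simp
      rw [hcj]
      push_cast
      omega

/-- `t_j = j - λ'_j` exceeds `s_i` beyond the row bound -/
lemma conj_compl_large (lam : PartitionSeq) {i j : ℕ} (h : lam.parts i ≤ j) :
    (lam.parts i : ℤ) - i - 1 < (j : ℤ) - lam.conjParts j := by
  have h2 : lam.conjParts j ≤ i := by
    by_contra hc
    have := lam.lt_conjParts_iff.mp (not_le.mp hc)
    omega
  omega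

/-- Main characterization: `lam` is an `a`-core iff its beta set is closed under
subtraction of `a`. -/
theorem isCore_iff_closed (lam : PartitionSeq) {a : ℕ} (ha : a ≠ 0) :
    lam.IsCore a ↔ ∀ x ∈ lam.betaSet, x - a ∈ lam.betaSet := by
  constructor
  · intro hcore x hx
    by_contra hc
    obtain ⟨i, hi⟩ := hx
    simp only at hi
    rcases lam.mem_or_conj_compl (x - a) with h | ⟨j, hj⟩
    · exact hc h
    · -- hook i j = a
      have hji : (j : ℤ) < lam.parts i := by
        have := lam.conj_compl_large (i := i) (j := j)
        by_contra hcc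
        have h2 := this (by exact_mod_cast not_lt.mp hcc)
        omega
      have hjlt : j < lam.parts i := by exact_mod_cast hji
      have := lam.hook_eq hjlt
      have hcj : i < lam.conjParts j := lam.lt_conjParts_iff.mpr hjlt
      exact hcore i j hjlt (by omega)
  · intro hcl i j hj
    intro hc
    have hhook := lam.hook_eq hj
    have hx : ((lam.parts i : ℤ) - (i+1)) ∈ lam.betaSet := ⟨i, by push_cast; ring⟩
    have hmem := hcl _ hx
    have : (lam.parts i : ℤ) - (i+1) - a = (j : ℤ) - lam.conjParts j := by
      rw [hc] at hhook
      push_cast at hhook ⊢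
      omega
    rw [this] at hmem
    exact lam.conj_compl_not_mem j hmem

end PartitionSeq
/-- An abstract "(a,b)-invariant set": closed under subtracting `a` and `b`,
bounded above, containing all sufficiently negative integers. -/
structure ACS (a b : ℕ) where
  S : Set ℤ
  ca : ∀ x ∈ S, x - (a : ℤ) ∈ S
  cb : ∀ x ∈ S, x - (b : ℤ) ∈ S
  bddU : ∃ Y : ℤ, ∀ x ∈ S, x ≤ Y
  low : ∃ X : ℤ, ∀ x : ℤ, x < X → x ∈ S

namespace ACS

variable {a b : ℕ} [NeZero a]

lemma int_val_cast (v : ZMod a) : ((v.val : ℤ) : ZMod a) = v := by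
  push_cast
  simp [ZMod.natCast_val, ZMod.cast_id]

lemma exists_greatest (C : ACS a b) (i : ZMod a) :
    ∃ m : ℤ, ((m : ZMod a) = i ∧ m ∈ C.S) ∧ ∀ x ∈ C.S, (x : ZMod a) = i → x ≤ m := by
  obtain ⟨Y, hY⟩ := C.bddU
  obtain ⟨X, hX⟩ := C.low
  have hne : ∃ z : ℤ, (z : ZMod a) = i ∧ z ∈ C.S := by
    refine ⟨X - 1 - (((X - 1 : ℤ) : ZMod a) - i).val, ?_, ?_⟩
    · push_cast [ZMod.natCast_val, ZMod.cast_id]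
      ring
    · apply hX
      have : (0:ℤ) ≤ ((((X - 1 : ℤ) : ZMod a) - i).val : ℤ) := Int.natCast_nonneg _
      omega
  obtain ⟨m, hm, hmax⟩ := Int.exists_greatest_of_bdd
    (P := fun z => (z : ZMod a) = i ∧ z ∈ C.S)
    ⟨Y, fun z hz => hY z hz.2⟩ hne
  exact ⟨m, ⟨hm.1, hm.2⟩, fun x hx hc => hmax x ⟨hc, hx⟩⟩

/-- the largest element of `C.S` in the class `i mod a` -/
noncomputable def mval (C : ACS a b) (i : ZMod a) : ℤ := (C.exists_greatest i).choose

lemma mval_cast (C : ACS a b) (i : ZMod a) : ((C.mval i : ℤ) : ZMod a) = i :=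
  (C.exists_greatest i).choose_spec.1.1

lemma mval_mem (C : ACS a b) (i : ZMod a) : C.mval i ∈ C.S :=
  (C.exists_greatest i).choose_spec.1.2

lemma le_mval (C : ACS a b) {x : ℤ} (hx : x ∈ C.S) : x ≤ C.mval ((x : ZMod a)) :=
  (C.exists_greatest _).choose_spec.2 x hx rfl

lemma sub_nsmul_mem (C : ACS a b) {x : ℤ} (hx : x ∈ C.S) (n : ℕ) :
    x - (a : ℤ) * n ∈ C.S := by
  induction n with
  | zero => simpa using hx
  | succ k ih =>
      have := C.ca _ ih
      have heq : x - (a:ℤ)*k - a = x - a*(k+1) := by ring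
      rw [heq] at this
      exact_mod_cast this

lemma dvd_of_cast_eq {x y : ℤ} (h : (x : ZMod a) = (y : ZMod a)) : (a : ℤ) ∣ y - x := by
  have := (ZMod.intCast_eq_intCast_iff x y a).mp h
  exact Int.ModEq.dvd this

lemma mem_iff_le_mval (C : ACS a b) (x : ℤ) :
    x ∈ C.S ↔ x ≤ C.mval ((x : ZMod a)) := by
  constructor
  · exact C.le_mval
  · intro hle
    have hcast : ((C.mval ((x : ZMod a)) : ℤ) : ZMod a) = (x : ZMod a) := C.mval_cast _
    obtain ⟨k, hk⟩ := dvd_of_cast_eq hcast.symm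
    -- hk : C.mval _ - x = a * k
    have ha : 0 < (a:ℤ) := by exact_mod_cast Nat.pos_of_ne_zero (NeZero.ne a)
    have hkn : 0 ≤ k := by nlinarith
    have hmem := C.sub_nsmul_mem (C.mval_mem ((x : ZMod a))) k.toNat
    have hx : x = C.mval ((x : ZMod a)) - (a:ℤ) * k.toNat := by
      rw [Int.toNat_of_nonneg hkn]
      omega
    rwa [← hx] at hmem

lemma mval_sub_b_le (C : ACS a b) (i : ZMod a) :
    C.mval i - (b : ℤ) ≤ C.mval (i - (b : ZMod a)) := by
  have hmem : C.mval i - (b:ℤ) ∈ C.S := C.cb _ (C.mval_mem i)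
  have hcast : ((C.mval i - (b:ℤ) : ℤ) : ZMod a) = i - (b : ZMod a) := by
    push_cast [C.mval_cast i]
    try rfl
    try norm_cast
  have := C.le_mval hmem
  rwa [hcast] at this

/-- the gap function -/
noncomputable def Dfun (C : ACS a b) (i : ZMod a) : ℤ :=
  (b : ℤ) + C.mval (i - (b : ZMod a)) - C.mval i

lemma Dfun_nonneg (C : ACS a b) (i : ZMod a) : 0 ≤ C.Dfun i := by
  have := C.mval_sub_b_le i
  unfold Dfun
  omega

lemma a_dvd_Dfun (C : ACS a b) (i : ZMod a) : (a : ℤ) ∣ C.Dfun i := by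
  rw [← ZMod.intCast_zmod_eq_zero_iff_dvd]
  unfold Dfun
  push_cast [C.mval_cast]
  ring

/-- the composition associated to `C` -/
noncomputable def eval (C : ACS a b) (i : ZMod a) : ℕ := (C.Dfun i / a).toNat

lemma eval_spec (C : ACS a b) (i : ZMod a) : (a : ℤ) * C.eval i = C.Dfun i := by
  obtain ⟨k, hk⟩ := C.a_dvd_Dfun i
  have ha : 0 < (a:ℤ) := by exact_mod_cast Nat.pos_of_ne_zero (NeZero.ne a)
  have hnn := C.Dfun_nonneg i
  have hkn : 0 ≤ k := by nlinarith
  unfold eval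
  rw [hk, Int.mul_ediv_cancel_left _ (by omega)]
  rw [Int.toNat_of_nonneg hkn]

lemma sum_eval (C : ACS a b) : ∑ i : ZMod a, C.eval i = b := by
  have h4 : (∑ i : ZMod a, C.mval (i - (b:ZMod a))) = ∑ i : ZMod a, C.mval i :=
    Fintype.sum_equiv (Equiv.subRight (b:ZMod a)) _ _ (fun i => rfl)
  have key : (a : ℤ) * ∑ i : ZMod a, (C.eval i : ℤ) = (a : ℤ) * b := by
    rw [Finset.mul_sum]
    have h1 : ∀ i : ZMod a, (a:ℤ) * (C.eval i : ℤ) = C.Dfun i := C.eval_spec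
    rw [Finset.sum_congr rfl (fun i _ => h1 i)]
    calc ∑ i : ZMod a, C.Dfun i
        = ∑ i : ZMod a, ((b:ℤ) + C.mval (i - (b:ZMod a))) - ∑ i : ZMod a, C.mval i := by
          rw [← Finset.sum_sub_distrib]; rfl
      _ = (∑ _i : ZMod a, (b:ℤ)) + (∑ i : ZMod a, C.mval (i - (b:ZMod a)))
            - ∑ i : ZMod a, C.mval i := by
          rw [Finset.sum_add_distrib]
      _ = (a : ℤ) * b := by
          rw [h4, Finset.sum_const, Finset.card_univ, ZMod.card]
          push_cast; ring
  have ha : (a:ℤ) ≠ 0 := by exact_mod_cast (NeZero.ne a)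
  have h2 : (∑ i : ZMod a, (C.eval i : ℤ)) = (b:ℤ) := mul_left_cancel₀ ha key
  exact_mod_cast h2

/-- shifting -/
def shift (C : ACS a b) (t : ℤ) : ACS a b where
  S := {x | x - t ∈ C.S}
  ca := fun x hx => by
    simpa [sub_right_comm] using C.ca _ hx
  cb := fun x hx => by
    simpa [sub_right_comm] using C.cb _ hx
  bddU := by
    obtain ⟨Y, hY⟩ := C.bddU
    exact ⟨Y + t, fun x hx => by have := hY _ hx; omega⟩
  low := by
    obtain ⟨X, hX⟩ := C.low
    exact ⟨X + t, fun x hx => hX _ (by omega)⟩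

end ACS
namespace ACS

variable {a b : ℕ} [NeZero a]

lemma isUnit_b (hab : Nat.Coprime a b) : IsUnit ((b : ℕ) : ZMod a) :=
  ⟨ZMod.unitOfCoprime b hab.symm, ZMod.coe_unitOfCoprime b hab.symm⟩

lemma exists_nat_mul (hab : Nat.Coprime a b) (i j : ZMod a) :
    ∃ n : ℕ, j = i - (n : ZMod a) * (b : ZMod a) := by
  obtain ⟨u, hu⟩ := isUnit_b (a := a) hab
  refine ⟨(((i - j) * ↑u⁻¹) : ZMod a).val, ?_⟩
  have h1 : ((((i - j) * ↑u⁻¹ : ZMod a).val : ℕ) : ZMod a) = (i - j) * ↑u⁻¹ := by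
    simp [ZMod.natCast_val, ZMod.cast_id]
  rw [h1, ← hu]
  have : (i - j) * ↑u⁻¹ * ↑u = i - j := by
    rw [mul_assoc, Units.inv_mul, mul_one]
  rw [this]
  ring

lemma d_const (hab : Nat.Coprime a b) (d : ZMod a → ℤ)
    (hd : ∀ i, d (i - (b : ZMod a)) = d i) : ∀ i j, d i = d j := by
  have key : ∀ (n : ℕ) (i : ZMod a), d (i - (n : ZMod a) * (b : ZMod a)) = d i := by
    intro n
    induction n with
    | zero => intro i; simp
    | succ k ih =>
        intro i
        have : i - ((k+1 : ℕ) : ZMod a) * (b : ZMod a)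
            = (i - (k : ZMod a) * (b : ZMod a)) - (b : ZMod a) := by
          push_cast; ring
        rw [this, hd, ih]
  intro i j
  obtain ⟨n, hn⟩ := exists_nat_mul hab i j
  rw [hn, key]

lemma phi_fiber {C C' : ACS a b} (hab : Nat.Coprime a b) (h : C.eval = C'.eval) :
    ∃ z : ℤ, C'.S = {x : ℤ | x - (a : ℤ) * z ∈ C.S} := by
  set d : ZMod a → ℤ := fun i => C'.mval i - C.mval i with hdodef
  have hd : ∀ i, d (i - (b : ZMod a)) = d i := by
    intro i
    have h1 := C.eval_spec i
    have h2 := C'.eval_spec i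
    rw [congrFun h i] at h1
    unfold Dfun at h1 h2
    simp only [hdodef]
    omega
  have hconst := d_const hab d hd
  have hdvd : (a : ℤ) ∣ d 0 := by
    have hc : ((C.mval (0 : ZMod a) : ℤ) : ZMod a) = ((C'.mval (0 : ZMod a) : ℤ) : ZMod a) := by
      rw [C.mval_cast, C'.mval_cast]
    exact dvd_of_cast_eq hc
  obtain ⟨z, hz⟩ := hdvd
  refine ⟨z, ?_⟩
  ext x
  simp only [Set.mem_setOf_eq]
  rw [C'.mem_iff_le_mval x, C.mem_iff_le_mval (x - (a:ℤ)*z)]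
  have hxcast : ((x - (a:ℤ)*z : ℤ) : ZMod a) = (x : ZMod a) := by
    push_cast; simp
  rw [hxcast]
  have hval : C'.mval ((x : ZMod a)) = C.mval ((x : ZMod a)) + (a:ℤ) * z := by
    have h0 := hconst ((x : ZMod a)) 0
    simp only [hdodef] at h0 hz
    omega
  omega

end ACS
namespace ACS

variable {a b : ℕ} [NeZero a]

/-- index of a residue along the `b`-cycle -/
noncomputable def nidx (hab : Nat.Coprime a b) (i : ZMod a) : ℕ :=
  (i * ↑(ZMod.unitOfCoprime b hab.symm)⁻¹ : ZMod a).val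

lemma nidx_lt (hab : Nat.Coprime a b) (i : ZMod a) : nidx hab i < a :=
  ZMod.val_lt _

lemma nidx_natCast (hab : Nat.Coprime a b) (i : ZMod a) :
    ((nidx hab i : ℕ) : ZMod a) = i * ↑(ZMod.unitOfCoprime b hab.symm)⁻¹ := by
  simp [nidx, ZMod.natCast_val, ZMod.cast_id]

lemma nidx_mul_b (hab : Nat.Coprime a b) (i : ZMod a) :
    ((nidx hab i : ℕ) : ZMod a) * (b : ZMod a) = i := by
  rw [nidx_natCast]
  have hu : ((ZMod.unitOfCoprime b hab.symm : (ZMod a)ˣ) : ZMod a) = (b : ZMod a) :=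
    ZMod.coe_unitOfCoprime b hab.symm
  rw [← hu, mul_assoc, Units.inv_mul, mul_one]

lemma nidx_of_cast_mul (hab : Nat.Coprime a b) {n : ℕ} (hn : n < a) :
    nidx hab ((n : ZMod a) * (b : ZMod a)) = n := by
  unfold nidx
  have hu : ((ZMod.unitOfCoprime b hab.symm : (ZMod a)ˣ) : ZMod a) = (b : ZMod a) :=
    ZMod.coe_unitOfCoprime b hab.symm
  rw [← hu, mul_assoc, Units.mul_inv, mul_one, ZMod.val_cast_of_lt hn]

lemma nidx_eq_zero_iff (hab : Nat.Coprime a b) (i : ZMod a) :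
    nidx hab i = 0 ↔ i = 0 := by
  unfold nidx
  rw [ZMod.val_eq_zero]
  constructor
  · intro h
    have h2 : i * ↑(ZMod.unitOfCoprime b hab.symm : (ZMod a)ˣ)⁻¹
        * ↑(ZMod.unitOfCoprime b hab.symm : (ZMod a)ˣ)
        = 0 * ↑(ZMod.unitOfCoprime b hab.symm : (ZMod a)ˣ) := by rw [h]
    rw [mul_assoc, Units.inv_mul, mul_one, zero_mul] at h2
    exact h2
  · intro h; simp [h]

/-- the canonical `m`-vector of a composition -/
noncomputable def mfun (hab : Nat.Coprime a b) (e : ZMod a → ℕ) (i : ZMod a) : ℤ :=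
  (b : ℤ) * nidx hab i
    - (a : ℤ) * ∑ n' ∈ Finset.Icc 1 (nidx hab i), (e ((n' : ZMod a) * (b : ZMod a)) : ℤ)

lemma mfun_cast (hab : Nat.Coprime a b) (e : ZMod a → ℕ) (i : ZMod a) :
    ((mfun hab e i : ℤ) : ZMod a) = i := by
  unfold mfun
  push_cast
  rw [ZMod.natCast_self]
  have h1 := nidx_mul_b hab i
  push_cast at h1 ⊢
  rw [zero_mul, sub_zero, mul_comm]
  exact h1

lemma neg_one_val (ha : 1 ≤ a) : ((a - 1 : ℕ) : ZMod a) = -1 := by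
  have : ((a : ℕ) : ZMod a) = 0 := ZMod.natCast_self a
  push_cast [Nat.cast_sub ha]
  rw [this]; ring

/-- sum over the b-cycle equals the total sum -/
lemma sum_cycle (hab : Nat.Coprime a b) (e : ZMod a → ℕ) :
    ∑ n' ∈ Finset.range a, (e ((n' : ZMod a) * (b : ZMod a)) : ℤ)
      = ∑ j : ZMod a, (e j : ℤ) := by
  exact Finset.sum_nbij' (fun n => (n : ZMod a) * (b : ZMod a)) (fun j => nidx hab j)
    (fun n _ => Finset.mem_univ _)
    (fun j _ => Finset.mem_range.mpr (nidx_lt hab j))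
    (fun n hn => nidx_of_cast_mul hab (Finset.mem_range.mp hn))
    (fun j _ => nidx_mul_b hab j)
    (fun n _ => rfl)

lemma mfun_rec (hab : Nat.Coprime a b) (e : ZMod a → ℕ) (hsum : ∑ i, e i = b)
    (i : ZMod a) :
    mfun hab e i - mfun hab e (i - (b : ZMod a)) = (b : ℤ) - (a : ℤ) * e i := by
  have ha1 : 1 ≤ a := Nat.pos_of_ne_zero (NeZero.ne a)
  set k := nidx hab i with hk
  rcases Nat.eq_zero_or_pos k with hk0 | hkpos
  · -- i = 0
    have hi0 : i = 0 := (nidx_eq_zero_iff hab i).mp hk0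
    subst hi0
    have hm0 : mfun hab e 0 = 0 := by
      unfold mfun
      rw [← hk, hk0]
      simp
    have hnb : nidx hab ((0 : ZMod a) - (b : ZMod a)) = a - 1 := by
      have : (0 : ZMod a) - (b : ZMod a) = ((a - 1 : ℕ) : ZMod a) * (b : ZMod a) := by
        rw [neg_one_val ha1]; ring
      rw [this, nidx_of_cast_mul hab (by omega)]
    have hsplit : ∑ n' ∈ Finset.Icc 1 (a-1), (e ((n' : ZMod a) * (b : ZMod a)) : ℤ)
        = (b : ℤ) - e 0 := by
      have hr : Finset.range a = insert 0 (Finset.Icc 1 (a-1)) := by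
        ext n
        simp only [Finset.mem_range, Finset.mem_insert, Finset.mem_Icc]
        omega
      have h2 := sum_cycle hab e
      rw [hr, Finset.sum_insert (by simp)] at h2
      have h3 : ∑ j : ZMod a, (e j : ℤ) = (b : ℤ) := by
        rw [← hsum]; push_cast; rfl
      rw [h3] at h2
      have h4 : (((0:ℕ) : ZMod a) * (b : ZMod a)) = (0 : ZMod a) := by push_cast; ring
      rw [h4] at h2
      omega
    have hmb : mfun hab e ((0:ZMod a) - (b : ZMod a))
        = (b : ℤ) * (a - 1 : ℕ) - (a : ℤ) * ((b:ℤ) - e 0) := by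
      unfold mfun
      rw [hnb, hsplit]
    rw [hm0, hmb]
    have hc : ((a - 1 : ℕ) : ℤ) = (a : ℤ) - 1 := by
      push_cast [Nat.cast_sub ha1]; ring
    rw [hc]
    ring
  · -- k ≥ 1
    have hik : i = ((k : ℕ) : ZMod a) * (b : ZMod a) := (nidx_mul_b hab i).symm
    have hib : i - (b : ZMod a) = ((k - 1 : ℕ) : ZMod a) * (b : ZMod a) := by
      rw [hik]
      have : ((k - 1 : ℕ) : ZMod a) = (k : ZMod a) - 1 := by
        push_cast [Nat.cast_sub hkpos]; ring
      rw [this]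
      ring
    have hnb : nidx hab (i - (b : ZMod a)) = k - 1 := by
      rw [hib, nidx_of_cast_mul hab (by have := nidx_lt hab i; omega)]
    have hsplit : ∑ n' ∈ Finset.Icc 1 k, (e ((n' : ZMod a) * (b : ZMod a)) : ℤ)
        = ∑ n' ∈ Finset.Icc 1 (k-1), (e ((n' : ZMod a) * (b : ZMod a)) : ℤ)
          + (e i : ℤ) := by
      have hkk : k = (k - 1) + 1 := by omega
      rw [hkk, Finset.sum_Icc_succ_top (by omega)]
      rw [← hkk, ← hik]
    unfold mfun
    rw [← hk, hnb, hsplit]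
    have hc : ((k - 1 : ℕ) : ℤ) = (k : ℤ) - 1 := by
      push_cast [Nat.cast_sub hkpos]; ring
    rw [hc]
    ring

/-- the ACS associated to a composition -/
noncomputable def mkACS (hab : Nat.Coprime a b) (e : ZMod a → ℕ)
    (hsum : ∑ i, e i = b) : ACS a b where
  S := {x : ℤ | x ≤ mfun hab e ((x : ZMod a))}
  ca := by
    intro x hx
    simp only [Set.mem_setOf_eq] at hx ⊢
    have hcast : ((x - (a:ℤ) : ℤ) : ZMod a) = (x : ZMod a) := by push_cast; simp
    rw [hcast]
    omega
  cb := by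
    intro x hx
    simp only [Set.mem_setOf_eq] at hx ⊢
    have hcast : ((x - (b:ℤ) : ℤ) : ZMod a) = (x : ZMod a) - (b : ZMod a) := by push_cast; ring
    rw [hcast]
    have := mfun_rec hab e hsum ((x : ZMod a))
    have hae : (0:ℤ) ≤ (a:ℤ) * (e ((x:ZMod a)) : ℤ) := by positivity
    omega
  bddU := by
    refine ⟨(Finset.univ.image (mfun hab e)).max' ⟨mfun hab e 0, by simp⟩, ?_⟩
    intro x hx
    simp only [Set.mem_setOf_eq] at hx
    exact hx.trans (Finset.le_max' _ _ (Finset.mem_image_of_mem _ (Finset.mem_univ _)))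
  low := by
    refine ⟨(Finset.univ.image (mfun hab e)).min' ⟨mfun hab e 0, by simp⟩, ?_⟩
    intro x hx
    simp only [Set.mem_setOf_eq]
    have : (Finset.univ.image (mfun hab e)).min' ⟨mfun hab e 0, by simp⟩
        ≤ mfun hab e ((x : ZMod a)) :=
      Finset.min'_le _ _ (Finset.mem_image_of_mem _ (Finset.mem_univ _))
    omega

lemma mkACS_mval (hab : Nat.Coprime a b) (e : ZMod a → ℕ) (hsum : ∑ i, e i = b)
    (i : ZMod a) : (mkACS hab e hsum).mval i = mfun hab e i := by
  apply le_antisymm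
  · have h1 : (mkACS hab e hsum).mval i
        ≤ mfun hab e (((mkACS hab e hsum).mval i : ℤ) : ZMod a) :=
      (mkACS hab e hsum).mval_mem i
    rwa [(mkACS hab e hsum).mval_cast i] at h1
  · have hmem : mfun hab e i ∈ (mkACS hab e hsum).S := by
      show mfun hab e i ≤ mfun hab e ((mfun hab e i : ℤ) : ZMod a)
      rw [mfun_cast]
    have := (mkACS hab e hsum).le_mval hmem
    rwa [mfun_cast] at this

lemma mkACS_eval (hab : Nat.Coprime a b) (e : ZMod a → ℕ) (hsum : ∑ i, e i = b) :
    (mkACS hab e hsum).eval = e := by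
  funext i
  have h1 := (mkACS hab e hsum).eval_spec i
  unfold Dfun at h1
  rw [mkACS_mval, mkACS_mval] at h1
  have h2 := mfun_rec hab e hsum i
  have ha : (a:ℤ) ≠ 0 := by exact_mod_cast (NeZero.ne a)
  have : ((mkACS hab e hsum).eval i : ℤ) = (e i : ℤ) := by
    apply mul_left_cancel₀ ha
    omega
  exact_mod_cast this

end ACS
namespace ACS

variable {a b : ℕ}

lemma exists_top (C : ACS a b) : ∃ m, m ∈ C.S ∧ ∀ x ∈ C.S, x ≤ m := by
  obtain ⟨X, hX⟩ := C.low
  obtain ⟨m, hm1, hm2⟩ := Int.exists_greatest_of_bdd (P := fun z => z ∈ C.S)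
    (by obtain ⟨Y, hY⟩ := C.bddU; exact ⟨Y, hY⟩) ⟨X - 1, hX _ (by omega)⟩
  exact ⟨m, hm1, hm2⟩

lemma exists_top_below (C : ACS a b) (t : ℤ) :
    ∃ m, (m ∈ C.S ∧ m < t) ∧ ∀ x, (x ∈ C.S ∧ x < t) → x ≤ m := by
  obtain ⟨X, hX⟩ := C.low
  exact Int.exists_greatest_of_bdd (P := fun z => z ∈ C.S ∧ z < t)
    ⟨t, fun z hz => hz.2.le⟩ ⟨min X t - 1, hX _ (by omega), by omega⟩

noncomputable def enum (C : ACS a b) : ℕ → ℤ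
  | 0 => C.exists_top.choose
  | j+1 => (C.exists_top_below (C.enum j)).choose

lemma enum_mem (C : ACS a b) : ∀ j, C.enum j ∈ C.S
  | 0 => C.exists_top.choose_spec.1
  | j+1 => (C.exists_top_below (C.enum j)).choose_spec.1.1

lemma enum_succ_lt (C : ACS a b) (j : ℕ) : C.enum (j+1) < C.enum j :=
  (C.exists_top_below (C.enum j)).choose_spec.1.2

lemma le_enum_zero (C : ACS a b) {x : ℤ} (hx : x ∈ C.S) : x ≤ C.enum 0 :=
  C.exists_top.choose_spec.2 x hx

lemma le_enum_succ (C : ACS a b) {x : ℤ} {j : ℕ} (hx : x ∈ C.S)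
    (hlt : x < C.enum j) : x ≤ C.enum (j+1) :=
  (C.exists_top_below (C.enum j)).choose_spec.2 x ⟨hx, hlt⟩

lemma enum_strictAnti (C : ACS a b) : StrictAnti C.enum :=
  strictAnti_nat_of_succ_lt C.enum_succ_lt

lemma enum_add_le (C : ACS a b) (j m : ℕ) : C.enum (j + m) ≤ C.enum j - m := by
  induction m with
  | zero => simp
  | succ k ih =>
      have := C.enum_succ_lt (j + k)
      have heq : j + (k+1) = (j + k) + 1 := by ring
      rw [heq]
      push_cast
      omega

lemma enum_surj (C : ACS a b) {x : ℤ} (hx : x ∈ C.S) : ∃ j, C.enum j = x := by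
  by_contra h
  push_neg at h
  have htop := C.le_enum_zero hx
  have hex : ∃ j, C.enum j < x := by
    refine ⟨(C.enum 0 - x + 1).toNat, ?_⟩
    have h1 := C.enum_add_le 0 ((C.enum 0 - x + 1).toNat)
    rw [Nat.zero_add] at h1
    have h2 : ((C.enum 0 - x + 1).toNat : ℤ) = C.enum 0 - x + 1 := by omega
    omega
  have hspec := Nat.find_spec hex
  rcases hj : Nat.find hex with _ | k
  · rw [hj] at hspec; omega
  · rw [hj] at hspec
    have hk : ¬ (C.enum k < x) := Nat.find_min hex (by omega)
    push_neg at hk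
    have hne := h k
    have hxk : x < C.enum k := by omega
    have := C.le_enum_succ hx hxk
    omega

/-- every ACS is a shifted beta set of a partition -/
theorem exists_decomp (C : ACS a b) :
    ∃ (lam : PartitionSeq) (c : ℤ), C.S = {x : ℤ | x - c ∈ lam.betaSet} := by
  obtain ⟨X, hX⟩ := C.low
  have hstep : ∀ j, C.enum j ≤ X → C.enum (j+1) = C.enum j - 1 := by
    intro j hj
    have h1 : C.enum j - 1 ∈ C.S := hX (C.enum j - 1) (by omega)
    have h2 := C.le_enum_succ (j := j) h1 (by omega)
    have h3 := C.enum_succ_lt j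
    omega
  set p := (C.enum 0 - X).toNat with hp
  have hple : ∀ j, p ≤ j → C.enum j ≤ X := by
    intro j hj
    have h1 := C.enum_add_le 0 j
    rw [Nat.zero_add] at h1
    omega
  have hlin : ∀ j, p ≤ j → C.enum j = C.enum p - (j - p : ℕ) := by
    intro j hj
    induction j, hj using Nat.le_induction with
    | base => simp
    | succ k hk ih =>
        rw [hstep k (hple k hk), ih]
        have : (k + 1 - p : ℕ) = (k - p : ℕ) + 1 := by omega
        rw [this]
        push_cast
        ring
  set c := C.enum p + (p + 1 : ℕ) with hc
  have hnn : ∀ j : ℕ, 0 ≤ C.enum j + (j+1 : ℕ) - c := by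
    intro j
    rcases le_or_gt p j with hj | hj
    · rw [hlin j hj, hc]
      push_cast
      omega
    · have h1 := C.enum_add_le j (p - j)
      have h2 : j + (p - j) = p := by omega
      rw [h2] at h1
      rw [hc]
      push_cast
      omega
  refine ⟨⟨fun j => (C.enum j + (j+1 : ℕ) - c).toNat, ?_, ⟨p, ?_⟩⟩, c, ?_⟩
  · apply antitone_nat_of_succ_le
    intro j
    have h1 := C.enum_succ_lt j
    have := hnn j
    have := hnn (j+1)
    omega
  · rw [hlin p (le_refl p), hc]
    simp
  · ext x
    simp only [Set.mem_setOf_eq, PartitionSeq.betaSet, Set.mem_range]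
    constructor
    · intro hx
      obtain ⟨j, hj⟩ := C.enum_surj hx
      refine ⟨j, ?_⟩
      have := hnn j
      push_cast
      omega
    · rintro ⟨j, hj⟩
      have := hnn j
      have hxe : x = C.enum j := by push_cast at hj; omega
      rw [hxe]
      exact C.enum_mem j

end ACS
namespace ACS

variable {a b : ℕ} [NeZero a]

lemma mval_congr {C C' : ACS a b} (h : C.S = C'.S) (i : ZMod a) : C.mval i = C'.mval i := by
  apply le_antisymm
  · have h1 : C.mval i ∈ C'.S := h ▸ C.mval_mem i
    have := C'.le_mval h1
    rwa [C.mval_cast i] at this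
  · have h1 : C'.mval i ∈ C.S := h.symm ▸ C'.mval_mem i
    have := C.le_mval h1
    rwa [C'.mval_cast i] at this

lemma eval_congr {C C' : ACS a b} (h : C.S = C'.S) : C.eval = C'.eval := by
  funext i
  have h1 := C.eval_spec i
  have h2 := C'.eval_spec i
  unfold Dfun at h1 h2
  rw [mval_congr h i, mval_congr h (i - (b:ZMod a))] at h1
  have ha : (a:ℤ) ≠ 0 := by exact_mod_cast (NeZero.ne a)
  have : (C.eval i : ℤ) = (C'.eval i : ℤ) := mul_left_cancel₀ ha (by omega)
  exact_mod_cast this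

lemma eval_translate {C C' : ACS a b} (z : ℤ)
    (h : C'.S = {x : ℤ | x - (a:ℤ) * z ∈ C.S}) : C'.eval = C.eval := by
  have hmval : ∀ i, C'.mval i = C.mval i + (a:ℤ) * z := by
    intro i
    apply le_antisymm
    · have h1 : C'.mval i - (a:ℤ)*z ∈ C.S := by
        have := C'.mval_mem i
        rw [h] at this
        exact this
      have h2 := C.le_mval h1
      have hcast : ((C'.mval i - (a:ℤ)*z : ℤ) : ZMod a) = i := by
        push_cast [C'.mval_cast i]
        simp
      rw [hcast] at h2
      omega
    · have h1 : C.mval i + (a:ℤ)*z ∈ C'.S := by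
        rw [h]
        simp only [Set.mem_setOf_eq, add_sub_cancel_right]
        exact C.mval_mem i
      have h2 := C'.le_mval h1
      have hcast : ((C.mval i + (a:ℤ)*z : ℤ) : ZMod a) = i := by
        push_cast [C.mval_cast i]
        simp
      rwa [hcast] at h2
  funext i
  have h1 := C.eval_spec i
  have h2 := C'.eval_spec i
  unfold Dfun at h1 h2
  rw [hmval i, hmval (i - (b:ZMod a))] at h2
  have ha : (a:ℤ) ≠ 0 := by exact_mod_cast (NeZero.ne a)
  have : (C'.eval i : ℤ) = (C.eval i : ℤ) := mul_left_cancel₀ ha (by omega)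
  exact_mod_cast this

end ACS

/-- the ACS attached to an `(a,b)`-core -/
def betaACS (a b : ℕ) (ha : a ≠ 0) (hb : b ≠ 0) (lam : PartitionSeq)
    (h1 : lam.IsCore a) (h2 : lam.IsCore b) : ACS a b where
  S := lam.betaSet
  ca := (lam.isCore_iff_closed ha).mp h1
  cb := (lam.isCore_iff_closed hb).mp h2
  bddU := by
    refine ⟨(lam.parts 0 : ℤ), ?_⟩
    rintro x ⟨j, rfl⟩
    have := lam.antitone (Nat.zero_le j)
    simp only
    push_cast
    omega
  low := by
    obtain ⟨N, hN⟩ := lam.eventually_zero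
    refine ⟨-(N:ℤ), ?_⟩
    intro x hx
    refine ⟨(-x-1).toNat, ?_⟩
    have hxN : (N:ℤ) ≤ -x-1 := by omega
    have hge : N ≤ (-x-1).toNat := by omega
    show (lam.parts ((-x-1).toNat) : ℤ) - (((-x-1).toNat : ℕ) + 1) = x
    rw [lam.parts_eq_zero_of_le hN hge]
    simp only [Nat.cast_zero, zero_sub]
    omega

theorem stmt5' (a b : ℕ) (ha : 1 ≤ a) (hb : 1 ≤ b) (hab : Nat.Coprime a b) :
    {lam : PartitionSeq | lam.IsCore a ∧ lam.IsCore b}.Finite ∧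
    (a + b) * Nat.card {lam : PartitionSeq // lam.IsCore a ∧ lam.IsCore b}
      = Nat.choose (a + b) a := by
  haveI : NeZero a := ⟨by omega⟩
  have ha0 : a ≠ 0 := by omega
  have hb0 : b ≠ 0 := by omega
  set Core := {lam : PartitionSeq // lam.IsCore a ∧ lam.IsCore b} with hCore
  set Comp := {e : ZMod a → ℕ // ∑ i, e i = b} with hComp
  -- the central bijection
  set Θ : Core × Fin a → Comp := fun p =>
    ⟨((betaACS a b ha0 hb0 p.1.1 p.1.2.1 p.1.2.2).shift (p.2 : ℕ)).eval,
      ACS.sum_eval _⟩ with hTheta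
  have hshiftS : ∀ (lam : PartitionSeq) (h1 : lam.IsCore a) (h2 : lam.IsCore b) (t : ℤ),
      ((betaACS a b ha0 hb0 lam h1 h2).shift t).S = {x : ℤ | x - t ∈ lam.betaSet} := by
    intro lam h1 h2 t
    rfl
  have hinj : Function.Injective Θ := by
    rintro ⟨⟨lam, h1, h2⟩, k⟩ ⟨⟨lam', h1', h2'⟩, k'⟩ heq
    obtain ⟨z, hz⟩ := ACS.phi_fiber hab (Subtype.ext_iff.mp heq)
    rw [hshiftS, hshiftS] at hz
    have hsets : {x : ℤ | x - ((k' : ℕ) : ℤ) ∈ lam'.betaSet}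
        = {x : ℤ | x - ((a:ℤ) * z + (k : ℕ)) ∈ lam.betaSet} := by
      rw [hz]
      ext x
      simp only [Set.mem_setOf_eq]
      have hxx : x - (a:ℤ)*z - ((k:ℕ):ℤ) = x - ((a:ℤ)*z + (k:ℕ)) := by ring
      rw [hxx]
    obtain ⟨hlam, hc⟩ := PartitionSeq.betaSet_shift_injective hsets
    have hk : (k : ℕ) = (k' : ℕ) := by
      have hka : (k : ℕ) < a := k.isLt
      have hka' : (k' : ℕ) < a := k'.isLt
      have hz0 : z = 0 := by
        rcases lt_trichotomy z 0 with h | h | h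
        · nlinarith [hc, (by exact_mod_cast ha : (1:ℤ) ≤ a)]
        · exact h
        · nlinarith [hc, (by exact_mod_cast ha : (1:ℤ) ≤ a)]
      rw [hz0] at hc
      omega
    refine Prod.ext ?_ ?_
    · exact Subtype.ext hlam.symm
    · exact (Fin.ext hk : k = k')
  have hsurj : Function.Surjective Θ := by
    rintro ⟨e, hsum⟩
    set C := ACS.mkACS hab e hsum with hC
    obtain ⟨lam, c, hdec⟩ := C.exists_decomp
    -- lam is an (a,b)-core
    have hcores : lam.IsCore a ∧ lam.IsCore b := by
      have hcl : ∀ (m : ℕ), (∀ x ∈ C.S, x - (m:ℤ) ∈ C.S) →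
          ∀ x ∈ lam.betaSet, x - (m:ℤ) ∈ lam.betaSet := by
        intro m hm x hx
        have h1 : x + c ∈ C.S := by
          rw [hdec]; simpa using hx
        have h2 := hm _ h1
        rw [hdec] at h2
        simpa [sub_right_comm] using h2
      exact ⟨(lam.isCore_iff_closed ha0).mpr (hcl a C.ca),
        (lam.isCore_iff_closed hb0).mpr (hcl b C.cb)⟩
    set r := c.emod a with hr
    have hr0 : 0 ≤ r := Int.emod_nonneg c (by exact_mod_cast ha0)
    have hra : r < a := Int.emod_lt_of_pos c (by exact_mod_cast ha)
    set z := c.ediv a with hzdef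
    have hcz : c = (a:ℤ) * z + r := (Int.mul_ediv_add_emod c a).symm
    refine ⟨⟨⟨lam, hcores⟩, ⟨r.toNat, by omega⟩⟩, ?_⟩
    apply Subtype.ext
    simp only [hTheta]
    have hrt : ((r.toNat : ℕ) : ℤ) = r := by omega
    have htr : ((betaACS a b ha0 hb0 lam hcores.1 hcores.2).shift c).S
        = {x : ℤ | x - (a:ℤ)*z ∈ ((betaACS a b ha0 hb0 lam hcores.1 hcores.2).shift r).S} := by
      rw [hshiftS, hshiftS]
      ext x
      simp only [Set.mem_setOf_eq]
      have hxx : x - (a:ℤ)*z - r = x - c := by rw [hcz]; ring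
      rw [hxx]
    have h5 : ((betaACS a b ha0 hb0 lam hcores.1 hcores.2).shift ((r.toNat : ℕ) : ℤ)).eval
        = C.eval := by
      rw [hrt]
      have h6 := ACS.eval_translate z htr
      rw [← h6]
      apply ACS.eval_congr
      rw [hshiftS, hdec]
    rw [h5, ACS.mkACS_eval]
  -- counting `Comp` by stars and bars
  have E1 : Comp ≃ {m : Multiset (ZMod a) // Multiset.card m = b} := by
    refine Equiv.subtypeEquiv
      (Finsupp.equivFunOnFinite.symm.trans Multiset.toFinsupp.symm.toEquiv) (fun f => ?_)
    have h1 : (Finsupp.equivFunOnFinite.symm.trans Multiset.toFinsupp.symm.toEquiv) f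
        = Finsupp.toMultiset (Finsupp.equivFunOnFinite.symm f) := by
      simp [Equiv.trans_apply, Multiset.toFinsupp_symm_apply]
    rw [h1, Finsupp.card_toMultiset, Finsupp.sum_fintype _ _ (fun i => rfl)]
    simp [Finsupp.equivFunOnFinite_symm_apply_apply]
  have E2 : {m : Multiset (ZMod a) // Multiset.card m = b} ≃ Sym (ZMod a) b :=
    ⟨fun m => Sym.mk m.1 m.2, fun s => ⟨s.1, s.2⟩, fun m => rfl, fun s => rfl⟩
  have E : Comp ≃ Sym (ZMod a) b := E1.trans E2
  have hcompcard : Nat.card Comp = (a + b - 1).choose b := by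
    rw [Nat.card_congr E, Nat.card_eq_fintype_card, Sym.card_sym_eq_choose, ZMod.card]
  have hbij : Function.Bijective Θ := ⟨hinj, hsurj⟩
  haveI hfinComp : Finite Comp := Finite.of_equiv _ E.symm
  haveI hfinCore : Finite Core := by
    have hinj' : Function.Injective (fun lam : Core => Θ (lam, ⟨0, by omega⟩)) := by
      intro x y hxy
      have := hinj hxy
      exact (Prod.ext_iff.mp this).1
    exact Finite.of_injective _ hinj'
  constructor
  · exact Set.finite_coe_iff.mp hfinCore
  · have hcard : Nat.card Core * a = (a + b - 1).choose b := by
      have h1 := Nat.card_eq_of_bijective Θ hbij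
      rw [Nat.card_prod, Nat.card_eq_fintype_card (α := Fin a), Fintype.card_fin] at h1
      rw [← h1] at hcompcard
      exact hcompcard
    have hsymm : (a + b - 1).choose b = (a + b - 1).choose (a - 1) := by
      rw [← Nat.choose_symm (by omega)]
      congr 1
      omega
    have hid := Nat.add_one_mul_choose_eq (a + b - 1) (a - 1)
    have h1 : a + b - 1 + 1 = a + b := by omega
    have h2 : a - 1 + 1 = a := by omega
    rw [h1, h2] at hid
    -- hid : (a+b) * (a+b-1).choose (a-1) = (a+b).choose a * a
    apply Nat.eq_of_mul_eq_mul_right (show 0 < a by omega)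
    calc (a + b) * Nat.card Core * a = (a + b) * (Nat.card Core * a) := by ring
      _ = (a + b) * ((a + b - 1).choose (a - 1)) := by rw [hcard, hsymm]
      _ = (a + b).choose a * a := hid
      _ = Nat.choose (a + b) a * a := rfl

/-- Anderson: for coprime `a, b ≥ 1` the set of `(a,b)`-core partitions is
finite, of cardinality `Cat_{a,b} = (1/(a+b))·C(a+b, a)`. -/
theorem stmt5 (a b : ℕ) (ha : 1 ≤ a) (hb : 1 ≤ b) (hab : Nat.Coprime a b) :
    {lam : PartitionSeq | lam.IsCore a ∧ lam.IsCore b}.Finite ∧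
    (a + b) * Nat.card {lam : PartitionSeq // lam.IsCore a ∧ lam.IsCore b}
      = Nat.choose (a + b) a := by
  exact stmt5' a b ha hb hab
end

section
/- Let a ≥ 1 be an integer and c = (c_0, …, c_{a−1}) ∈ ℤ^a with c_0 + ⋯ + c_{a−1} = 0. Define T(c) ∈ ℤ^a by T(c)_i = −c_{a−1−i}. Then the conjugate (transpose) partition of core_a(c) equals core_a(T(c)). -/
namespace PartitionSeq

lemma finite_gt (lam : PartitionSeq) (j : ℕ) : {i : ℕ | j < lam.parts i}.Finite := by
  obtain ⟨N, hN⟩ := lam.eventually_zero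
  apply Set.Finite.subset (Set.finite_Iio N)
  intro i hi
  simp only [Set.mem_Iio]
  by_contra h
  push_neg at h
  have := lam.antitone h
  simp only [Set.mem_setOf_eq] at hi
  omega

lemma dual (lam : PartitionSeq) (i j : ℕ) : j < lam.parts i ↔ i < lam.conjParts j := by
  constructor
  · intro h
    have hsub : Set.Iic i ⊆ {i' | j < lam.parts i'} := by
      intro i' hi'
      exact lt_of_lt_of_le h (lam.antitone hi')
    have h1 : (Finset.Iic i).card ≤ lam.conjParts j := by
      rw [← Set.ncard_coe_finset, Finset.coe_Iic]
      exact Set.ncard_le_ncard hsub (lam.finite_gt j)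
    rw [Nat.card_Iic] at h1
    omega
  · intro h
    by_contra h2
    push_neg at h2
    have hsub : {i' | j < lam.parts i'} ⊆ Set.Iio i := by
      intro i' hi'
      simp only [Set.mem_setOf_eq] at hi'
      simp only [Set.mem_Iio]
      by_contra h3
      push_neg at h3
      have := lam.antitone h3
      omega
    have h1 : lam.conjParts j ≤ (Finset.Iio i).card := by
      rw [← Set.ncard_coe_finset, Finset.coe_Iio]
      exact Set.ncard_le_ncard hsub (Set.finite_Iio i)
    rw [Nat.card_Iio] at h1
    omega

lemma conj_beta (lam : PartitionSeq) (y : ℤ) :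
    (∃ j : ℕ, (lam.conjParts j : ℤ) - (j + 1) = y) ↔ ¬ ∃ i : ℕ, (i : ℤ) - lam.parts i = y := by
  constructor
  · rintro ⟨j, hj⟩ ⟨i, hi⟩
    by_cases h : j < lam.parts i
    · have h2 := (lam.dual i j).mp h
      omega
    · have h2 : lam.conjParts j ≤ i := by
        by_contra h3
        push_neg at h3
        exact h ((lam.dual i j).mpr h3)
      omega
  · intro hy
    have hex : ∃ i : ℕ, y ≤ (i : ℤ) - lam.parts i := by
      refine ⟨(y + lam.parts 0).toNat, ?_⟩
      have h1 : y + (lam.parts 0 : ℤ) ≤ ((y + lam.parts 0).toNat : ℤ) := Int.self_le_toNat _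
      have h2 : lam.parts ((y + lam.parts 0).toNat) ≤ lam.parts 0 := lam.antitone (Nat.zero_le _)
      omega
    classical
    set i0 := Nat.find hex with hi0def
    have hi0 : y ≤ (i0 : ℤ) - lam.parts i0 := Nat.find_spec hex
    have hi0' : y + 1 ≤ (i0 : ℤ) - lam.parts i0 := by
      rcases eq_or_lt_of_le hi0 with h | h
      · exact absurd ⟨i0, h.symm⟩ hy
      · omega
    match hi0def2 : i0 with
    | 0 =>
      have hy0 : y ≤ -(lam.parts 0 : ℤ) - 1 := by push_cast at hi0' ⊢; omega
      have hyneg : (0:ℤ) ≤ -1 - y := by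
        have : (0:ℤ) ≤ lam.parts 0 := Int.natCast_nonneg _
        omega
      refine ⟨(-1 - y).toNat, ?_⟩
      have hcast : ((-1 - y).toNat : ℤ) = -1 - y := Int.toNat_of_nonneg hyneg
      have hempty : {i | (-1 - y).toNat < lam.parts i} = ∅ := by
        ext i'
        simp only [Set.mem_setOf_eq, Set.mem_empty_iff_false, iff_false, not_lt]
        have h2 : lam.parts i' ≤ lam.parts 0 := lam.antitone (Nat.zero_le _)
        have h3 : (lam.parts 0 : ℤ) ≤ -1 - y := by omega
        omega
      rw [conjParts, hempty, Set.ncard_empty]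
      omega
    | Nat.succ k =>
      have hk : ¬ y ≤ (k : ℤ) - lam.parts k := Nat.find_min hex (by omega)
      push_neg at hk
      simp only [Nat.succ_eq_add_one] at hi0'
      push_cast at hi0'
      have hjnn : (0:ℤ) ≤ (k : ℤ) - y := by
        have : (0:ℤ) ≤ lam.parts (k+1) := Int.natCast_nonneg _
        omega
      refine ⟨((k : ℤ) - y).toNat, ?_⟩
      have hcast : (((k : ℤ) - y).toNat : ℤ) = (k : ℤ) - y := Int.toNat_of_nonneg hjnn
      have hset : {i' | ((k : ℤ) - y).toNat < lam.parts i'} = Set.Iic k := by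
        ext i'
        simp only [Set.mem_setOf_eq, Set.mem_Iic]
        constructor
        · intro h
          by_contra h3
          push_neg at h3
          have h4 : lam.parts i' ≤ lam.parts (k+1) := lam.antitone h3
          omega
        · intro h
          have h4 : lam.parts k ≤ lam.parts i' := lam.antitone h
          omega
      have hcard : lam.conjParts (((k : ℤ) - y).toNat) = k + 1 := by
        rw [conjParts, hset, ← Finset.coe_Iic, Set.ncard_coe_finset, Nat.card_Iic]
      rw [hcard]
      omega

end PartitionSeq

lemma strictAnti_range_eq {f g : ℕ → ℤ} (hf : StrictAnti f) (hg : StrictAnti g)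
    (h : Set.range f = Set.range g) : ∀ j, f j = g j := by
  intro j
  induction j using Nat.strong_induction_on with
  | _ j ih =>
    obtain ⟨k, hk⟩ : g j ∈ Set.range f := h ▸ Set.mem_range_self j
    obtain ⟨l, hl⟩ : f j ∈ Set.range g := h.symm ▸ Set.mem_range_self j
    have hk' : j ≤ k := by
      by_contra hlt
      push_neg at hlt
      have h1 := ih k hlt
      have h2 := hg hlt
      omega
    have hl' : j ≤ l := by
      by_contra hlt
      push_neg at hlt
      have h1 := ih l hlt
      have h2 := hf hlt
      omega
    have h1 : f k ≤ f j := hf.antitone hk'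
    have h2 : g l ≤ g j := hg.antitone hl'
    omega


lemma mem_Bset {a : ℕ} (ha : 1 ≤ a) (c : Fin a → ℤ) (x : ℤ) (i : Fin a) (m : ℤ)
    (hx : x = -(a : ℤ) * m - i.val - 1) : x ∈ Bset a c ↔ c i ≤ m := by
  have haZ : (1 : ℤ) ≤ a := by exact_mod_cast ha
  constructor
  · rintro ⟨i', n, h⟩
    rw [hx] at h
    have ht : (a : ℤ) * ((c i' + n) - m) = (i.val : ℤ) - i'.val := by linear_combination h
    have hiB : (i.val : ℤ) < a := by exact_mod_cast i.isLt
    have hiB' : (i'.val : ℤ) < a := by exact_mod_cast i'.isLt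
    have hi0 : (0:ℤ) ≤ i.val := Int.natCast_nonneg _
    have hi0' : (0:ℤ) ≤ i'.val := Int.natCast_nonneg _
    have ht0 : (c i' + n) - m = 0 := by
      rcases lt_trichotomy ((c i' + n) - m) 0 with h' | h' | h'
      · have : (a : ℤ) * ((c i' + n) - m) ≤ -a := by nlinarith
        linarith
      · exact h'
      · have : (a : ℤ) ≤ (a : ℤ) * ((c i' + n) - m) := by nlinarith
        linarith
    have hii : i = i' := by
      apply Fin.ext
      have : (i.val : ℤ) = i'.val := by rw [ht0] at ht; linarith
      exact_mod_cast this
    rw [hii]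
    have hn : (0:ℤ) ≤ n := Int.natCast_nonneg _
    linarith
  · intro h
    refine ⟨i, (m - c i).toNat, ?_⟩
    have hcast : ((m - c i).toNat : ℤ) = m - c i := Int.toNat_of_nonneg (by linarith)
    rw [hx, hcast]
    ring

lemma Bset_dual {a : ℕ} (ha : 1 ≤ a) (c : Fin a → ℤ) (y : ℤ) :
    y ∈ Bset a (fun i : Fin a => -c i.rev) ↔ (-1 - y) ∉ Bset a c := by
  have ha' : (0:ℤ) < a := by exact_mod_cast ha
  set m : ℤ := y / a with hm
  set r : ℤ := y % a with hr
  have hy : (a : ℤ) * m + r = y := Int.mul_ediv_add_emod y a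
  have hr0 : 0 ≤ r := Int.emod_nonneg y (by positivity)
  have hra : r < a := Int.emod_lt_of_pos y ha'
  have h1 : r.toNat < a := by omega
  have h2 : a - 1 - r.toNat < a := by omega
  set ic : Fin a := ⟨r.toNat, h1⟩ with hic
  set iT : Fin a := ⟨a - 1 - r.toNat, h2⟩ with hiT
  have hrev : iT.rev = ic := by
    apply Fin.ext
    rw [Fin.val_rev]
    simp only [hiT, hic]
    omega
  have hcr : ((r.toNat : ℕ) : ℤ) = r := Int.toNat_of_nonneg hr0
  have e1 : (-1 - y) = -(a : ℤ) * m - ic.val - 1 := by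
    simp only [hic]
    rw [hcr]
    linarith
  have e2 : y = -(a : ℤ) * (-m - 1) - iT.val - 1 := by
    simp only [hiT]
    have : ((a - 1 - r.toNat : ℕ) : ℤ) = (a : ℤ) - 1 - r := by
      push_cast
      omega
    rw [this]
    linarith
  rw [mem_Bset ha _ y iT (-m - 1) e2, mem_Bset ha c (-1 - y) ic m e1]
  simp only [hrev]
  omega

/-- with `T(c)_i = −c_{a−1−i}`, the conjugate of `core_a(c)` is `core_a(T(c))`. -/
theorem stmt8 (a : ℕ) (ha : 1 ≤ a) (c : Fin a → ℤ) (hc : (∑ i, c i) = 0)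
    (lam mu : PartitionSeq) (hlam : lam.betaSet = Bset a c)
    (hmu : mu.betaSet = Bset a (fun i : Fin a => -c i.rev)) :
    ∀ j, mu.parts j = lam.conjParts j := by
  have key : ∀ y : ℤ, (∃ jj : ℕ, (mu.parts jj : ℤ) - (jj + 1) = y) ↔
      (∃ jj : ℕ, (lam.conjParts jj : ℤ) - (jj + 1) = y) := by
    intro y
    rw [lam.conj_beta y]
    have hmu' : (∃ jj : ℕ, (mu.parts jj : ℤ) - (jj + 1) = y) ↔ y ∈ Bset a (fun i : Fin a => -c i.rev) := by
      rw [← hmu]; exact Iff.rfl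
    have hlam' : (∃ i : ℕ, (i : ℤ) - lam.parts i = y) ↔ (-1 - y) ∈ Bset a c := by
      rw [← hlam]
      constructor
      · rintro ⟨i, hi⟩
        exact ⟨i, by push_cast; omega⟩
      · rintro ⟨i, hi⟩
        exact ⟨i, by simp only at hi; push_cast at hi; omega⟩
    rw [hmu', hlam']
    exact Bset_dual ha c y
  have hf : StrictAnti (fun jj : ℕ => (mu.parts jj : ℤ) - (jj + 1)) := by
    apply strictAnti_nat_of_succ_lt
    intro n
    have := mu.antitone (Nat.le_add_right n 1)
    push_cast
    omega
  have hg : StrictAnti (fun jj : ℕ => (lam.conjParts jj : ℤ) - (jj + 1)) := by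
    apply strictAnti_nat_of_succ_lt
    intro n
    have h1 : lam.conjParts (n + 1) ≤ lam.conjParts n :=
      Set.ncard_le_ncard (fun i hi => by simp only [Set.mem_setOf_eq] at hi ⊢; omega)
        (lam.finite_gt n)
    push_cast
    omega
  have hr : Set.range (fun jj : ℕ => (mu.parts jj : ℤ) - (jj + 1)) =
      Set.range (fun jj : ℕ => (lam.conjParts jj : ℤ) - (jj + 1)) := by
    ext y
    simp only [Set.mem_range]
    exact key y
  intro j
  have := strictAnti_range_eq hf hg hr j
  omega
end

section
/- Let a ≥ 1 and b ≥ 0 be integers. Then #{ (z_0, …, z_{a−1}) ∈ ℕ^a : z_0 + ⋯ + z_{a−1} = b, Σ_{i=0}^{a−1} i·z_i ≡ 0 (mod a), and z_i = z_{a−i} for all 1 ≤ i ≤ a−1 } = C(⌊a/2⌋ + ⌊b/2⌋, ⌊a/2⌋). -/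
open Finset

lemma sum_tail_eq (n t : ℕ) (g : Fin (n+1) → ℕ) (hg : ∑ i, g i = t) :
    g 0 + ∑ i, Fin.tail g i = t := by
  rw [← hg, ← Fin.sum_cons (g 0) (Fin.tail g), Fin.cons_self_tail]

lemma card_eq_sum (n t : ℕ) : Nat.card {f : Fin n → ℕ // ∑ i, f i = t} = (n + t - 1).choose t := by
  have e : {f : Fin n → ℕ // ∑ i, f i = t} ≃ Sym (Fin n) t := by
    refine Equiv.subtypeEquiv ((Finsupp.equivFunOnFinite.symm).trans Multiset.toFinsupp.symm.toEquiv) (fun f => ?_)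
    show _ ↔ Multiset.card (Finsupp.toMultiset (Finsupp.equivFunOnFinite.symm f)) = t
    rw [Finsupp.card_toMultiset, Finsupp.sum_fintype _ _ (fun _ => rfl)]
    simp [Finsupp.equivFunOnFinite]
    exact Iff.rfl
  rw [Nat.card_congr e, Nat.card_eq_fintype_card, Sym.card_sym_eq_choose]
  simp

lemma card_le_sum (n t : ℕ) : Nat.card {f : Fin n → ℕ // ∑ i, f i ≤ t} = (n + t).choose t := by
  have e : {f : Fin n → ℕ // ∑ i, f i ≤ t} ≃ {g : Fin (n+1) → ℕ // ∑ i, g i = t} :=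
    { toFun := fun f => ⟨Fin.cons (t - ∑ i, f.1 i) f.1, by
        rw [Fin.sum_cons]; have := f.2; omega⟩
      invFun := fun g => ⟨Fin.tail g.1, by have := sum_tail_eq n t g.1 g.2; omega⟩
      left_inv := fun f => Subtype.ext (funext fun i => by simp [Fin.tail_cons])
      right_inv := fun g => by
        refine Subtype.ext ?_
        (
        have h := sum_tail_eq n t g.1 g.2
        show Fin.cons (t - ∑ x, Fin.tail g.1 x) (Fin.tail g.1) = g.1
        rw [show t - ∑ x, Fin.tail g.1 x = g.1 0 by omega, Fin.cons_self_tail]) }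
  rw [Nat.card_congr e, card_eq_sum]
  congr 1
  omega

def Zf (n : ℕ) (z : Fin (n+1) → ℕ) (i : ℕ) : ℕ := z ⟨i % (n+1), Nat.mod_lt _ n.succ_pos⟩

def cmpZ (n : ℕ) (z : Fin (n+1) → ℕ) (j : Fin ((n+1)/2)) : ℕ :=
  if 2 * ((j:ℕ)+1) = n+1 then Zf n z ((j:ℕ)+1) / 2 else Zf n z ((j:ℕ)+1)

def dval (n : ℕ) (f : Fin ((n+1)/2) → ℕ) (k : ℕ) : ℕ :=
  if h : 1 ≤ k ∧ k ≤ (n+1)/2 then (if 2*k = n+1 then 2 else 1) * f ⟨k-1, by omega⟩ else 0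

def dcmp (n b : ℕ) (f : Fin ((n+1)/2) → ℕ) (i : Fin (n+1)) : ℕ :=
  if i.val = 0 then b - 2 * ∑ j, f j else dval n f (min i.val (n+1-i.val))

lemma Zf_eq (n i : ℕ) (h : i < n+1) (z : Fin (n+1) → ℕ) : Zf n z i = z ⟨i, h⟩ := by
  unfold Zf; congr 1; exact Fin.ext (by simp [Nat.mod_eq_of_lt h])

lemma hsZf (n : ℕ) (z : Fin (n+1) → ℕ) (h : ∀ i : Fin (n+1), z (-i) = z i) :
    ∀ i, 1 ≤ i → i < n+1 → Zf n z (n+1-i) = Zf n z i := by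
  intro i h1 h2
  rw [Zf_eq n (n+1-i) (by omega), Zf_eq n i h2]
  have := h ⟨i, h2⟩
  rw [Fin.neg_def] at this
  rw [← this]
  congr 1
  exact Fin.ext (Nat.mod_eq_of_lt (by omega)).symm

lemma convS (n : ℕ) (z : Fin (n+1) → ℕ) :
    ∑ i : Fin (n+1), z i = ∑ i ∈ range (n+1), Zf n z i := by
  rw [← Fin.sum_univ_eq_sum_range (fun i => Zf n z i) (n+1)]
  exact sum_congr rfl (fun i _ => by rw [Zf_eq n i.val i.2])

lemma convW (n : ℕ) (z : Fin (n+1) → ℕ) :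
    ∑ i : Fin (n+1), i.val * z i = ∑ i ∈ range (n+1), i * Zf n z i := by
  rw [← Fin.sum_univ_eq_sum_range (fun i => i * Zf n z i) (n+1)]
  exact sum_congr rfl (fun i _ => by rw [Zf_eq n i.val i.2])

lemma refl_sum (a u : ℕ) (hu : 1 ≤ u) (hua : u ≤ a) (g : ℕ → ℕ) :
    ∑ i ∈ Ico u a, g i = ∑ i ∈ Ico 1 (a+1-u), g (a-i) := by
  refine sum_nbij' (fun i => a - i) (fun i => a - i) ?_ ?_ ?_ ?_ ?_ <;>
    intro x hx <;> simp only [mem_Ico] at * <;> try omega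
  congr 1; omega

lemma sumA (a m : ℕ) (hm : m = a / 2) (ha : 0 < a) (Z : ℕ → ℕ)
    (hs : ∀ i, 1 ≤ i → i < a → Z (a - i) = Z i) :
    ∑ i ∈ range a, Z i = Z 0 + ∑ j ∈ range m, (if 2*(j+1) = a then 1 else 2) * Z (j+1) := by
  have h0 : ∑ i ∈ range a, Z i = Z 0 + ∑ i ∈ Ico 1 a, Z i := by
    rw [range_eq_Ico, sum_eq_sum_Ico_succ_bot ha]
  have h1 : ∑ i ∈ Ico 1 a, Z i = ∑ i ∈ Ico 1 (m+1), Z i + ∑ i ∈ Ico (m+1) a, Z i := by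
    rw [sum_Ico_consecutive] <;> omega
  have h2 : ∑ i ∈ Ico (m+1) a, Z i = ∑ i ∈ Ico 1 (a-m), Z i := by
    rw [refl_sum a (m+1) (by omega) (by omega)]
    rw [show a + 1 - (m+1) = a - m from by omega]
    exact sum_congr rfl (fun i hi => by rw [mem_Ico] at hi; exact hs i hi.1 (by omega))
  have h3 : ∑ j ∈ range m, 2 * Z (j+1) = 2 * ∑ i ∈ Ico 1 (m+1), Z i := by
    rw [mul_sum, sum_Ico_eq_sum_range]
    exact sum_congr (by rw [Nat.add_sub_cancel]) (fun j _ => by rw [Nat.add_comm 1 j])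
  rcases Nat.even_or_odd a with he | ho
  · -- a = 2m
    have ha2 : a = 2 * m := by obtain ⟨k, hk⟩ := he; omega
    have h4 : ∑ i ∈ Ico 1 (m+1), Z i = ∑ i ∈ Ico 1 m, Z i + Z m := by
      rw [sum_Ico_succ_top (by omega)]
    have h5 : ∑ j ∈ range m, (if 2*(j+1) = a then 1 else 2) * Z (j+1)
        = ∑ j ∈ range (m-1), 2 * Z (j+1) + Z m := by
      have hm1 : 0 < m := by omega
      rw [show m = (m-1)+1 from by omega, sum_range_succ, show (m-1)+1 = m from by omega]
      congr 1
      · exact sum_congr rfl (fun j hj => by rw [mem_range] at hj; rw [if_neg (by omega)])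
      · rw [if_pos (by omega), one_mul]
    have h6 : ∑ j ∈ range (m-1), 2 * Z (j+1) = 2 * ∑ i ∈ Ico 1 m, Z i := by
      rw [mul_sum, sum_Ico_eq_sum_range]
      exact sum_congr rfl (fun j _ => by rw [Nat.add_comm 1 j])
    rw [h0, h1, h2, h5, h6, h4, show a - m = m from by omega]
    ring
  · -- a = 2m+1
    have ha2 : a = 2 * m + 1 := by obtain ⟨k, hk⟩ := ho; omega
    have h5 : ∑ j ∈ range m, (if 2*(j+1) = a then 1 else 2) * Z (j+1)
        = ∑ j ∈ range m, 2 * Z (j+1) :=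
      sum_congr rfl (fun j _ => by rw [if_neg (by omega)])
    rw [h0, h1, h2, h5, h3, show a - m = m + 1 from by omega]
    ring
lemma sumB (a : ℕ) (ho : Odd a) (Z : ℕ → ℕ)
    (hs : ∀ i, 1 ≤ i → i < a → Z (a - i) = Z i) :
    (∑ i ∈ range a, i * Z i) % a = 0 := by
  have ha : 0 < a := ho.pos
  have h0 : ∑ i ∈ range a, i * Z i = ∑ i ∈ Ico 1 a, i * Z i := by
    rw [range_eq_Ico, sum_eq_sum_Ico_succ_bot ha, zero_mul, zero_add]
  have h2 : ∑ i ∈ Ico 1 a, i * Z i = ∑ i ∈ Ico 1 a, (a-i) * Z i := by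
    rw [refl_sum a 1 le_rfl ha (fun i => i * Z i), show a + 1 - 1 = a from by omega]
    exact sum_congr rfl (fun i hi => by rw [mem_Ico] at hi; rw [hs i hi.1 (by omega)])
  have key : 2 * ∑ i ∈ Ico 1 a, i * Z i = a * ∑ i ∈ Ico 1 a, Z i := by
    rw [two_mul]
    nth_rewrite 2 [h2]
    rw [← sum_add_distrib, mul_sum]
    exact sum_congr rfl (fun i hi => by rw [mem_Ico] at hi; rw [← add_mul]; congr 1; omega)
  have hdvd : a ∣ 2 * ∑ i ∈ Ico 1 a, i * Z i := ⟨_, key⟩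
  have hcop : Nat.Coprime a 2 := ho.coprime_two_right
  have : a ∣ ∑ i ∈ Ico 1 a, i * Z i := hcop.dvd_of_dvd_mul_left hdvd
  rw [h0]
  omega


lemma sumC (a m : ℕ) (ha2 : a = 2 * m) (hm : 0 < m) (Z : ℕ → ℕ)
    (hs : ∀ i, 1 ≤ i → i < a → Z (a - i) = Z i) :
    (∑ i ∈ range a, i * Z i) % a = (m * Z m) % a := by
  have ha : 0 < a := by omega
  have h0 : ∑ i ∈ range a, i * Z i = ∑ i ∈ Ico 1 a, i * Z i := by
    rw [range_eq_Ico, sum_eq_sum_Ico_succ_bot ha, zero_mul, zero_add]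
  have h1 : ∑ i ∈ Ico 1 a, i * Z i = ∑ i ∈ Ico 1 (m+1), i * Z i + ∑ i ∈ Ico (m+1) a, i * Z i := by
    rw [sum_Ico_consecutive] <;> omega
  have h2 : ∑ i ∈ Ico (m+1) a, i * Z i = ∑ i ∈ Ico 1 m, (a-i) * Z i := by
    rw [refl_sum a (m+1) (by omega) (by omega) (fun i => i * Z i),
      show a + 1 - (m+1) = m from by omega]
    exact sum_congr rfl (fun i hi => by rw [mem_Ico] at hi; rw [hs i hi.1 (by omega)])
  have h3 : ∑ i ∈ Ico 1 (m+1), i * Z i = ∑ i ∈ Ico 1 m, i * Z i + m * Z m := by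
    rw [sum_Ico_succ_top (by omega)]
  have key : ∑ i ∈ range a, i * Z i = m * Z m + a * ∑ i ∈ Ico 1 m, Z i := by
    have hh : ∑ i ∈ Ico 1 m, i * Z i + ∑ i ∈ Ico 1 m, (a-i) * Z i = ∑ i ∈ Ico 1 m, a * Z i := by
      rw [← sum_add_distrib]
      exact sum_congr rfl (fun i hi => by rw [mem_Ico] at hi; rw [← add_mul]; congr 1; omega)
    rw [h0, h1, h2, h3, mul_sum]
    omega
  rw [key, Nat.add_mul_mod_self_left]
lemma hmid (n : ℕ) (z : Fin (n+1) → ℕ) (hsym : ∀ i : Fin (n+1), z (-i) = z i)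
    (hw : (∑ i : Fin (n+1), i.val * z i) % (n+1) = 0) :
    ∀ k, k < (n+1)/2 → 2*(k+1) = n+1 → 2 ∣ Zf n z (k+1) := by
  intro k hk h2
  rw [convW, sumC (n+1) (k+1) h2.symm (by omega) _ (hsZf n z hsym)] at hw
  obtain ⟨c, hc⟩ := Nat.dvd_of_mod_eq_zero hw
  refine ⟨c, Nat.eq_of_mul_eq_mul_left (show 0 < k+1 by omega) ?_⟩
  rw [hc, ← h2]
  ring

lemma keysum (n b : ℕ) (z : Fin (n+1) → ℕ) (hsym : ∀ i : Fin (n+1), z (-i) = z i)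
    (hw : (∑ i : Fin (n+1), i.val * z i) % (n+1) = 0) (hb : ∑ i, z i = b) :
    2 * ∑ j, cmpZ n z j + Zf n z 0 = b := by
  have hmdef : (n+1)/2 = (n+1)/2 := rfl
  have h1 : ∑ j : Fin ((n+1)/2), cmpZ n z j
      = ∑ k ∈ range ((n+1)/2), (if 2*(k+1) = n+1 then Zf n z (k+1) / 2 else Zf n z (k+1)) := by
    rw [← Fin.sum_univ_eq_sum_range (fun k => if 2*(k+1) = n+1 then Zf n z (k+1) / 2 else Zf n z (k+1)) ((n+1)/2)]
    rfl
  have h2 : ∀ k ∈ range ((n+1)/2), 2 * (if 2*(k+1) = n+1 then Zf n z (k+1) / 2 else Zf n z (k+1))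
      = (if 2*(k+1) = n+1 then 1 else 2) * Zf n z (k+1) := by
    intro k hkr
    rw [mem_range] at hkr
    by_cases h : 2*(k+1) = n+1
    · rw [if_pos h, if_pos h, one_mul]
      exact Nat.mul_div_cancel' (hmid n z hsym hw k hkr h) 
    · rw [if_neg h, if_neg h]
  rw [convS, sumA (n+1) ((n+1)/2) rfl (by omega) _ (hsZf n z hsym)] at hb
  rw [h1, mul_sum, sum_congr rfl h2]
  omega

def Ff (n : ℕ) (f : Fin ((n+1)/2) → ℕ) (k : ℕ) : ℕ :=
  if h : k < (n+1)/2 then f ⟨k, h⟩ else 0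

lemma sumFf (n : ℕ) (f : Fin ((n+1)/2) → ℕ) : ∑ k ∈ range ((n+1)/2), Ff n f k = ∑ j, f j := by
  rw [← Fin.sum_univ_eq_sum_range (Ff n f) ((n+1)/2)]
  exact sum_congr rfl (fun j _ => by unfold Ff; rw [dif_pos j.2])

lemma dcmp_symm (n b : ℕ) (f : Fin ((n+1)/2) → ℕ) :
    ∀ i : Fin (n+1), dcmp n b f (-i) = dcmp n b f i := by
  intro i
  rcases Nat.eq_zero_or_pos i.val with h0 | hpos
  · have hii : -i = i := by
      rw [Fin.neg_def]
      exact Fin.ext (by simp [h0])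
    rw [hii]
  · have hv : (-i).val = n+1-i.val := by
      rw [Fin.neg_def]
      exact Nat.mod_eq_of_lt (by have := i.2; omega)
    have hvlt := i.2
    unfold dcmp
    rw [if_neg (by omega), if_neg (by omega)]
    congr 1
    rw [hv]
    omega

lemma dcmp_apply (n b : ℕ) (f : Fin ((n+1)/2) → ℕ) (v : ℕ) (h : v < n+1) (hv : ¬ v = 0) :
    dcmp n b f ⟨v, h⟩ = dval n f (min v (n+1-v)) := by
  unfold dcmp
  rw [if_neg hv]

lemma dval_apply (n : ℕ) (f : Fin ((n+1)/2) → ℕ) (k : ℕ) (h1 : 1 ≤ k) (h2 : k ≤ (n+1)/2) :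
    dval n f k = (if 2*k = n+1 then 2 else 1) * f ⟨k-1, by omega⟩ := by
  unfold dval
  rw [dif_pos ⟨h1, h2⟩]

lemma dcmp_mid (n b : ℕ) (f : Fin ((n+1)/2) → ℕ) (k : ℕ) (hk : k < (n+1)/2) :
    Zf n (dcmp n b f) (k+1) = (if 2*(k+1) = n+1 then 2 else 1) * f ⟨k, hk⟩ := by
  rw [Zf_eq n (k+1) (by omega), dcmp_apply n b f (k+1) (by omega) (by omega),
    show min (k+1) (n+1-(k+1)) = k+1 from by omega,
    dval_apply n f (k+1) (by omega) (by omega)]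
  congr 1

lemma dcmp_sum (n b : ℕ) (f : Fin ((n+1)/2) → ℕ) (hf : 2 * ∑ j, f j ≤ b) :
    ∑ i, dcmp n b f i = b := by
  have hs := hsZf n _ (dcmp_symm n b f)
  rw [convS, sumA (n+1) ((n+1)/2) rfl (by omega) _ hs]
  have hZ0 : Zf n (dcmp n b f) 0 = b - 2 * ∑ j, f j := by
    rw [Zf_eq n 0 (by omega)]
    unfold dcmp
    rw [if_pos rfl]
  have hK : ∑ k ∈ range ((n+1)/2), (if 2*(k+1) = n+1 then 1 else 2) * Zf n (dcmp n b f) (k+1)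
      = ∑ k ∈ range ((n+1)/2), 2 * Ff n f k := by
    refine sum_congr rfl (fun k hk => ?_)
    rw [mem_range] at hk
    rw [dcmp_mid n b f k hk]
    unfold Ff
    rw [dif_pos hk]
    by_cases h : 2*(k+1) = n+1
    · simp only [if_pos h]
      ring
    · simp only [if_neg h]
      ring
  rw [hK, hZ0, ← mul_sum, sumFf]
  omega

lemma dcmp_mod (n b : ℕ) (f : Fin ((n+1)/2) → ℕ) :
    (∑ i : Fin (n+1), i.val * dcmp n b f i) % (n+1) = 0 := by
  have hs := hsZf n _ (dcmp_symm n b f)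
  rw [convW]
  rcases Nat.even_or_odd (n+1) with he | ho
  · obtain ⟨m, hm2⟩ : ∃ m, n+1 = 2*m := by obtain ⟨k, hk⟩ := he; exact ⟨k, by omega⟩
    rw [sumC (n+1) m hm2 (by omega) _ hs]
    obtain ⟨c, hc⟩ : ∃ c, Zf n (dcmp n b f) m = 2 * c := by
      refine ⟨f ⟨m-1, by omega⟩, ?_⟩
      conv_lhs => rw [show m = (m-1)+1 from by omega]
      rw [dcmp_mid n b f (m-1) (by omega), if_pos (by omega)]
    rw [hc, show m * (2*c) = (n+1)*c from by rw [hm2]; ring, Nat.mul_mod_right]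
  · exact sumB (n+1) ho _ hs

lemma cmpZ_val (n : ℕ) (z : Fin (n+1) → ℕ) (j : Fin ((n+1)/2)) :
    cmpZ n z j = if 2*((j:ℕ)+1) = n+1 then Zf n z ((j:ℕ)+1) / 2 else Zf n z ((j:ℕ)+1) := rfl

lemma linv (n b : ℕ) (z : Fin (n+1) → ℕ) (hsym : ∀ i : Fin (n+1), z (-i) = z i)
    (hw : (∑ i : Fin (n+1), i.val * z i) % (n+1) = 0) (hb : ∑ i, z i = b) :
    dcmp n b (cmpZ n z) = z := by
  funext i
  obtain ⟨v, hvlt⟩ := i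
  rcases Nat.eq_zero_or_pos v with h0 | hpos
  · subst h0
    show dcmp n b (cmpZ n z) ⟨0, _⟩ = z ⟨0, _⟩
    unfold dcmp
    rw [if_pos rfl]
    have hk := keysum n b z hsym hw hb
    rw [Zf_eq n 0 (by omega)] at hk
    omega
  · rw [dcmp_apply n b (cmpZ n z) v hvlt (by omega)]
    have hk1 : 1 ≤ min v (n+1-v) := by omega
    have hk2 : min v (n+1-v) ≤ (n+1)/2 := by omega
    rw [dval_apply n (cmpZ n z) _ hk1 hk2, cmpZ_val]
    rw [show ((⟨min v (n+1-v) - 1, by omega⟩ : Fin ((n+1)/2)) : ℕ) = min v (n+1-v) - 1 from rfl]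
    rw [show min v (n+1-v) - 1 + 1 = min v (n+1-v) from by omega]
    have hZk : Zf n z (min v (n+1-v)) = z ⟨v, hvlt⟩ := by
      rcases le_or_gt v (n+1-v) with hle | hlt
      · rw [show min v (n+1-v) = v from by omega, Zf_eq n v (by omega)]
      · rw [show min v (n+1-v) = n+1-v from by omega,
          hsZf n z hsym v (by omega) (by omega), Zf_eq n v (by omega)]
    by_cases h2 : 2 * min v (n+1-v) = n+1
    · simp only [if_pos h2]
      have hd := hmid n z hsym hw (min v (n+1-v) - 1) (by omega) (by omega)
      rw [show min v (n+1-v) - 1 + 1 = min v (n+1-v) from by omega] at hd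
      rw [Nat.mul_div_cancel' hd, hZk]
    · simp only [if_neg h2]
      rw [one_mul, hZk]

lemma rinv (n b : ℕ) (f : Fin ((n+1)/2) → ℕ) : cmpZ n (dcmp n b f) = f := by
  funext j
  have hj := j.2
  rw [cmpZ_val, dcmp_mid n b f (j:ℕ) hj]
  rw [show (⟨(j:ℕ), hj⟩ : Fin ((n+1)/2)) = j from Fin.ext rfl]
  by_cases h : 2*((j:ℕ)+1) = n+1
  · simp only [if_pos h]
    omega
  · simp only [if_neg h]
    rw [one_mul]

/-- the number of `z ∈ ℕ^a` with `Σ z_i = b`, `Σ i·z_i ≡ 0 (mod a)` and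
`z_i = z_{a−i}` for `1 ≤ i ≤ a−1` (i.e. `z_{−i} = z_i` in `Fin a`) is
`C(⌊a/2⌋ + ⌊b/2⌋, ⌊a/2⌋)`. -/
theorem stmt9 (a b : ℕ) (ha : 1 ≤ a) :
    Nat.card {z : Fin a → ℕ // (∑ i, z i) = b ∧ (∑ i : Fin a, i.val * z i) % a = 0 ∧
        ∀ i : Fin a, z (-i) = z i}
      = Nat.choose (a / 2 + b / 2) (a / 2) := by
  obtain ⟨n, rfl⟩ : ∃ n, a = n + 1 := ⟨a - 1, by omega⟩
  have e : {z : Fin (n+1) → ℕ // (∑ i, z i) = b ∧ (∑ i : Fin (n+1), i.val * z i) % (n+1) = 0 ∧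
        ∀ i : Fin (n+1), z (-i) = z i} ≃ {f : Fin ((n+1)/2) → ℕ // ∑ j, f j ≤ b / 2} :=
    { toFun := fun z => ⟨cmpZ n z.1, by
        have hk := keysum n b z.1 z.2.2.2 z.2.2.1 z.2.1
        omega⟩
      invFun := fun f => ⟨dcmp n b f.1,
        dcmp_sum n b f.1 (by have := f.2; omega),
        dcmp_mod n b f.1, dcmp_symm n b f.1⟩
      left_inv := fun z => Subtype.ext (linv n b z.1 z.2.2.2 z.2.2.1 z.2.1)
      right_inv := fun f => Subtype.ext (rinv n b f.1) }
  rw [Nat.card_congr e, card_le_sum, ← Nat.choose_symm (Nat.le_add_left (b/2) ((n+1)/2))]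
  congr 1
  omega
end
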